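/- arXiv:1603.06556 — 7 statements merged into one kernel-verified Lean document; each statement's English description precedes it below -/
import Mathlib

section
/- Let N items have positive weights ω(1),...,ω(N) summing to 1 and real values ν(1),...,ν(N) such that ω(i)>ω(j) implies ν(i)≥ν(j). Let X = ν(I₁)+...+ν(Iₙ) where (I₁,...,Iₙ) is a weighted sample without replacement (successive sampling: P((I₁,...,Iₙ)=(i₁,...,iₙ)) = ∏ₖ ω(iₖ)/(1-ω(i₁)-...-ω(i_{k-1})) for distinct indices), and Y = ν(J₁)+...+ν(Jₙ) where J₁,...,Jₙ are i.i.d. with P(J₁=j)=ω(j). Then for every non-decreasing convex function f: ℝ→ℝ, E[f(X)] ≤ E[f(Y)]. -/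
open scoped BigOperators Classical

section
variable {N : ℕ} (ω ν : Fin N → ℝ) (f : ℝ → ℝ)

noncomputable def wsum (T : Finset (Fin N)) : ℝ := ∑ i ∈ T, ω i

noncomputable def worG : ℕ → Finset (Fin N) → ℝ → ℝ
  | 0, _, a => f a
  | m+1, T, a => ∑ i ∈ T, (ω i / wsum ω T) * worG m (T.erase i) (a + ν i)

noncomputable def iidG : ℕ → Finset (Fin N) → ℝ → ℝ
  | 0, _, a => f a
  | m+1, T, a => ∑ i ∈ T, (ω i / wsum ω T) * iidG m T (a + ν i)

variable {ω}

lemma wsum_pos (hω : ∀ i, 0 < ω i) {T : Finset (Fin N)} (hT : T.Nonempty) : 0 < wsum ω T :=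
  Finset.sum_pos (fun i _ => hω i) hT

lemma wsum_nonneg (hω : ∀ i, 0 < ω i) (T : Finset (Fin N)) : 0 ≤ wsum ω T :=
  Finset.sum_nonneg (fun i _ => (hω i).le)

lemma wsum_erase (i : Fin N) {T : Finset (Fin N)} (hi : i ∈ T) :
    wsum ω (T.erase i) = wsum ω T - ω i := Finset.sum_erase_eq_sub hi

lemma coef_nonneg (hω : ∀ i, 0 < ω i) (T : Finset (Fin N)) (i : Fin N) :
    0 ≤ ω i / wsum ω T := div_nonneg (hω i).le (wsum_nonneg hω T)

variable {ν f}

lemma worG_mono_acc (hω : ∀ i, 0 < ω i) (hf : Monotone f) :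
    ∀ (m : ℕ) (T : Finset (Fin N)) {a b : ℝ}, a ≤ b → worG ω ν f m T a ≤ worG ω ν f m T b := by
  intro m
  induction m with
  | zero => intro T a b h; exact hf h
  | succ m ih =>
    intro T a b h
    refine Finset.sum_le_sum fun i hi => ?_
    exact mul_le_mul_of_nonneg_left (ih _ (by linarith)) (coef_nonneg hω T i)

lemma convex_shift (hconv : ConvexOn ℝ Set.univ f) {q p d : ℝ} (hqp : q ≤ p) (hd : 0 ≤ d) :
    f p - f q ≤ f (p + d) - f (q + d) := by
  rcases eq_or_lt_of_le hqp with rfl | hqp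
  · simp
  rcases eq_or_lt_of_le hd with rfl | hd
  · simp
  set s : ℝ := p - q + d with hs
  have hs0 : 0 < s := by linarith
  have hl1 : (0:ℝ) ≤ d / s := by positivity
  have hl2 : (0:ℝ) ≤ (p - q) / s := div_nonneg (by linarith) hs0.le
  have hsum : d / s + (p - q) / s = 1 := by field_simp; linarith
  have h1 : f p ≤ (d/s) * f q + ((p-q)/s) * f (p + d) := by
    have := hconv.2 (Set.mem_univ q) (Set.mem_univ (p + d)) hl1 hl2 hsum
    simpa [smul_eq_mul, show (d/s) * q + ((p-q)/s) * (p+d) = p by field_simp; ring] using this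
  have h2 : f (q + d) ≤ ((p-q)/s) * f q + (d/s) * f (p + d) := by
    have hsum2 : (p - q) / s + d / s = 1 := by field_simp; linarith
    have := hconv.2 (Set.mem_univ q) (Set.mem_univ (p + d)) hl2 hl1 hsum2
    simpa [smul_eq_mul, show ((p-q)/s) * q + (d/s) * (p+d) = q + d by field_simp; ring] using this
  have e1 : (d/s) * f q + ((p-q)/s) * f q = f q := by rw [← add_mul, hsum, one_mul]
  have e2 : (d/s) * f (p+d) + ((p-q)/s) * f (p+d) = f (p+d) := by rw [← add_mul, hsum, one_mul]
  linarith

lemma keyE (hω : ∀ i, 0 < ω i) (hf : Monotone f) (hconv : ConvexOn ℝ Set.univ f) :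
    ∀ (m : ℕ) (U : Finset (Fin N)) (i j : Fin N), i ∉ U → j ∉ U → i ≠ j →
      ω j ≤ ω i → ν j ≤ ν i → ∀ q p : ℝ, q ≤ p →
    worG ω ν f m (insert i U) p - worG ω ν f m (insert i U) q
      ≤ (ω i / ω j) *
        (worG ω ν f m (insert j U) (p + (ν i - ν j)) - worG ω ν f m (insert j U) (q + (ν i - ν j))) := by
  intro m
  induction m with
  | zero =>
    intro U i j hiU hjU hij hw hv q p hqp
    have h1 : f p - f q ≤ f (p + (ν i - ν j)) - f (q + (ν i - ν j)) :=
      convex_shift hconv hqp (by linarith)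
    have h2 : (1:ℝ) ≤ ω i / ω j := (one_le_div (hω j)).mpr hw
    have h3 : 0 ≤ f (p + (ν i - ν j)) - f (q + (ν i - ν j)) :=
      sub_nonneg.mpr (hf (by linarith))
    calc f p - f q ≤ f (p + (ν i - ν j)) - f (q + (ν i - ν j)) := h1
      _ = 1 * (f (p + (ν i - ν j)) - f (q + (ν i - ν j))) := (one_mul _).symm
      _ ≤ (ω i / ω j) * (f (p + (ν i - ν j)) - f (q + (ν i - ν j))) :=
          mul_le_mul_of_nonneg_right h2 h3
  | succ m ih =>
    intro U i j hiU hjU hij hw hv q p hqp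
    have hw2pos : 0 < wsum ω (insert j U) := wsum_pos hω (Finset.insert_nonempty _ _)
    have hw21 : wsum ω (insert j U) ≤ wsum ω (insert i U) := by
      rw [wsum, wsum, Finset.sum_insert hiU, Finset.sum_insert hjU]; linarith
    have hKpos : 0 ≤ ω i / ω j := div_nonneg (hω i).le (hω j).le
    have e₁ : ∀ x : ℝ, worG ω ν f (m+1) (insert i U) x
        = (ω i / wsum ω (insert i U)) * worG ω ν f m U (x + ν i)
          + ∑ k ∈ U, (ω k / wsum ω (insert i U)) * worG ω ν f m (insert i (U.erase k)) (x + ν k) := by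
      intro x
      simp only [worG]
      rw [Finset.sum_insert hiU, Finset.erase_insert hiU]
      congr 1
      refine Finset.sum_congr rfl fun k hk => ?_
      rw [Finset.erase_insert_of_ne (ne_of_mem_of_not_mem hk hiU).symm]
    have e₂ : ∀ x : ℝ, worG ω ν f (m+1) (insert j U) x
        = (ω j / wsum ω (insert j U)) * worG ω ν f m U (x + ν j)
          + ∑ k ∈ U, (ω k / wsum ω (insert j U)) * worG ω ν f m (insert j (U.erase k)) (x + ν k) := by
      intro x
      simp only [worG]
      rw [Finset.sum_insert hjU, Finset.erase_insert hjU]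
      congr 1
      refine Finset.sum_congr rfl fun k hk => ?_
      rw [Finset.erase_insert_of_ne (ne_of_mem_of_not_mem hk hjU).symm]
    have acc1 : ∀ x : ℝ, (x + (ν i - ν j)) + ν j = x + ν i := fun x => by ring
    -- the i/j matched term
    have hA : (ω i / wsum ω (insert i U)) * worG ω ν f m U (p + ν i)
            - (ω i / wsum ω (insert i U)) * worG ω ν f m U (q + ν i)
        ≤ (ω i / ω j) * ((ω j / wsum ω (insert j U)) * worG ω ν f m U ((p + (ν i - ν j)) + ν j)
            - (ω j / wsum ω (insert j U)) * worG ω ν f m U ((q + (ν i - ν j)) + ν j)) := by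
      rw [acc1 p, acc1 q]
      have hdiff : 0 ≤ worG ω ν f m U (p + ν i) - worG ω ν f m U (q + ν i) :=
        sub_nonneg.mpr (worG_mono_acc hω hf m U (by linarith))
      have h1 : (ω i / wsum ω (insert i U)) * (worG ω ν f m U (p + ν i) - worG ω ν f m U (q + ν i))
          ≤ (ω i / wsum ω (insert j U)) * (worG ω ν f m U (p + ν i) - worG ω ν f m U (q + ν i)) :=
        mul_le_mul_of_nonneg_right (div_le_div_of_nonneg_left (hω i).le hw2pos hw21) hdiff
      have h2 : (ω i / ω j) * ((ω j / wsum ω (insert j U)) * (worG ω ν f m U (p + ν i) - worG ω ν f m U (q + ν i)))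
          = (ω i / wsum ω (insert j U)) * (worG ω ν f m U (p + ν i) - worG ω ν f m U (q + ν i)) := by
        rw [← mul_assoc, div_mul_div_comm, mul_comm (ω i) (ω j),
          mul_div_mul_left _ _ (ne_of_gt (hω j))]
      nlinarith [h1, h2]
    -- the k-terms
    have hS : (∑ k ∈ U, (ω k / wsum ω (insert i U)) * worG ω ν f m (insert i (U.erase k)) (p + ν k))
            - (∑ k ∈ U, (ω k / wsum ω (insert i U)) * worG ω ν f m (insert i (U.erase k)) (q + ν k))
        ≤ (ω i / ω j) * ((∑ k ∈ U, (ω k / wsum ω (insert j U)) * worG ω ν f m (insert j (U.erase k)) ((p + (ν i - ν j)) + ν k))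
            - (∑ k ∈ U, (ω k / wsum ω (insert j U)) * worG ω ν f m (insert j (U.erase k)) ((q + (ν i - ν j)) + ν k))) := by
      rw [← Finset.sum_sub_distrib, ← Finset.sum_sub_distrib, Finset.mul_sum]
      refine Finset.sum_le_sum fun k hk => ?_
      have hik : i ∉ U.erase k := fun h => hiU (Finset.mem_of_mem_erase h)
      have hjk : j ∉ U.erase k := fun h => hjU (Finset.mem_of_mem_erase h)
      have ihk := ih (U.erase k) i j hik hjk hij hw hv (q + ν k) (p + ν k) (by linarith)
      have acc2 : ∀ x : ℝ, (x + ν k) + (ν i - ν j) = (x + (ν i - ν j)) + ν k := fun x => by ring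
      rw [acc2 p, acc2 q] at ihk
      have hdiff2 : 0 ≤ (ω i / ω j) * (worG ω ν f m (insert j (U.erase k)) ((p + (ν i - ν j)) + ν k)
          - worG ω ν f m (insert j (U.erase k)) ((q + (ν i - ν j)) + ν k)) := by
        refine mul_nonneg hKpos (sub_nonneg.mpr (worG_mono_acc hω hf m _ (by linarith)))
      have h1 : (ω k / wsum ω (insert i U)) * (worG ω ν f m (insert i (U.erase k)) (p + ν k)
            - worG ω ν f m (insert i (U.erase k)) (q + ν k))
          ≤ (ω k / wsum ω (insert i U)) * ((ω i / ω j) * (worG ω ν f m (insert j (U.erase k)) ((p + (ν i - ν j)) + ν k)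
            - worG ω ν f m (insert j (U.erase k)) ((q + (ν i - ν j)) + ν k))) := by
        exact mul_le_mul_of_nonneg_left ihk (coef_nonneg hω _ k)
      have h2 : (ω k / wsum ω (insert i U)) * ((ω i / ω j) * (worG ω ν f m (insert j (U.erase k)) ((p + (ν i - ν j)) + ν k)
            - worG ω ν f m (insert j (U.erase k)) ((q + (ν i - ν j)) + ν k)))
          ≤ (ω k / wsum ω (insert j U)) * ((ω i / ω j) * (worG ω ν f m (insert j (U.erase k)) ((p + (ν i - ν j)) + ν k)
            - worG ω ν f m (insert j (U.erase k)) ((q + (ν i - ν j)) + ν k))) :=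
        mul_le_mul_of_nonneg_right (div_le_div_of_nonneg_left (hω k).le hw2pos hw21) hdiff2
      calc (ω k / wsum ω (insert i U)) * worG ω ν f m (insert i (U.erase k)) (p + ν k)
            - (ω k / wsum ω (insert i U)) * worG ω ν f m (insert i (U.erase k)) (q + ν k)
          = (ω k / wsum ω (insert i U)) * (worG ω ν f m (insert i (U.erase k)) (p + ν k)
            - worG ω ν f m (insert i (U.erase k)) (q + ν k)) := by ring
        _ ≤ (ω k / wsum ω (insert i U)) * ((ω i / ω j) * (worG ω ν f m (insert j (U.erase k)) ((p + (ν i - ν j)) + ν k)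
            - worG ω ν f m (insert j (U.erase k)) ((q + (ν i - ν j)) + ν k))) := h1
        _ ≤ (ω k / wsum ω (insert j U)) * ((ω i / ω j) * (worG ω ν f m (insert j (U.erase k)) ((p + (ν i - ν j)) + ν k)
            - worG ω ν f m (insert j (U.erase k)) ((q + (ν i - ν j)) + ν k))) := h2
        _ = (ω i / ω j) * ((ω k / wsum ω (insert j U)) * worG ω ν f m (insert j (U.erase k)) ((p + (ν i - ν j)) + ν k)
            - (ω k / wsum ω (insert j U)) * worG ω ν f m (insert j (U.erase k)) ((q + (ν i - ν j)) + ν k)) := by ring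
    rw [e₁ p, e₁ q, e₂ (p + (ν i - ν j)), e₂ (q + (ν i - ν j))]
    calc (ω i / wsum ω (insert i U)) * worG ω ν f m U (p + ν i)
          + (∑ k ∈ U, (ω k / wsum ω (insert i U)) * worG ω ν f m (insert i (U.erase k)) (p + ν k))
          - ((ω i / wsum ω (insert i U)) * worG ω ν f m U (q + ν i)
          + ∑ k ∈ U, (ω k / wsum ω (insert i U)) * worG ω ν f m (insert i (U.erase k)) (q + ν k))
        = ((ω i / wsum ω (insert i U)) * worG ω ν f m U (p + ν i)
            - (ω i / wsum ω (insert i U)) * worG ω ν f m U (q + ν i))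
          + ((∑ k ∈ U, (ω k / wsum ω (insert i U)) * worG ω ν f m (insert i (U.erase k)) (p + ν k))
            - ∑ k ∈ U, (ω k / wsum ω (insert i U)) * worG ω ν f m (insert i (U.erase k)) (q + ν k)) := by ring
      _ ≤ (ω i / ω j) * ((ω j / wsum ω (insert j U)) * worG ω ν f m U ((p + (ν i - ν j)) + ν j)
            - (ω j / wsum ω (insert j U)) * worG ω ν f m U ((q + (ν i - ν j)) + ν j))
          + (ω i / ω j) * ((∑ k ∈ U, (ω k / wsum ω (insert j U)) * worG ω ν f m (insert j (U.erase k)) ((p + (ν i - ν j)) + ν k))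
            - ∑ k ∈ U, (ω k / wsum ω (insert j U)) * worG ω ν f m (insert j (U.erase k)) ((q + (ν i - ν j)) + ν k)) :=
          add_le_add hA hS
      _ = (ω i / ω j) * ((ω j / wsum ω (insert j U)) * worG ω ν f m U ((p + (ν i - ν j)) + ν j)
          + (∑ k ∈ U, (ω k / wsum ω (insert j U)) * worG ω ν f m (insert j (U.erase k)) ((p + (ν i - ν j)) + ν k))
          - ((ω j / wsum ω (insert j U)) * worG ω ν f m U ((q + (ν i - ν j)) + ν j)
          + ∑ k ∈ U, (ω k / wsum ω (insert j U)) * worG ω ν f m (insert j (U.erase k)) ((q + (ν i - ν j)) + ν k))) := by ring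

lemma erase_erase_comm (T : Finset (Fin N)) (i j : Fin N) :
    (T.erase i).erase j = (T.erase j).erase i := by
  ext x; simp only [Finset.mem_erase]; tauto

lemma lemC_abstract (hω : ∀ i, 0 < ω i) (T : Finset (Fin N)) (hT : 2 ≤ T.card)
    (E : Fin N → Fin N → ℝ)
    (hpair : ∀ i ∈ T, ∀ j ∈ T, i ≠ j →
      0 ≤ (ω i ^ 2 * ω j / wsum ω (T.erase i)) * (E i i - E i j)
        + (ω j ^ 2 * ω i / wsum ω (T.erase j)) * (E j j - E j i)) :
    ∑ i ∈ T, (ω i / wsum ω T) * (∑ j ∈ T.erase i, (ω j / wsum ω (T.erase i)) * E i j)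
    ≤ ∑ i ∈ T, (ω i / wsum ω T) * (∑ j ∈ T, (ω j / wsum ω T) * E i j) := by
  have hTne : T.Nonempty := Finset.card_pos.mp (by omega)
  have hw : 0 < wsum ω T := wsum_pos hω hTne
  have herase_ne : ∀ i ∈ T, (T.erase i).Nonempty := by
    intro i hi
    have : 1 ≤ (T.erase i).card := by rw [Finset.card_erase_of_mem hi]; omega
    exact Finset.card_pos.mp this
  have hwe : ∀ i ∈ T, 0 < wsum ω (T.erase i) := fun i hi => wsum_pos hω (herase_ne i hi)
  set H : Fin N → Fin N → ℝ :=
    fun i j => (ω i ^ 2 * ω j / wsum ω (T.erase i)) * (E i i - E i j) with hH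
  -- positivity of the pair sum
  have phipos : 0 ≤ ∑ i ∈ T, ∑ j ∈ T.erase i, H i j := by
    have conv : ∀ (K : Fin N → Fin N → ℝ),
        ∑ i ∈ T, ∑ j ∈ T.erase i, K i j = ∑ i ∈ T, ∑ j ∈ T, if j ≠ i then K i j else 0 := by
      intro K
      refine Finset.sum_congr rfl fun i _ => ?_
      rw [← Finset.filter_ne', Finset.sum_filter]
    have swap : ∑ i ∈ T, ∑ j ∈ T.erase i, H i j = ∑ i ∈ T, ∑ j ∈ T.erase i, H j i := by
      rw [conv H, conv (fun i j => H j i), Finset.sum_comm]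
      exact Finset.sum_congr rfl fun i _ => Finset.sum_congr rfl fun j _ =>
        if_congr ne_comm rfl rfl
    have hsum2 : 0 ≤ ∑ i ∈ T, ∑ j ∈ T.erase i, (H i j + H j i) := by
      refine Finset.sum_nonneg fun i hi => Finset.sum_nonneg fun j hj => ?_
      have hj' := Finset.mem_of_mem_erase hj
      have hne : j ≠ i := (Finset.mem_erase.mp hj).1
      exact hpair i hi j hj' (Ne.symm hne)
    have expand : ∑ i ∈ T, ∑ j ∈ T.erase i, (H i j + H j i)
        = (∑ i ∈ T, ∑ j ∈ T.erase i, H i j) + ∑ i ∈ T, ∑ j ∈ T.erase i, H j i := by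
      rw [← Finset.sum_add_distrib]
      exact Finset.sum_congr rfl fun i _ => Finset.sum_add_distrib
    rw [expand, ← swap] at hsum2
    linarith
  -- the algebraic identity
  have identity : (∑ i ∈ T, (ω i / wsum ω T) * (∑ j ∈ T, (ω j / wsum ω T) * E i j))
      - (∑ i ∈ T, (ω i / wsum ω T) * (∑ j ∈ T.erase i, (ω j / wsum ω (T.erase i)) * E i j))
      = (1 / wsum ω T ^ 2) * ∑ i ∈ T, ∑ j ∈ T.erase i, H i j := by
    rw [← Finset.sum_sub_distrib, Finset.mul_sum]
    refine Finset.sum_congr rfl fun i hi => ?_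
    have inner1 : ∑ j ∈ T, (ω j / wsum ω T) * E i j
        = (ω i / wsum ω T) * E i i + (∑ j ∈ T.erase i, ω j * E i j) / wsum ω T := by
      rw [← Finset.add_sum_erase _ _ hi, Finset.sum_div]
      congr 1
      exact Finset.sum_congr rfl fun j _ => div_mul_eq_mul_div _ _ _
    have inner2 : ∑ j ∈ T.erase i, (ω j / wsum ω (T.erase i)) * E i j
        = (∑ j ∈ T.erase i, ω j * E i j) / wsum ω (T.erase i) := by
      rw [Finset.sum_div]
      exact Finset.sum_congr rfl fun j _ => div_mul_eq_mul_div _ _ _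
    have inner3 : ∑ j ∈ T.erase i, H i j
        = (ω i ^ 2 / wsum ω (T.erase i)) *
          (wsum ω (T.erase i) * E i i - ∑ j ∈ T.erase i, ω j * E i j) := by
      rw [hH]
      have : ∀ j ∈ T.erase i, (ω i ^ 2 * ω j / wsum ω (T.erase i)) * (E i i - E i j)
          = (ω i ^ 2 / wsum ω (T.erase i)) * (ω j * E i i - ω j * E i j) := by
        intro j _; ring
      rw [Finset.sum_congr rfl this, ← Finset.mul_sum]
      congr 1
      rw [Finset.sum_sub_distrib, ← Finset.sum_mul]
      rfl
    rw [inner1, inner2, inner3, wsum_erase i hi]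
    have h1 : wsum ω T ≠ 0 := ne_of_gt hw
    have h2 : wsum ω T - ω i ≠ 0 := by
      have := hwe i hi; rw [wsum_erase i hi] at this; linarith
    generalize (∑ j ∈ T.erase i, ω j * E i j) = S
    field_simp
    ring
  have : 0 ≤ (1 / wsum ω T ^ 2) * ∑ i ∈ T, ∑ j ∈ T.erase i, H i j :=
    mul_nonneg (by positivity) phipos
  linarith

lemma lemC (hω : ∀ i, 0 < ω i) (hf : Monotone f) (hconv : ConvexOn ℝ Set.univ f)
    (hmono : ∀ i j, ω i > ω j → ν i ≥ ν j)
    (m : ℕ) (T : Finset (Fin N)) (hT : 2 ≤ T.card) (a : ℝ) :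
    ∑ i ∈ T, (ω i / wsum ω T) *
        (∑ j ∈ T.erase i, (ω j / wsum ω (T.erase i)) * worG ω ν f m (T.erase i) (a + ν i + ν j))
    ≤ ∑ i ∈ T, (ω i / wsum ω T) *
        (∑ j ∈ T, (ω j / wsum ω T) * worG ω ν f m (T.erase i) (a + ν i + ν j)) := by
  refine lemC_abstract hω T hT (fun i j => worG ω ν f m (T.erase i) (a + ν i + ν j)) ?_
  -- the oriented pair inequality
  have key : ∀ i ∈ T, ∀ j ∈ T, i ≠ j → ω j ≤ ω i → ν j ≤ ν i →
      0 ≤ (ω i ^ 2 * ω j / wsum ω (T.erase i)) *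
            (worG ω ν f m (T.erase i) (a + ν i + ν i) - worG ω ν f m (T.erase i) (a + ν i + ν j))
        + (ω j ^ 2 * ω i / wsum ω (T.erase j)) *
            (worG ω ν f m (T.erase j) (a + ν j + ν j) - worG ω ν f m (T.erase j) (a + ν j + ν i)) := by
    intro i hi j hj hij hw hv
    have hjTi : j ∈ T.erase i := Finset.mem_erase.mpr ⟨Ne.symm hij, hj⟩
    have hiTj : i ∈ T.erase j := Finset.mem_erase.mpr ⟨hij, hi⟩
    have hwi : 0 < wsum ω (T.erase i) := wsum_pos hω ⟨j, hjTi⟩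
    have hwj : 0 < wsum ω (T.erase j) := wsum_pos hω ⟨i, hiTj⟩
    have hwij : wsum ω (T.erase i) ≤ wsum ω (T.erase j) := by
      rw [wsum_erase i hi, wsum_erase j hj]; linarith
    have hTj : T.erase j = insert i ((T.erase j).erase i) := (Finset.insert_erase hiTj).symm
    have hTi : T.erase i = insert j ((T.erase j).erase i) := by
      rw [erase_erase_comm T j i]
      exact (Finset.insert_erase hjTi).symm
    have hiU : i ∉ (T.erase j).erase i := Finset.notMem_erase i _
    have hjU : j ∉ (T.erase j).erase i := by
      rw [erase_erase_comm T j i]; exact Finset.notMem_erase j _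
    have hE := keyE hω hf hconv m ((T.erase j).erase i) i j hiU hjU hij hw hv
      (a + ν j + ν j) (a + ν j + ν i) (by linarith)
    rw [← hTj, ← hTi] at hE
    rw [show a + ν j + ν i + (ν i - ν j) = a + ν i + ν i by ring,
        show a + ν j + ν j + (ν i - ν j) = a + ν i + ν j by ring] at hE
    -- hE : E j i - E j j ≤ (ω i/ω j) * (E i i - E i j)
    have hX : 0 ≤ worG ω ν f m (T.erase i) (a + ν i + ν i) - worG ω ν f m (T.erase i) (a + ν i + ν j) :=
      sub_nonneg.mpr (worG_mono_acc hω hf m _ (by linarith))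
    have c0 : 0 ≤ ω j ^ 2 * ω i / wsum ω (T.erase j) :=
      div_nonneg (mul_nonneg (sq_nonneg _) (hω i).le) hwj.le
    have c1 : (ω j ^ 2 * ω i / wsum ω (T.erase j)) *
          (worG ω ν f m (T.erase j) (a + ν j + ν i) - worG ω ν f m (T.erase j) (a + ν j + ν j))
        ≤ (ω j ^ 2 * ω i / wsum ω (T.erase j)) *
          ((ω i / ω j) * (worG ω ν f m (T.erase i) (a + ν i + ν i) - worG ω ν f m (T.erase i) (a + ν i + ν j))) :=
      mul_le_mul_of_nonneg_left hE c0
    have c2 : (ω j ^ 2 * ω i / wsum ω (T.erase j)) *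
          ((ω i / ω j) * (worG ω ν f m (T.erase i) (a + ν i + ν i) - worG ω ν f m (T.erase i) (a + ν i + ν j)))
        = (ω i ^ 2 * ω j / wsum ω (T.erase j)) *
          (worG ω ν f m (T.erase i) (a + ν i + ν i) - worG ω ν f m (T.erase i) (a + ν i + ν j)) := by
      have hj0 : ω j ≠ 0 := ne_of_gt (hω j)
      field_simp
    have c3 : (ω i ^ 2 * ω j / wsum ω (T.erase j)) *
          (worG ω ν f m (T.erase i) (a + ν i + ν i) - worG ω ν f m (T.erase i) (a + ν i + ν j))
        ≤ (ω i ^ 2 * ω j / wsum ω (T.erase i)) *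
          (worG ω ν f m (T.erase i) (a + ν i + ν i) - worG ω ν f m (T.erase i) (a + ν i + ν j)) :=
      mul_le_mul_of_nonneg_right
        (div_le_div_of_nonneg_left (mul_nonneg (sq_nonneg _) (hω j).le) hwi hwij) hX
    linarith
  intro i hi j hj hij
  rcases lt_trichotomy (ω i) (ω j) with h | h | h
  · have := key j hj i hi (Ne.symm hij) h.le (hmono j i h)
    linarith
  · rcases le_total (ν j) (ν i) with hv | hv
    · have := key i hi j hj hij h.ge hv
      linarith
    · have := key j hj i hi (Ne.symm hij) h.le hv
      linarith
  · have := key i hi j hj hij h.le (hmono i j h)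
    linarith

lemma lemA (hω : ∀ i, 0 < ω i) (hf : Monotone f) (hconv : ConvexOn ℝ Set.univ f)
    (hmono : ∀ i j, ω i > ω j → ν i ≥ ν j) :
    ∀ (n : ℕ) (T : Finset (Fin N)) (a : ℝ), n + 1 ≤ T.card →
    worG ω ν f (n+1) T a ≤ ∑ j ∈ T, (ω j / wsum ω T) * worG ω ν f n T (a + ν j) := by
  intro n
  induction n with
  | zero =>
    intro T a _
    simp only [worG]
    exact le_of_eq rfl
  | succ n ih =>
    intro T a hcard
    have step1 : worG ω ν f (n+2) T a
        ≤ ∑ i ∈ T, (ω i / wsum ω T) *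
            (∑ j ∈ T.erase i, (ω j / wsum ω (T.erase i)) * worG ω ν f n (T.erase i) ((a + ν i) + ν j)) := by
      simp only [worG]
      refine Finset.sum_le_sum fun i hi => ?_
      refine mul_le_mul_of_nonneg_left ?_ (coef_nonneg hω T i)
      refine ih (T.erase i) (a + ν i) ?_
      rw [Finset.card_erase_of_mem hi]; omega
    have step2 : ∑ i ∈ T, (ω i / wsum ω T) *
            (∑ j ∈ T.erase i, (ω j / wsum ω (T.erase i)) * worG ω ν f n (T.erase i) (a + ν i + ν j))
        ≤ ∑ i ∈ T, (ω i / wsum ω T) *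
            (∑ j ∈ T, (ω j / wsum ω T) * worG ω ν f n (T.erase i) (a + ν i + ν j)) :=
      lemC hω hf hconv hmono n T (by omega) a
    have step3 : ∑ i ∈ T, (ω i / wsum ω T) *
            (∑ j ∈ T, (ω j / wsum ω T) * worG ω ν f n (T.erase i) (a + ν i + ν j))
        = ∑ j ∈ T, (ω j / wsum ω T) * worG ω ν f (n+1) T (a + ν j) := by
      have lhs_eq : ∀ i ∈ T, (ω i / wsum ω T) *
            (∑ j ∈ T, (ω j / wsum ω T) * worG ω ν f n (T.erase i) (a + ν i + ν j))
          = ∑ j ∈ T, (ω j / wsum ω T) * ((ω i / wsum ω T) * worG ω ν f n (T.erase i) ((a + ν j) + ν i)) := by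
        intro i _
        rw [Finset.mul_sum]
        refine Finset.sum_congr rfl fun j _ => ?_
        rw [show a + ν i + ν j = a + ν j + ν i by ring]
        ring
      rw [Finset.sum_congr rfl lhs_eq, Finset.sum_comm]
      refine Finset.sum_congr rfl fun j _ => ?_
      rw [← Finset.mul_sum]
      congr 1
    calc worG ω ν f (n+2) T a
        ≤ _ := step1
      _ ≤ _ := step2
      _ = _ := step3

lemma main_ineq (hω : ∀ i, 0 < ω i) (hf : Monotone f) (hconv : ConvexOn ℝ Set.univ f)
    (hmono : ∀ i j, ω i > ω j → ν i ≥ ν j) :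
    ∀ (n : ℕ) (T : Finset (Fin N)) (a : ℝ), n ≤ T.card →
    worG ω ν f n T a ≤ iidG ω ν f n T a := by
  intro n
  induction n with
  | zero => intro T a _; exact le_of_eq rfl
  | succ n ih =>
    intro T a hcard
    calc worG ω ν f (n+1) T a
        ≤ ∑ j ∈ T, (ω j / wsum ω T) * worG ω ν f n T (a + ν j) :=
          lemA hω hf hconv hmono n T a hcard
      _ ≤ ∑ j ∈ T, (ω j / wsum ω T) * iidG ω ν f n T (a + ν j) := by
          refine Finset.sum_le_sum fun j _ => ?_
          exact mul_le_mul_of_nonneg_left (ih T (a + ν j) (by omega)) (coef_nonneg hω T j)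
      _ = iidG ω ν f (n+1) T a := rfl

lemma Iio_zero_fin {n : ℕ} : (Finset.Iio (0 : Fin (n+1))) = ∅ := by
  ext m; simp [Fin.pos_iff_ne_zero]

lemma sum_lt_eq_ite {n : ℕ} (c : Fin n) (F : Fin n → ℝ) :
    ∑ m ∈ Finset.Iio c, F m = ∑ m : Fin n, if m < c then F m else 0 := by
  rw [show Finset.Iio c = Finset.univ.filter (· < c) from by ext x; simp, Finset.sum_filter]

lemma sum_Iio_cons_succ {n : ℕ} (g : Fin N → ℝ) (i₀ : Fin N) (s : Fin n → Fin N) (k : Fin n) :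
    ∑ m ∈ Finset.Iio (Fin.succ k), g (((Fin.cons i₀ s : Fin (n+1) → Fin N)) m) = g i₀ + ∑ m ∈ Finset.Iio k, g (s m) := by
  rw [sum_lt_eq_ite, Fin.sum_univ_succ, sum_lt_eq_ite]
  simp [Fin.cons_zero, Fin.cons_succ, Fin.succ_pos, Fin.succ_lt_succ_iff]

lemma sum_succ_cons {n : ℕ} (G : (Fin (n+1) → Fin N) → ℝ) :
    ∑ t : Fin (n+1) → Fin N, G t
      = ∑ i₀ : Fin N, ∑ s : Fin n → Fin N, G ((Fin.cons i₀ s : Fin (n+1) → Fin N)) := by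
  rw [← Equiv.sum_comp (Fin.consEquiv (fun _ => Fin N)), Fintype.sum_prod_type]
  rfl

lemma worG_eq :
    ∀ (n : ℕ) (T : Finset (Fin N)) (a : ℝ),
    worG ω ν f n T a = ∑ t ∈ Finset.univ.filter
        (fun t : Fin n → Fin N => Function.Injective t ∧ ∀ k, t k ∈ T),
      (∏ k, ω (t k) / (wsum ω T - ∑ m ∈ Finset.Iio k, ω (t m))) * f (a + ∑ k, ν (t k)) := by
  intro n
  induction n with
  | zero =>
    intro T a
    have hfil : (Finset.univ.filter
        (fun t : Fin 0 → Fin N => Function.Injective t ∧ ∀ k, t k ∈ T)) = Finset.univ :=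
      Finset.filter_true_of_mem (fun t _ => ⟨fun x y _ => Subsingleton.elim x y, fun k => k.elim0⟩)
    rw [hfil]
    rw [Finset.univ_unique, Finset.sum_singleton]
    simp [worG]
  | succ n ih =>
    intro T a
    rw [Finset.sum_filter, sum_succ_cons]
    have point : ∀ (i₀ : Fin N) (s : Fin n → Fin N),
        (if (Function.Injective (Fin.cons i₀ s : Fin (n+1) → Fin N) ∧ ∀ k, ((Fin.cons i₀ s : Fin (n+1) → Fin N)) k ∈ T)
          then (∏ k, ω (((Fin.cons i₀ s : Fin (n+1) → Fin N)) k) / (wsum ω T - ∑ m ∈ Finset.Iio k, ω (((Fin.cons i₀ s : Fin (n+1) → Fin N)) m)))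
                * f (a + ∑ k, ν (((Fin.cons i₀ s : Fin (n+1) → Fin N)) k)) else 0)
        = (if i₀ ∈ T then (ω i₀ / wsum ω T) *
            (if (Function.Injective s ∧ ∀ k, s k ∈ T.erase i₀)
              then (∏ k, ω (s k) / (wsum ω (T.erase i₀) - ∑ m ∈ Finset.Iio k, ω (s m)))
                    * f ((a + ν i₀) + ∑ k, ν (s k)) else 0)
          else 0) := by
      intro i₀ s
      have hcond : (Function.Injective (Fin.cons i₀ s : Fin (n+1) → Fin N) ∧ ∀ k, ((Fin.cons i₀ s : Fin (n+1) → Fin N)) k ∈ T)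
          ↔ (i₀ ∈ T ∧ (Function.Injective s ∧ ∀ k, s k ∈ T.erase i₀)) := by
        rw [Fin.cons_injective_iff]
        constructor
        · rintro ⟨⟨hr, hinj⟩, hall⟩
          have hi₀ : i₀ ∈ T := by simpa using hall 0
          refine ⟨hi₀, hinj, fun k => Finset.mem_erase.mpr ⟨?_, by simpa using hall k.succ⟩⟩
          intro h; exact hr ⟨k, h⟩
        · rintro ⟨hi₀, hinj, hall⟩
          refine ⟨⟨?_, hinj⟩, ?_⟩
          · rintro ⟨k, hk⟩; exact (Finset.mem_erase.mp (hall k)).1 hk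
          · intro k
            refine Fin.cases ?_ ?_ k
            · simpa using hi₀
            · intro k'; simpa using Finset.mem_of_mem_erase (hall k')
      rw [if_congr hcond rfl rfl]
      by_cases hiT : i₀ ∈ T
      · by_cases hc : Function.Injective s ∧ ∀ k, s k ∈ T.erase i₀
        · rw [if_pos ⟨hiT, hc⟩, if_pos hiT, if_pos hc]
          rw [Fin.prod_univ_succ, Fin.sum_univ_succ]
          simp only [Fin.cons_zero, Fin.cons_succ]
          rw [Iio_zero_fin, Finset.sum_empty, sub_zero]
          have hprod : (∏ k : Fin n, ω (s k) / (wsum ω T - ∑ m ∈ Finset.Iio (Fin.succ k), ω (((Fin.cons i₀ s : Fin (n+1) → Fin N)) m)))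
              = ∏ k : Fin n, ω (s k) / (wsum ω (T.erase i₀) - ∑ m ∈ Finset.Iio k, ω (s m)) := by
            refine Finset.prod_congr rfl fun k _ => ?_
            rw [sum_Iio_cons_succ, wsum_erase i₀ hiT]
            congr 1
            ring
          rw [hprod, show a + (ν i₀ + ∑ k, ν (s k)) = (a + ν i₀) + ∑ k, ν (s k) from by ring]
          ring
        · rw [if_neg (by tauto), if_pos hiT, if_neg hc, mul_zero]
      · rw [if_neg (by tauto), if_neg hiT]
    rw [Finset.sum_congr rfl fun i₀ _ => Finset.sum_congr rfl fun s _ => point i₀ s]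
    have pull : ∀ i₀ : Fin N,
        (∑ s : Fin n → Fin N, (if i₀ ∈ T then (ω i₀ / wsum ω T) *
            (if (Function.Injective s ∧ ∀ k, s k ∈ T.erase i₀)
              then (∏ k, ω (s k) / (wsum ω (T.erase i₀) - ∑ m ∈ Finset.Iio k, ω (s m)))
                    * f ((a + ν i₀) + ∑ k, ν (s k)) else 0)
          else 0))
        = (if i₀ ∈ T then (ω i₀ / wsum ω T) * worG ω ν f n (T.erase i₀) (a + ν i₀) else 0) := by
      intro i₀
      by_cases hiT : i₀ ∈ T
      · simp only [if_pos hiT]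
        rw [← Finset.mul_sum]
        congr 1
        rw [ih (T.erase i₀) (a + ν i₀), Finset.sum_filter]
      · simp [hiT]
    rw [Finset.sum_congr rfl fun i₀ _ => pull i₀]
    rw [← Finset.sum_filter, Finset.filter_mem_eq_inter, Finset.univ_inter]
    rfl

lemma iidG_eq :
    ∀ (n : ℕ) (T : Finset (Fin N)) (a : ℝ),
    iidG ω ν f n T a = ∑ t ∈ Finset.univ.filter
        (fun t : Fin n → Fin N => ∀ k, t k ∈ T),
      (∏ k, ω (t k) / wsum ω T) * f (a + ∑ k, ν (t k)) := by
  intro n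
  induction n with
  | zero =>
    intro T a
    have hfil : (Finset.univ.filter (fun t : Fin 0 → Fin N => ∀ k, t k ∈ T)) = Finset.univ :=
      Finset.filter_true_of_mem (fun t _ => fun k => k.elim0)
    rw [hfil, Finset.univ_unique, Finset.sum_singleton]
    simp [iidG]
  | succ n ih =>
    intro T a
    rw [Finset.sum_filter, sum_succ_cons]
    have point : ∀ (i₀ : Fin N) (s : Fin n → Fin N),
        (if (∀ k, ((Fin.cons i₀ s : Fin (n+1) → Fin N)) k ∈ T)
          then (∏ k, ω (((Fin.cons i₀ s : Fin (n+1) → Fin N)) k) / wsum ω T) * f (a + ∑ k, ν (((Fin.cons i₀ s : Fin (n+1) → Fin N)) k)) else 0)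
        = (if i₀ ∈ T then (ω i₀ / wsum ω T) *
            (if (∀ k, s k ∈ T)
              then (∏ k, ω (s k) / wsum ω T) * f ((a + ν i₀) + ∑ k, ν (s k)) else 0)
          else 0) := by
      intro i₀ s
      have hcond : (∀ k, ((Fin.cons i₀ s : Fin (n+1) → Fin N)) k ∈ T) ↔ (i₀ ∈ T ∧ ∀ k, s k ∈ T) := by
        constructor
        · intro hall
          exact ⟨by simpa using hall 0, fun k => by simpa using hall k.succ⟩
        · rintro ⟨hi₀, hall⟩ k
          refine Fin.cases ?_ ?_ k
          · simpa using hi₀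
          · intro k'; simpa using hall k'
      rw [if_congr hcond rfl rfl]
      by_cases hiT : i₀ ∈ T
      · by_cases hc : ∀ k, s k ∈ T
        · rw [if_pos ⟨hiT, hc⟩, if_pos hiT, if_pos hc]
          rw [Fin.prod_univ_succ, Fin.sum_univ_succ]
          simp only [Fin.cons_zero, Fin.cons_succ]
          rw [show a + (ν i₀ + ∑ k, ν (s k)) = (a + ν i₀) + ∑ k, ν (s k) from by ring]
          ring
        · rw [if_neg (by tauto), if_pos hiT, if_neg hc, mul_zero]
      · rw [if_neg (by tauto), if_neg hiT]
    rw [Finset.sum_congr rfl fun i₀ _ => Finset.sum_congr rfl fun s _ => point i₀ s]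
    have pull : ∀ i₀ : Fin N,
        (∑ s : Fin n → Fin N, (if i₀ ∈ T then (ω i₀ / wsum ω T) *
            (if (∀ k, s k ∈ T)
              then (∏ k, ω (s k) / wsum ω T) * f ((a + ν i₀) + ∑ k, ν (s k)) else 0)
          else 0))
        = (if i₀ ∈ T then (ω i₀ / wsum ω T) * iidG ω ν f n T (a + ν i₀) else 0) := by
      intro i₀
      by_cases hiT : i₀ ∈ T
      · simp only [if_pos hiT]
        rw [← Finset.mul_sum]
        congr 1
        rw [ih T (a + ν i₀), Finset.sum_filter]
      · simp [hiT]
    rw [Finset.sum_congr rfl fun i₀ _ => pull i₀]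
    rw [← Finset.sum_filter, Finset.filter_mem_eq_inter, Finset.univ_inter]
    rfl
end

/-- Weighted sampling without replacement is dominated by sampling with replacement
in the increasing convex order, when weights and values are similarly ordered. -/
theorem weighted_sampling_increasing_convex_order
    (N n : ℕ) (hn : n ≤ N)
    (ω ν : Fin N → ℝ)
    (hω : ∀ i, 0 < ω i) (hsum : ∑ i, ω i = 1)
    (hmono : ∀ i j, ω i > ω j → ν i ≥ ν j)
    (f : ℝ → ℝ) (hconv : ConvexOn ℝ Set.univ f) (hmonof : Monotone f) :
    ∑ i ∈ Finset.univ.filter (fun i : Fin n → Fin N => Function.Injective i),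
        (∏ k, ω (i k) / (1 - ∑ m ∈ Finset.Iio k, ω (i m))) * f (∑ k, ν (i k))
      ≤ ∑ j : Fin n → Fin N, (∏ k, ω (j k)) * f (∑ k, ν (j k)) := by
  have h1 : wsum ω Finset.univ = 1 := hsum
  have hL : worG ω ν f n Finset.univ 0
      = ∑ i ∈ Finset.univ.filter (fun i : Fin n → Fin N => Function.Injective i),
        (∏ k, ω (i k) / (1 - ∑ m ∈ Finset.Iio k, ω (i m))) * f (∑ k, ν (i k)) := by
    rw [worG_eq]
    refine Finset.sum_congr ?_ fun t ht => ?_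
    · apply Finset.filter_congr
      intro t _
      simp
    · rw [h1, zero_add]
  have hR : iidG ω ν f n Finset.univ 0
      = ∑ j : Fin n → Fin N, (∏ k, ω (j k)) * f (∑ k, ν (j k)) := by
    rw [iidG_eq]
    rw [Finset.filter_true_of_mem (fun t _ => fun k => Finset.mem_univ _)]
    refine Finset.sum_congr rfl fun t _ => ?_
    rw [h1, zero_add]
    simp only [div_one]
  rw [← hL, ← hR]
  exact main_ineq hω hmonof hconv hmono n Finset.univ 0 (by simpa using hn)
end

section
/- Let (I₁,...,Iₙ) be a weighted sample without replacement from N items with weights ω(i), and suppose (J_k)_{k≥1} are i.i.d. with P(J₁=i)=ω(i), with I_k = J_{T_k} where T_k is the time of the k-th distinct item in (J_i). Define σ_{k-1} = ω(I₁)+...+ω(I_{k-1}) and τ_k = T_k - T_{k-1}. Then conditionally on (I₁,...,Iₙ), the inter-arrival times τ₁,...,τₙ are independent and τ_k is geometric with success parameter 1-σ_{k-1}; equivalently, for any distinct i₁,...,iₙ and t₁,...,tₙ ≥ 1, P(τ₁=t₁,...,τₙ=tₙ, (I₁,...,Iₙ)=(i₁,...,iₙ)) = [∏ₖ ω(iₖ)/(1-ω(i₁)-...-ω(i_{k-1}))]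 · ∏ₖ P(Gₖ=tₖ), where Gₖ is geometric with parameter 1-ω(i₁)-...-ω(i_{k-1}). -/
open scoped BigOperators
open MeasureTheory ProbabilityTheory

/-- Number of distinct items appearing among the first `t` draws `J 0, …, J (t-1)`. -/
def numDistinct (N : ℕ) (J : ℕ → Fin N) (t : ℕ) : ℕ :=
  ((Finset.range t).image J).card

/-- `hitTime N J k` is the (1-indexed) time at which the `k`-th distinct item appears. -/
noncomputable def hitTime (N : ℕ) (J : ℕ → Fin N) (k : ℕ) : ℕ :=
  sInf {t | numDistinct N J t = k}

namespace GeomAux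

def Spart (te : ℕ → ℕ) (k : ℕ) : ℕ := ∑ m ∈ Finset.range k, te m

lemma Spart_zero (te : ℕ → ℕ) : Spart te 0 = 0 := rfl

lemma Spart_succ (te : ℕ → ℕ) (k : ℕ) : Spart te (k+1) = Spart te k + te k :=
  Finset.sum_range_succ te k

variable {te : ℕ → ℕ}

lemma Spart_strictMono (hte : ∀ m, 1 ≤ te m) : StrictMono (Spart te) := by
  apply strictMono_nat_of_lt_succ
  intro k
  rw [Spart_succ]
  have := hte k; omega

lemma le_Spart (hte : ∀ m, 1 ≤ te m) (k : ℕ) : k ≤ Spart te k := by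
  induction k with
  | zero => simp [Spart_zero]
  | succ k ih => rw [Spart_succ]; have := hte k; omega

def blk (te : ℕ → ℕ) (s : ℕ) : ℕ := Nat.findGreatest (fun k => Spart te k ≤ s) s

lemma Spart_blk_le (s : ℕ) : Spart te (blk te s) ≤ s :=
  Nat.findGreatest_spec (P := fun k => Spart te k ≤ s) (Nat.zero_le s)
    (by simp [Spart_zero])

lemma lt_Spart_blk_succ (hte : ∀ m, 1 ≤ te m) (s : ℕ) : s < Spart te (blk te s + 1) := by
  by_contra h
  push_neg at h
  have h1 : blk te s + 1 ≤ s := le_trans (le_Spart hte _) h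
  have := Nat.le_findGreatest (P := fun k => Spart te k ≤ s) h1 h
  have h2 : blk te s + 1 ≤ blk te s := this
  omega

lemma blk_eq (hte : ∀ m, 1 ≤ te m) {k s : ℕ} (h1 : Spart te k ≤ s)
    (h2 : s < Spart te (k+1)) : blk te s = k := by
  have hle : k ≤ blk te s :=
    Nat.le_findGreatest (P := fun k => Spart te k ≤ s) (le_trans (le_Spart hte k) h1) h1
  have hlt : blk te s < k + 1 := by
    by_contra h
    push_neg at h
    exact absurd (le_trans ((Spart_strictMono hte).monotone h) (Spart_blk_le s)) (not_le.2 h2)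
  omega

lemma blk_Spart (hte : ∀ m, 1 ≤ te m) (k : ℕ) : blk te (Spart te k) = k :=
  blk_eq hte le_rfl (Spart_strictMono hte (Nat.lt_succ_self k))

end GeomAux

section NumD
variable {N : ℕ}

lemma numDistinct_zero (J : ℕ → Fin N) : numDistinct N J 0 = 0 := by
  simp [numDistinct]

lemma numDistinct_mono (J : ℕ → Fin N) : Monotone (numDistinct N J) := by
  intro a b hab
  exact Finset.card_le_card (Finset.image_subset_image (by simpa using hab))

lemma image_succ (J : ℕ → Fin N) (s : ℕ) :
    (Finset.range (s+1)).image J = insert (J s) ((Finset.range s).image J) := by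
  rw [Finset.range_add_one, Finset.image_insert]

end NumD

namespace GeomAux

variable {N : ℕ} {te : ℕ → ℕ}

/-- the allowed set of values at time `s` -/
def Bset (te : ℕ → ℕ) (ie : ℕ → Fin N) (s : ℕ) : Finset (Fin N) :=
  if s + 1 = Spart te (blk te s + 1) then {ie (blk te s)}
  else (Finset.range (blk te s)).image ie

/-- From the pattern hypothesis, compute the image of draws up to any time `s`. -/
lemma image_of_pattern (hte : ∀ m, 1 ≤ te m) {ie : ℕ → Fin N} {J : ℕ → Fin N} {n : ℕ}
    (hpat : ∀ s < Spart te n, J s ∈ Bset te ie s) :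
    ∀ s ≤ Spart te n, (Finset.range s).image J = (Finset.range (blk te s)).image ie := by
  intro s
  induction s with
  | zero =>
    intro _
    have : blk te 0 = 0 := blk_eq hte (by simp [Spart_zero]) (by
      have := hte 0
      simp [Spart_succ, Spart_zero]
      omega)
    simp [this]
  | succ s ih =>
    intro hs
    have hsn : s < Spart te n := hs
    have hJ := hpat s hsn
    have hih := ih (le_of_lt hsn)
    rw [image_succ, hih]
    by_cases hb : s + 1 = Spart te (blk te s + 1)
    · have hJs : J s = ie (blk te s) := by
        simpa [Bset, hb] using hJ
      have hblk : blk te (s+1) = blk te s + 1 := by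
        rw [hb]; exact blk_Spart hte _
      rw [hblk, hJs, Finset.range_add_one, Finset.image_insert]
    · have hJs : J s ∈ (Finset.range (blk te s)).image ie := by
        simpa [Bset, hb] using hJ
      have hblk : blk te (s+1) = blk te s := by
        apply blk_eq hte
        · exact le_trans (Spart_blk_le s) (Nat.le_succ s)
        · have := lt_Spart_blk_succ hte s
          omega
      rw [hblk, Finset.insert_eq_self.2 hJs]

end GeomAux

namespace GeomAux

variable {N : ℕ} {te : ℕ → ℕ} {ie : ℕ → Fin N} {J : ℕ → Fin N} {n : ℕ}

lemma blk_le (hte : ∀ m, 1 ≤ te m) {s : ℕ} (hs : s ≤ Spart te n) : blk te s ≤ n := by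
  by_contra h
  push_neg at h
  have : Spart te (n+1) ≤ Spart te (blk te s) := (Spart_strictMono hte).monotone h
  have h2 := Spart_blk_le (te := te) s
  have h3 : Spart te n < Spart te (n+1) := Spart_strictMono hte (Nat.lt_succ_self n)
  omega

lemma numDistinct_of_pattern (hte : ∀ m, 1 ≤ te m)
    (hie : ∀ a < n, ∀ b < n, ie a = ie b → a = b)
    (hpat : ∀ s < Spart te n, J s ∈ Bset te ie s) :
    ∀ s ≤ Spart te n, numDistinct N J s = blk te s := by
  intro s hs
  rw [numDistinct, image_of_pattern hte hpat s hs]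
  rw [Finset.card_image_of_injOn, Finset.card_range]
  intro a ha b hb hab
  simp only [Finset.coe_range, Set.mem_Iio] at ha hb
  have hbn := blk_le (n := n) hte hs
  exact hie a (by omega) b (by omega) hab

lemma hitTime_of_pattern (hte : ∀ m, 1 ≤ te m)
    (hie : ∀ a < n, ∀ b < n, ie a = ie b → a = b)
    (hpat : ∀ s < Spart te n, J s ∈ Bset te ie s) :
    ∀ k ≤ n, hitTime N J k = Spart te k := by
  intro k hk
  have hmem : Spart te k ∈ {t | numDistinct N J t = k} := by
    have := numDistinct_of_pattern hte hie hpat (Spart te k)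
      ((Spart_strictMono hte).monotone hk)
    rw [Set.mem_setOf_eq, this, blk_Spart hte]
  apply le_antisymm (Nat.sInf_le hmem)
  by_contra h
  push_neg at h
  have hne : {t | numDistinct N J t = k}.Nonempty := ⟨_, hmem⟩
  have hin := Nat.sInf_mem hne
  set s0 := sInf {t | numDistinct N J t = k} with hs0
  have hs0lt : s0 < Spart te k := h
  have hs0le : s0 ≤ Spart te n := le_trans (le_of_lt hs0lt) ((Spart_strictMono hte).monotone hk)
  have := numDistinct_of_pattern hte hie hpat s0 hs0le
  rw [Set.mem_setOf_eq, this] at hin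
  -- blk te s0 = k but Spart te k ≤ s0, contradiction
  have := Spart_blk_le (te := te) s0
  rw [hin] at this
  omega

/-- pattern implies the event -/
lemma event_of_pattern (hte : ∀ m, 1 ≤ te m)
    (hie : ∀ a < n, ∀ b < n, ie a = ie b → a = b)
    (hpat : ∀ s < Spart te n, J s ∈ Bset te ie s) :
    ∀ k < n, hitTime N J (k+1) - hitTime N J k = te k ∧
      J (hitTime N J (k+1) - 1) = ie k := by
  intro k hk
  have hT := hitTime_of_pattern hte hie hpat
  have hTk := hT k (le_of_lt hk)
  have hTk1 := hT (k+1) hk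
  constructor
  · rw [hTk, hTk1, Spart_succ]; omega
  · rw [hTk1]
    have h1 : 1 ≤ Spart te (k+1) := le_trans (hte k) (by rw [Spart_succ]; omega)
    have hslt : Spart te (k+1) - 1 < Spart te n :=
      lt_of_lt_of_le (by omega) ((Spart_strictMono hte).monotone (show k + 1 ≤ n by omega))
    have hJ := hpat _ hslt
    have hblk : blk te (Spart te (k+1) - 1) = k := by
      apply blk_eq hte
      · rw [Spart_succ]; have := hte k; omega
      · exact Nat.sub_lt (by omega) one_pos
    rw [Bset, hblk, if_pos (by omega)] at hJ
    simpa using hJ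

end GeomAux

namespace GeomAux

variable {N : ℕ} {te : ℕ → ℕ} {ie : ℕ → Fin N} {J : ℕ → Fin N} {n : ℕ}

lemma hitTime_zero (J : ℕ → Fin N) : hitTime N J 0 = 0 :=
  Nat.sInf_eq_zero.2 (Or.inl (numDistinct_zero J))

lemma hitTime_of_event (hte : ∀ m, 1 ≤ te m)
    (hev : ∀ k < n, hitTime N J (k+1) - hitTime N J k = te k ∧
      J (hitTime N J (k+1) - 1) = ie k) :
    ∀ k ≤ n, hitTime N J k = Spart te k := by
  intro k
  induction k with
  | zero => intro _; rw [hitTime_zero, Spart_zero]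
  | succ k ih =>
    intro hk
    have hTk := ih (by omega)
    obtain ⟨h1, -⟩ := hev k (by omega)
    rw [hTk] at h1
    have htk := hte k
    rw [Spart_succ]
    omega

lemma numDistinct_Spart_of_event (hte : ∀ m, 1 ≤ te m)
    (hev : ∀ k < n, hitTime N J (k+1) - hitTime N J k = te k ∧
      J (hitTime N J (k+1) - 1) = ie k) :
    ∀ k ≤ n, numDistinct N J (Spart te k) = k := by
  intro k hk
  rcases Nat.eq_zero_or_pos k with h0 | hpos
  · subst h0; rw [Spart_zero]; exact numDistinct_zero J
  · have hT := hitTime_of_event hte hev k hk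
    rcases Set.eq_empty_or_nonempty {t | numDistinct N J t = k} with he | hne
    · exfalso
      have : hitTime N J k = 0 := by rw [hitTime, he, Nat.sInf_empty]
      rw [hT] at this
      have := le_Spart hte k
      omega
    · have := Nat.sInf_mem hne
      rw [← hitTime, hT] at this
      exact this

lemma numDistinct_ne_of_lt_Spart (hte : ∀ m, 1 ≤ te m)
    (hev : ∀ k < n, hitTime N J (k+1) - hitTime N J k = te k ∧
      J (hitTime N J (k+1) - 1) = ie k) :
    ∀ k ≤ n, ∀ s < Spart te k, numDistinct N J s ≠ k := by
  intro k hk s hs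
  have hT := hitTime_of_event hte hev k hk
  have : s < hitTime N J k := by omega
  exact fun hmem => Nat.notMem_of_lt_sInf (s := {t | numDistinct N J t = k}) this hmem

lemma image_Spart_of_event (hte : ∀ m, 1 ≤ te m)
    (hie : ∀ a < n, ∀ b < n, ie a = ie b → a = b)
    (hev : ∀ k < n, hitTime N J (k+1) - hitTime N J k = te k ∧
      J (hitTime N J (k+1) - 1) = ie k) :
    ∀ k ≤ n, (Finset.range (Spart te k)).image J = (Finset.range k).image ie := by
  intro k hk
  have hsub : (Finset.range k).image ie ⊆ (Finset.range (Spart te k)).image J := by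
    intro j hj
    obtain ⟨m, hm, rfl⟩ := Finset.mem_image.1 hj
    rw [Finset.mem_range] at hm
    obtain ⟨-, h2⟩ := hev m (by omega)
    rw [hitTime_of_event hte hev (m+1) (by omega)] at h2
    have hm1 : Spart te (m+1) ≤ Spart te k :=
      (Spart_strictMono hte).monotone (by omega)
    have hm2 : 1 ≤ Spart te (m+1) := le_trans (by omega) (le_Spart hte (m+1))
    exact Finset.mem_image.2 ⟨Spart te (m+1) - 1, Finset.mem_range.2 (by omega), h2⟩
  have hcard : ((Finset.range (Spart te k)).image J).card ≤ ((Finset.range k).image ie).card := by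
    have h1 : ((Finset.range (Spart te k)).image J).card = k :=
      numDistinct_Spart_of_event hte hev k hk
    have h2 : ((Finset.range k).image ie).card = k := by
      rw [Finset.card_image_of_injOn, Finset.card_range]
      intro a ha b hb hab
      simp only [Finset.coe_range, Set.mem_Iio] at ha hb
      exact hie a (by omega) b (by omega) hab
    omega
  exact (Finset.eq_of_subset_of_card_le hsub hcard).symm

lemma pattern_of_event (hte : ∀ m, 1 ≤ te m)
    (hie : ∀ a < n, ∀ b < n, ie a = ie b → a = b)
    (hev : ∀ k < n, hitTime N J (k+1) - hitTime N J k = te k ∧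
      J (hitTime N J (k+1) - 1) = ie k) :
    ∀ s < Spart te n, J s ∈ Bset te ie s := by
  intro s hs
  set k := blk te s with hkdef
  have hk1 : Spart te k ≤ s := Spart_blk_le s
  have hk2 : s < Spart te (k+1) := lt_Spart_blk_succ hte s
  have hkn : k < n := by
    by_contra h
    push_neg at h
    have : Spart te n ≤ Spart te k := (Spart_strictMono hte).monotone h
    omega
  by_cases hb : s + 1 = Spart te (k+1)
  · rw [Bset, ← hkdef, if_pos hb]
    obtain ⟨-, h2⟩ := hev k hkn
    rw [hitTime_of_event hte hev (k+1) (by omega)] at h2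
    have : s = Spart te (k+1) - 1 := by omega
    rw [Finset.mem_singleton, this]
    exact h2
  · rw [Bset, ← hkdef, if_neg hb]
    have hnd1 : numDistinct N J (Spart te k) = k :=
      numDistinct_Spart_of_event hte hev k (by omega)
    have hnds : numDistinct N J s = k := by
      have hge : k ≤ numDistinct N J s := hnd1 ▸ numDistinct_mono J hk1
      have hle1 : numDistinct N J (s+1) ≤ k + 1 := by
        have := numDistinct_Spart_of_event hte hev (k+1) (by omega)
        exact this ▸ numDistinct_mono J (by omega)
      have hne1 : numDistinct N J (s+1) ≠ k + 1 :=
        numDistinct_ne_of_lt_Spart hte hev (k+1) (by omega) (s+1) (by omega)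
      have hmono : numDistinct N J s ≤ numDistinct N J (s+1) :=
        numDistinct_mono J (Nat.le_succ s)
      omega
    have hnds1 : numDistinct N J (s+1) = k := by
      have hle1 : numDistinct N J (s+1) ≤ k + 1 := by
        have := numDistinct_Spart_of_event hte hev (k+1) (by omega)
        exact this ▸ numDistinct_mono J (by omega)
      have hne1 : numDistinct N J (s+1) ≠ k + 1 :=
        numDistinct_ne_of_lt_Spart hte hev (k+1) (by omega) (s+1) (by omega)
      have hmono : numDistinct N J s ≤ numDistinct N J (s+1) :=
        numDistinct_mono J (Nat.le_succ s)
      omega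
    have hJmem : J s ∈ (Finset.range s).image J := by
      by_contra hnot
      have : numDistinct N J (s+1) = numDistinct N J s + 1 := by
        rw [numDistinct, numDistinct, image_succ, Finset.card_insert_of_notMem hnot]
      omega
    have heqimg : (Finset.range s).image J = (Finset.range (Spart te k)).image J := by
      apply (Finset.eq_of_subset_of_card_le
        (Finset.image_subset_image (by simpa using hk1)) _).symm
      show ((Finset.range s).image J).card ≤ _
      have h1 : ((Finset.range s).image J).card = k := hnds
      have h2 : ((Finset.range (Spart te k)).image J).card = k := hnd1
      omega
    rw [heqimg, image_Spart_of_event hte hie hev k (by omega)] at hJmem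
    exact hJmem

lemma key_iff (hte : ∀ m, 1 ≤ te m)
    (hie : ∀ a < n, ∀ b < n, ie a = ie b → a = b) :
    (∀ k < n, hitTime N J (k+1) - hitTime N J k = te k ∧
      J (hitTime N J (k+1) - 1) = ie k)
    ↔ (∀ s < Spart te n, J s ∈ Bset te ie s) :=
  ⟨pattern_of_event hte hie, event_of_pattern hte hie⟩

end GeomAux

namespace GeomAux

variable {N : ℕ} {te : ℕ → ℕ} {ie : ℕ → Fin N}

lemma law_finset {Ω : Type*} [MeasurableSpace Ω] (μ : Measure Ω)
    (ω : Fin N → ℝ) (f : Ω → Fin N) (hf : Measurable f)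
    (hlaw : ∀ j, μ {x | f x = j} = ENNReal.ofReal (ω j)) (hω : ∀ j, 0 ≤ ω j)
    (B : Finset (Fin N)) :
    μ (f ⁻¹' ↑B) = ENNReal.ofReal (∑ j ∈ B, ω j) := by
  have hun : f ⁻¹' ↑B = ⋃ j ∈ B, f ⁻¹' {j} := by
    ext x; simp
  rw [hun, measure_biUnion_finset _ (fun j _ => hf (measurableSet_singleton j))]
  · rw [ENNReal.ofReal_sum_of_nonneg (fun j _ => hω j)]
    apply Finset.sum_congr rfl
    intro j _
    have hpre : f ⁻¹' {j} = {x | f x = j} := rfl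
    rw [hpre, hlaw j]
  · intro a _ b _ hab
    apply Set.disjoint_left.2
    intro x hxa hxb
    simp only [Set.mem_preimage, Set.mem_singleton_iff] at hxa hxb
    exact hab (hxa ▸ hxb ▸ rfl)

lemma prod_sum_Bset (ω : Fin N → ℝ) (hte : ∀ m, 1 ≤ te m) :
    ∀ n : ℕ, (∀ a < n, ∀ b < n, ie a = ie b → a = b) →
    ∏ s ∈ Finset.range (Spart te n), (∑ j ∈ Bset te ie s, ω j)
      = ∏ k ∈ Finset.range n,
          ((∑ m ∈ Finset.range k, ω (ie m)) ^ (te k - 1) * ω (ie k)) := by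
  intro n
  induction n with
  | zero => intro _; simp [Spart_zero]
  | succ n ih =>
    intro hie
    have hmono : Spart te n ≤ Spart te (n+1) :=
      le_of_lt (Spart_strictMono hte (Nat.lt_succ_self n))
    rw [← Finset.prod_range_mul_prod_Ico _ hmono, Finset.prod_range_succ,
      ih (fun a ha b hb => hie a (by omega) b (by omega))]
    congr 1
    -- the new block
    have hc : 1 ≤ te n := hte n
    have hS : Spart te (n+1) = Spart te n + (te n - 1) + 1 := by
      rw [Spart_succ]; omega
    rw [hS, Finset.prod_Ico_succ_top (by omega)]
    congr 1
    · -- interior: constant product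
      have hconst : ∀ s ∈ Finset.Ico (Spart te n) (Spart te n + (te n - 1)),
          (∑ j ∈ Bset te ie s, ω j) = ∑ m ∈ Finset.range n, ω (ie m) := by
        intro s hs
        rw [Finset.mem_Ico] at hs
        have hblk : blk te s = n := blk_eq hte hs.1 (by rw [Spart_succ]; omega)
        have hne : s + 1 ≠ Spart te (n+1) := by rw [Spart_succ]; omega
        rw [Bset, hblk, if_neg hne]
        apply Finset.sum_image
        intro a ha b hb hab
        rw [Finset.coe_range, Set.mem_Iio] at ha hb
        exact hie a (by omega) b (by omega) hab
      rw [Finset.prod_congr rfl hconst, Finset.prod_const, Nat.card_Ico]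
      congr 1
      omega
    · -- boundary term
      have hblk : blk te (Spart te n + (te n - 1)) = n :=
        blk_eq hte (by omega) (by rw [Spart_succ]; omega)
      have hb : Spart te n + (te n - 1) + 1 = Spart te (blk te (Spart te n + (te n - 1)) + 1) := by
        rw [hblk, Spart_succ]; omega
      rw [Bset, if_pos hb, hblk, Finset.sum_singleton]

end GeomAux

namespace GeomAux

lemma sum_Iio_fin {M : Type*} [AddCommMonoid M] {n : ℕ} (k : Fin n) (g : ℕ → M) :
    ∑ m ∈ Finset.Iio k, g (m : ℕ) = ∑ m ∈ Finset.range (k : ℕ), g m := by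
  have h1 : Finset.Iio k = Finset.univ.filter (fun m : Fin n => (m : ℕ) < (k : ℕ)) := by
    ext m
    simp only [Finset.mem_Iio, Finset.mem_filter, Finset.mem_univ, true_and, Fin.lt_def]
  have h2 : Finset.range (k : ℕ)
      = (Finset.range n).filter (fun m => m < (k : ℕ)) := by
    ext m
    simp only [Finset.mem_range, Finset.mem_filter]
    have := k.isLt
    omega
  rw [h1, Finset.sum_filter, h2, Finset.sum_filter, ← Fin.sum_univ_eq_sum_range]

end GeomAux


/-- The geometric inter-arrival lemma: conditionally on the sample without replacement
`(I₁,…,Iₙ)`, the inter-arrival times `τ_k = T_k - T_{k-1}` are independent geometric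
variables with parameters `1 - σ_{k-1}`; stated as the joint probability identity. -/
theorem geometric_interarrival
    {Ω : Type*} [MeasurableSpace Ω] (μ : Measure Ω) [IsProbabilityMeasure μ]
    (N n : ℕ) (hn : n ≤ N) (ω : Fin N → ℝ)
    (hω : ∀ i, 0 < ω i) (hsum : ∑ i, ω i = 1)
    (J : ℕ → Ω → Fin N) (hJmeas : ∀ t, Measurable (J t))
    (hindep : iIndepFun J μ)
    (hlaw : ∀ t i, μ {x | J t x = i} = ENNReal.ofReal (ω i))
    (i : Fin n → Fin N) (hi : Function.Injective i)
    (t : Fin n → ℕ) (ht : ∀ k, 1 ≤ t k) :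
    μ {x | ∀ k : Fin n,
        hitTime N (fun s => J s x) ((k : ℕ) + 1) - hitTime N (fun s => J s x) (k : ℕ) = t k ∧
        J (hitTime N (fun s => J s x) ((k : ℕ) + 1) - 1) x = i k}
      = ENNReal.ofReal
        ((∏ k, ω (i k) / (1 - ∑ m ∈ Finset.Iio k, ω (i m))) *
          ∏ k, ((1 - ∑ m ∈ Finset.Iio k, ω (i m)) *
            (∑ m ∈ Finset.Iio k, ω (i m)) ^ (t k - 1))) := by
  classical
  rcases Nat.eq_zero_or_pos n with hn0 | hn0
  · subst hn0
    have h1 : {x : Ω | ∀ k : Fin 0,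
        hitTime N (fun s => J s x) ((k : ℕ) + 1) - hitTime N (fun s => J s x) (k : ℕ) = t k ∧
        J (hitTime N (fun s => J s x) ((k : ℕ) + 1) - 1) x = i k} = Set.univ := by
      rw [Set.eq_univ_iff_forall]
      intro x k
      exact k.elim0
    rw [h1, measure_univ, Finset.univ_eq_empty, Finset.prod_empty, Finset.prod_empty,
      one_mul, ENNReal.ofReal_one]
  set te : ℕ → ℕ := fun m => if h : m < n then t ⟨m, h⟩ else 1 with hte_def
  set ie : ℕ → Fin N := fun m => if h : m < n then i ⟨m, h⟩ else i ⟨0, hn0⟩ with hie_def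
  have hte : ∀ m, 1 ≤ te m := by
    intro m
    rw [hte_def]
    by_cases h : m < n
    · simp only [dif_pos h]; exact ht _
    · simp only [dif_neg h]; exact le_refl 1
  have hie : ∀ a < n, ∀ b < n, ie a = ie b → a = b := by
    intro a ha b hb hab
    rw [hie_def] at hab
    simp only [dif_pos ha, dif_pos hb] at hab
    have := hi hab
    exact Fin.mk.inj_iff.1 this
  have hievals : ∀ k : Fin n, ie (k : ℕ) = i k := by
    intro k
    rw [hie_def]
    simp only [dif_pos k.isLt]
  have htevals : ∀ k : Fin n, te (k : ℕ) = t k := by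
    intro k
    rw [hte_def]
    simp only [dif_pos k.isLt]
  -- rewrite the event as an intersection of cylinder events
  have hset : {x : Ω | ∀ k : Fin n,
        hitTime N (fun s => J s x) ((k : ℕ) + 1) - hitTime N (fun s => J s x) (k : ℕ) = t k ∧
        J (hitTime N (fun s => J s x) ((k : ℕ) + 1) - 1) x = i k}
      = ⋂ s ∈ Finset.range (GeomAux.Spart te n), J s ⁻¹' ↑(GeomAux.Bset te ie s) := by
    ext x
    simp only [Set.mem_setOf_eq, Set.mem_iInter, Set.mem_preimage, Finset.mem_range,
      Finset.mem_coe]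
    rw [← GeomAux.key_iff (J := fun s => J s x) hte hie]
    constructor
    · intro h k hk
      have h2 := h ⟨k, hk⟩
      refine ⟨?_, ?_⟩
      · rw [show te k = t ⟨k, hk⟩ from dif_pos hk]; exact h2.1
      · rw [show ie k = i ⟨k, hk⟩ from dif_pos hk]; exact h2.2
    · intro h k
      have := h (k : ℕ) k.isLt
      rw [htevals k, hievals k] at this
      exact this
  rw [hset]
  rw [hindep.measure_inter_preimage_eq_mul (Finset.range (GeomAux.Spart te n))
    (sets := fun s => ↑(GeomAux.Bset te ie s)) (fun s _ => (GeomAux.Bset te ie s).measurableSet)]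
  have hfac : ∀ s ∈ Finset.range (GeomAux.Spart te n),
      μ (J s ⁻¹' ↑(GeomAux.Bset te ie s))
        = ENNReal.ofReal (∑ j ∈ GeomAux.Bset te ie s, ω j) := by
    intro s _
    exact GeomAux.law_finset μ ω (J s) (hJmeas s) (fun j => hlaw s j) (fun j => (hω j).le) _
  rw [Finset.prod_congr rfl hfac,
    ← ENNReal.ofReal_prod_of_nonneg
      (fun s _ => Finset.sum_nonneg (fun j _ => (hω j).le)),
    GeomAux.prod_sum_Bset ω hte n hie]
  congr 1
  -- now a purely real identity
  have hσlt : ∀ k : Fin n, ∑ m ∈ Finset.Iio k, ω (i m) < 1 := by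
    intro k
    have heq : ∑ m ∈ Finset.Iio k, ω (i m) = ∑ j ∈ (Finset.Iio k).image i, ω j :=
      (Finset.sum_image (fun a _ b _ hab => hi hab)).symm
    rw [heq, ← hsum]
    apply Finset.sum_lt_sum_of_subset (Finset.subset_univ _) (Finset.mem_univ (i k))
    · intro hmem
      obtain ⟨m, hm, hmk⟩ := Finset.mem_image.1 hmem
      rw [Finset.mem_Iio] at hm
      exact absurd (hi hmk) (ne_of_lt hm)
    · exact hω (i k)
    · exact fun j _ _ => (hω j).le
  have hσnn : ∀ k : Fin n, 0 ≤ ∑ m ∈ Finset.Iio k, ω (i m) :=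
    fun k => Finset.sum_nonneg (fun m _ => (hω (i m)).le)
  rw [← Finset.prod_mul_distrib]
  rw [← Fin.prod_univ_eq_prod_range
    (fun kk => (∑ m ∈ Finset.range kk, ω (ie m)) ^ (te kk - 1) * ω (ie kk)) n]
  apply Finset.prod_congr rfl
  intro k _
  have hne : (1 : ℝ) - ∑ m ∈ Finset.Iio k, ω (i m) ≠ 0 := by
    have := hσlt k; linarith
  have hIio : ∑ m ∈ Finset.Iio k, ω (i m) = ∑ m ∈ Finset.range (k : ℕ), ω (ie m) := by
    rw [← GeomAux.sum_Iio_fin k (fun m => ω (ie m))]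
    apply Finset.sum_congr rfl
    intro m _
    rw [hievals m]
  rw [htevals k, hievals k, ← hIio]
  field_simp
end

section
/- Under the coupling where (I₁,...,Iₙ) are the first n distinct items of an i.i.d. sequence (J_k) with P(J₁=i)=ω(i), the conditional expectation of the time T_n of the n-th distinct item satisfies E[T_n | I₁,...,Iₙ] = Σ_{k=1}^{n} 1/(1-σ_{k-1}), where σ_{k-1} = ω(I₁)+...+ω(I_{k-1}). -/
open scoped BigOperators
open MeasureTheory ProbabilityTheory

/-- `sampleWOR N J k` is the `k`-th (0-indexed) distinct item in the sequence `J`,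
i.e. the `k`-th item of the induced sample without replacement. -/
noncomputable def sampleWOR (N : ℕ) (J : ℕ → Fin N) (k : ℕ) : Fin N :=
  J (hitTime N J (k + 1) - 1)

namespace CCW

variable {N : ℕ} (f : ℕ → Fin N)

lemma nd_zero : numDistinct N f 0 = 0 := by simp [numDistinct]

lemma nd_mono : Monotone (numDistinct N f) := fun a b h =>
  Finset.card_le_card (Finset.image_subset_image (Finset.range_subset_range.2 h))

lemma nd_succ (t : ℕ) : numDistinct N f (t + 1) =
    if f t ∈ (Finset.range t).image f then numDistinct N f t else numDistinct N f t + 1 := by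
  unfold numDistinct
  rw [Finset.range_add_one, Finset.image_insert]
  split
  · rw [Finset.insert_eq_self.2 ‹_›]
  · rw [Finset.card_insert_of_notMem ‹_›]

lemma nd_succ_le (t : ℕ) : numDistinct N f (t + 1) ≤ numDistinct N f t + 1 := by
  rw [nd_succ]; split <;> omega

lemma nd_one (hN : 0 < N) : numDistinct N f 1 = 1 := by
  have := nd_succ f 0
  simp [nd_zero] at this
  simpa [this] using nd_zero f ▸ rfl

lemma exists_nd {t k : ℕ} (hk : k ≤ numDistinct N f t) : ∃ s ≤ t, numDistinct N f s = k := by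
  induction t with
  | zero => exact ⟨0, le_rfl, by have := nd_zero f; omega⟩
  | succ t ih =>
    rcases eq_or_lt_of_le hk with h | h
    · exact ⟨t + 1, le_rfl, h.symm⟩
    · have h2 := nd_succ_le f t
      obtain ⟨s, hs, h3⟩ := ih (by omega)
      exact ⟨s, hs.trans (Nat.le_succ t), h3⟩

lemma hitTime_nd {n : ℕ} (h : ∃ t, numDistinct N f t = n) :
    numDistinct N f (hitTime N f n) = n := Nat.sInf_mem h

lemma hitTime_le {n t : ℕ} (h : numDistinct N f t = n) : hitTime N f n ≤ t := Nat.sInf_le h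

lemma hitTime_min {n s : ℕ} (h : s < hitTime N f n) : numDistinct N f s ≠ n :=
  fun hc => Nat.notMem_of_lt_sInf h (show s ∈ {t | numDistinct N f t = n} from hc)

lemma hitTime_zero : hitTime N f 0 = 0 :=
  Nat.sInf_eq_zero.2 (Or.inl (nd_zero f))

lemma hitTime_pos {n : ℕ} (hn : 1 ≤ n) (h : ∃ t, numDistinct N f t = n) :
    1 ≤ hitTime N f n := by
  rcases Nat.eq_zero_or_pos (hitTime N f n) with h0 | h0
  · exfalso; have := hitTime_nd f h; rw [h0, nd_zero] at this; omega
  · exact h0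

lemma hitTime_pred {n : ℕ} (hn : 1 ≤ n) (h : ∃ t, numDistinct N f t = n) :
    numDistinct N f (hitTime N f n - 1) = n - 1 := by
  have h1 := hitTime_pos f hn h
  have h2 := hitTime_nd f h
  have h3 : numDistinct N f (hitTime N f n - 1) ≠ n :=
    hitTime_min f (n := n) (by omega)
  have h4 : numDistinct N f (hitTime N f n - 1) ≤ n := by
    have := nd_mono f (Nat.sub_le (hitTime N f n) 1); omega
  have h5 : numDistinct N f (hitTime N f n) ≤ numDistinct N f (hitTime N f n - 1) + 1 := by
    have := nd_succ_le f (hitTime N f n - 1)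
    rwa [Nat.sub_add_cancel h1] at this
  omega

lemma hitTime_new {n : ℕ} (hn : 1 ≤ n) (h : ∃ t, numDistinct N f t = n) :
    f (hitTime N f n - 1) ∉ (Finset.range (hitTime N f n - 1)).image f := by
  intro hmem
  have h1 := hitTime_pos f hn h
  have h2 := hitTime_nd f h
  have h3 := hitTime_pred f hn h
  have h4 := nd_succ f (hitTime N f n - 1)
  rw [Nat.sub_add_cancel h1, if_pos hmem] at h4
  omega

/-- The items seen before `hitTime k` are exactly the first `k` distinct items. -/
lemma image_hitTime : ∀ k : ℕ, (∃ t, numDistinct N f t = k) →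
    (Finset.range (hitTime N f k)).image f
      = (Finset.range k).image (fun m => sampleWOR N f m) := by
  intro k
  induction k with
  | zero => intro _; simp [hitTime_zero]
  | succ k ih =>
    intro h
    have hk : ∃ t, numDistinct N f t = k := by
      obtain ⟨t, ht⟩ := h
      obtain ⟨s, _, hs⟩ := exists_nd f (t := t) (k := k) (by omega)
      exact ⟨s, hs⟩
    have h1 : 1 ≤ hitTime N f (k + 1) := hitTime_pos f (by omega) h
    have h2 : numDistinct N f (hitTime N f (k + 1) - 1) = k := by
      have := hitTime_pred f (by omega) h; simpa using this
    -- images at hitTime k and hitTime (k+1) - 1 agree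
    have hle : hitTime N f k ≤ hitTime N f (k + 1) - 1 := hitTime_le f h2
    have himeq : (Finset.range (hitTime N f (k + 1) - 1)).image f
        = (Finset.range (hitTime N f k)).image f := by
      apply (Finset.eq_of_subset_of_card_le
        (Finset.image_subset_image (Finset.range_subset_range.2 hle)) ?_).symm
      have : numDistinct N f (hitTime N f k) = k := hitTime_nd f hk
      change numDistinct N f _ ≤ numDistinct N f _
      omega
    have hrange : Finset.range (hitTime N f (k + 1))
        = insert (hitTime N f (k + 1) - 1) (Finset.range (hitTime N f (k + 1) - 1)) := by
      conv_lhs => rw [← Nat.sub_add_cancel h1]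
      exact Finset.range_add_one
    rw [hrange, Finset.image_insert, himeq, ih hk, Finset.range_add_one, Finset.image_insert]
    rfl

/-- staying inside the set of already seen items keeps the image constant -/
lemma image_stay {t' : ℕ} : ∀ m : ℕ, t' ≤ m →
    (∀ s, t' ≤ s → s < m → f s ∈ (Finset.range t').image f) →
    (Finset.range m).image f = (Finset.range t').image f := by
  intro m
  induction m with
  | zero => intro h _; rw [Nat.le_zero.1 h]
  | succ m ih =>
    intro hm hstay
    rcases Nat.lt_or_ge t' (m + 1) with h | h
    · have hm' : t' ≤ m := by omega
      have := ih hm' (fun s hs1 hs2 => hstay s hs1 (by omega))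
      rw [Finset.range_add_one, Finset.image_insert, this, Finset.insert_eq_self.2]
      exact hstay m hm' (by omega)
    · rw [Nat.le_antisymm hm h]

end CCW

namespace CCW2
open CCW

variable {N : ℕ} (f : ℕ → Fin N)

lemma nd_one' : numDistinct N f 1 = 1 := by
  simp [numDistinct]

lemma hitTime_one : hitTime N f 1 = 1 := by
  refine le_antisymm (hitTime_le f (nd_one' f)) (hitTime_pos f le_rfl ⟨1, nd_one' f⟩)

lemma attain {n : ℕ} (ii : ℕ → Fin N) (hinj : ∀ a < n, ∀ b < n, ii a = ii b → a = b)
    (hn : 1 ≤ n) (hpat : ∀ k < n, sampleWOR N f k = ii k) :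
    ∃ t, numDistinct N f t = n := by
  by_contra hc
  push_neg at hc
  rcases eq_or_lt_of_le hn with h1 | h2
  · exact hc 1 (by rw [nd_one']; omega)
  · -- n ≥ 2
    have hT : hitTime N f n = 0 := by
      rw [hitTime]
      apply Nat.sInf_eq_zero.2
      right
      exact Set.eq_empty_iff_forall_notMem.2 (fun t ht => hc t ht)
    have e1 : sampleWOR N f (n - 1) = ii (n - 1) := hpat (n - 1) (by omega)
    have e0 : sampleWOR N f 0 = ii 0 := hpat 0 (by omega)
    have hsucc : n - 1 + 1 = n := by omega
    rw [sampleWOR, hsucc, hT] at e1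
    rw [sampleWOR, hitTime_one] at e0
    norm_num at e1 e0
    have := hinj 0 (by omega) (n - 1) (by omega) (by rw [← e0, ← e1])
    omega

lemma nd_congr {g : ℕ → Fin N} {t : ℕ} (hfg : ∀ s < t, f s = g s) {s : ℕ} (hs : s ≤ t) :
    numDistinct N f s = numDistinct N g s := by
  unfold numDistinct
  congr 1
  apply Finset.image_congr
  intro a ha
  exact hfg a (lt_of_lt_of_le (Finset.mem_range.1 ha) hs)

lemma hitTime_congr {g : ℕ → Fin N} {t k : ℕ} (hfg : ∀ s < t, f s = g s)
    (hle : hitTime N f k ≤ t) (hnd : numDistinct N f (hitTime N f k) = k) :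
    hitTime N g k = hitTime N f k := by
  have h1 : numDistinct N g (hitTime N f k) = k := by
    rw [← nd_congr f hfg hle]; exact hnd
  refine le_antisymm (hitTime_le g h1) ?_
  by_contra hlt
  push_neg at hlt
  have h2 : numDistinct N g (hitTime N g k) = k := hitTime_nd g ⟨_, h1⟩
  have h3 : numDistinct N f (hitTime N g k) = k := by
    rw [nd_congr f hfg (le_trans (le_of_lt hlt) hle)]; exact h2
  exact hitTime_min f hlt h3

/-- the full condition `pattern ∧ hitTime n = t` only depends on the first `t` values -/
lemma cond_congr (ii : ℕ → Fin N) {g : ℕ → Fin N} {n t : ℕ} (hn : 1 ≤ n)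
    (hfg : ∀ s < t, f s = g s)
    (h1 : ∀ k < n, sampleWOR N f k = ii k) (h2 : hitTime N f n = t)
    (hatt : ∃ s, numDistinct N f s = n) :
    (∀ k < n, sampleWOR N g k = ii k) ∧ hitTime N g n = t := by
  have hndt : numDistinct N f t = n := h2 ▸ hitTime_nd f hatt
  have ht1 : 1 ≤ t := h2 ▸ hitTime_pos f hn hatt
  have key : ∀ k, 1 ≤ k → k ≤ n → hitTime N g k = hitTime N f k ∧ hitTime N f k ≤ t := by
    intro k hk1 hkn
    obtain ⟨s, hs, hsk⟩ := exists_nd f (t := t) (k := k) (by omega)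
    have hle : hitTime N f k ≤ t := le_trans (hitTime_le f hsk) hs
    exact ⟨hitTime_congr f hfg hle (hitTime_nd f ⟨s, hsk⟩), hle⟩
  constructor
  · intro k hk
    have hk1 := (key (k + 1) (by omega) (by omega))
    have hpos : 1 ≤ hitTime N f (k + 1) := by
      obtain ⟨s, hs, hsk⟩ := exists_nd f (t := t) (k := k + 1) (by omega)
      exact hitTime_pos f (by omega) ⟨s, hsk⟩
    rw [sampleWOR, hk1.1, ← hfg _ (by omega)]
    exact h1 k hk
  · rw [(key n hn le_rfl).1, h2]

lemma imF (ii : ℕ → Fin N) {m : ℕ} (hatt : ∃ t, numDistinct N f t = m)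
    (hpat : ∀ k < m, sampleWOR N f k = ii k) :
    (Finset.range (hitTime N f m)).image f = (Finset.range m).image ii := by
  rw [image_hitTime f m hatt]
  apply Finset.image_congr
  intro a ha
  exact hpat a (Finset.mem_range.1 ha)

/-- The key structural decomposition -/
lemma struct {n t : ℕ} (ii : ℕ → Fin N) (hinj : ∀ a < n, ∀ b < n, ii a = ii b → a = b)
    (hn : 1 ≤ n) :
    ((∀ k < n, sampleWOR N f k = ii k) ∧ hitTime N f n = t)
    ↔ ∃ t' < t, ((∀ k < n - 1, sampleWOR N f k = ii k) ∧ hitTime N f (n - 1) = t')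
        ∧ (∀ s, t' ≤ s → s < t - 1 → f s ∈ (Finset.range (n - 1)).image ii)
        ∧ f (t - 1) = ii (n - 1) := by
  have hinj' : ∀ a < n - 1, ∀ b < n - 1, ii a = ii b → a = b :=
    fun a ha b hb h => hinj a (by omega) b (by omega) h
  have hnotmem : ii (n - 1) ∉ (Finset.range (n - 1)).image ii := by
    intro hmem
    obtain ⟨m, hm, hme⟩ := Finset.mem_image.1 hmem
    have h1 : m < n - 1 := Finset.mem_range.1 hm
    have := hinj m (by omega) (n - 1) (by omega) hme
    omega
  constructor
  · rintro ⟨hpat, hT⟩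
    have hatt : ∃ s, numDistinct N f s = n := attain f ii hinj hn hpat
    have ht1 : 1 ≤ t := hT ▸ hitTime_pos f hn hatt
    have hndt : numDistinct N f t = n := hT ▸ hitTime_nd f hatt
    have hatt' : ∃ s, numDistinct N f s = n - 1 := by
      obtain ⟨s, _, hs⟩ := exists_nd f (t := t) (k := n - 1) (by omega)
      exact ⟨s, hs⟩
    have hpat' : ∀ k < n - 1, sampleWOR N f k = ii k := fun k hk => hpat k (by omega)
    set t' := hitTime N f (n - 1) with ht'
    have hndt' : numDistinct N f t' = n - 1 := hitTime_nd f hatt'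
    have hF : (Finset.range t').image f = (Finset.range (n - 1)).image ii := by
      rw [ht']; exact imF f ii hatt' hpat'
    have hpred : numDistinct N f (t - 1) = n - 1 := by
      have := hitTime_pred f hn hatt; rw [hT] at this; exact this
    have ht'le : t' ≤ t - 1 := hitTime_le f hpred
    have himeq : ∀ s, t' ≤ s → s ≤ t - 1 → (Finset.range s).image f = (Finset.range t').image f := by
      intro s hs1 hs2
      have hnds : numDistinct N f s = n - 1 := by
        have l1 := nd_mono f hs1
        have l2 := nd_mono f hs2
        omega
      apply (Finset.eq_of_subset_of_card_le
        (Finset.image_subset_image (Finset.range_subset_range.2 hs1)) ?_).symm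
      change numDistinct N f _ ≤ numDistinct N f _
      omega
    refine ⟨t', by omega, ⟨hpat', rfl⟩, ?_, ?_⟩
    · intro s hs1 hs2
      have : f s ∈ (Finset.range (s + 1)).image f :=
        Finset.mem_image_of_mem f (Finset.mem_range.2 (by omega))
      rw [himeq (s + 1) (by omega) (by omega)] at this
      rwa [hF] at this
    · have := hpat (n - 1) (by omega)
      rw [sampleWOR] at this
      rw [show n - 1 + 1 = n by omega, hT] at this
      exact this
  · rintro ⟨t', htt', ⟨hpat', hT'⟩, hstay, hlast⟩
    have hatt' : ∃ s, numDistinct N f s = n - 1 := by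
      rcases Nat.eq_zero_or_pos (n - 1) with h0 | h0
      · exact ⟨0, by rw [nd_zero]; omega⟩
      · exact attain f ii hinj' h0 hpat'
    have hndt' : numDistinct N f t' = n - 1 := hT' ▸ hitTime_nd f hatt'
    have hF : (Finset.range t').image f = (Finset.range (n - 1)).image ii := by
      rw [← hT']; exact imF f ii hatt' hpat'
    have himeq : ∀ s, t' ≤ s → s ≤ t - 1 → (Finset.range s).image f = (Finset.range t').image f := by
      intro s hs1 hs2
      apply image_stay f s hs1
      intro u hu1 hu2
      rw [hF]
      exact hstay u hu1 (by omega)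
    have hnd_flat : ∀ s, t' ≤ s → s ≤ t - 1 → numDistinct N f s = n - 1 := by
      intro s hs1 hs2
      have : numDistinct N f s = numDistinct N f t' := by
        unfold numDistinct; rw [himeq s hs1 hs2]
      omega
    have hndt : numDistinct N f t = n := by
      have h1 : numDistinct N f (t - 1) = n - 1 := hnd_flat (t - 1) (by omega) le_rfl
      have h2 := nd_succ f (t - 1)
      rw [Nat.sub_add_cancel (by omega : 1 ≤ t)] at h2
      rw [himeq (t - 1) (by omega) le_rfl, hF] at h2
      rw [hlast, if_neg hnotmem] at h2
      omega
    have hlow : ∀ s, s < t → numDistinct N f s ≠ n := by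
      intro s hst
      rcases le_or_gt t' s with h | h
      · have := hnd_flat s h (by omega); omega
      · have := nd_mono f (le_of_lt h); omega
    have hT : hitTime N f n = t := by
      refine le_antisymm (hitTime_le f hndt) ?_
      by_contra hlt
      push_neg at hlt
      exact hlow _ hlt (hitTime_nd f ⟨t, hndt⟩)
    refine ⟨?_, hT⟩
    intro k hk
    rcases Nat.lt_or_ge k (n - 1) with h | h
    · exact hpat' k h
    · have hk1 : k = n - 1 := by omega
      rw [hk1, sampleWOR, show n - 1 + 1 = n by omega, hT]
      exact hlast

end CCW2
open scoped BigOperators ENNReal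

namespace CCW3

lemma geom_real {σ : ℝ} (h0 : 0 ≤ σ) (h1 : σ < 1) :
    ∑' g : ℕ, (g + 1 : ℝ) * σ ^ g = (1 - σ)⁻¹ * (1 - σ)⁻¹ := by
  have hn : ‖σ‖ < 1 := by rw [Real.norm_eq_abs, abs_of_nonneg h0]; exact h1
  have s1 : Summable (fun g : ℕ => (g : ℝ) * σ ^ g) := by
    simpa using summable_pow_mul_geometric_of_norm_lt_one 1 hn
  have s2 : Summable (fun g : ℕ => σ ^ g) := summable_geometric_of_norm_lt_one hn
  have h2 : (fun g : ℕ => (g + 1 : ℝ) * σ ^ g)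
      = fun g : ℕ => (g : ℝ) * σ ^ g + σ ^ g := by
    funext g; ring
  rw [h2, Summable.tsum_add s1 s2, tsum_coe_mul_geometric_of_norm_lt_one hn,
    tsum_geometric_of_lt_one h0 h1]
  have h3 : 1 - σ ≠ 0 := by linarith
  field_simp
  ring

lemma sub_ofReal {σ : ℝ} (h0 : 0 ≤ σ) :
    (1 : ℝ≥0∞) - ENNReal.ofReal σ = ENNReal.ofReal (1 - σ) := by
  rw [ENNReal.ofReal_sub 1 h0, ENNReal.ofReal_one]

lemma inv_ofReal {σ : ℝ} (h0 : 0 ≤ σ) (h1 : σ < 1) :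
    ((1 : ℝ≥0∞) - ENNReal.ofReal σ)⁻¹ = ENNReal.ofReal (1 - σ)⁻¹ := by
  rw [sub_ofReal h0, ENNReal.ofReal_inv_of_pos (by linarith)]

lemma geom_sq {σ : ℝ} (h0 : 0 ≤ σ) (h1 : σ < 1) :
    ∑' g : ℕ, ((g : ℝ≥0∞) + 1) * (ENNReal.ofReal σ) ^ g
      = (1 - ENNReal.ofReal σ)⁻¹ * (1 - ENNReal.ofReal σ)⁻¹ := by
  have hterm : ∀ g : ℕ, ((g : ℝ≥0∞) + 1) * (ENNReal.ofReal σ) ^ g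
      = ENNReal.ofReal ((g + 1 : ℝ) * σ ^ g) := by
    intro g
    rw [ENNReal.ofReal_mul (by positivity), ENNReal.ofReal_pow h0]
    congr 1
    rw [show ((g : ℝ) + 1) = ((g + 1 : ℕ) : ℝ) by push_cast; ring, ENNReal.ofReal_natCast]
    push_cast; ring
  have hn : ‖σ‖ < 1 := by rw [Real.norm_eq_abs, abs_of_nonneg h0]; exact h1
  have s1 : Summable (fun g : ℕ => (g + 1 : ℝ) * σ ^ g) := by
    have s1' : Summable (fun g : ℕ => (g : ℝ) * σ ^ g) := by
      simpa using summable_pow_mul_geometric_of_norm_lt_one 1 hn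
    have s2 : Summable (fun g : ℕ => σ ^ g) := summable_geometric_of_norm_lt_one hn
    simpa [add_mul] using s1'.add s2
  calc ∑' g : ℕ, ((g : ℝ≥0∞) + 1) * (ENNReal.ofReal σ) ^ g
      = ∑' g : ℕ, ENNReal.ofReal ((g + 1 : ℝ) * σ ^ g) := tsum_congr hterm
    _ = ENNReal.ofReal (∑' g : ℕ, (g + 1 : ℝ) * σ ^ g) :=
        (ENNReal.ofReal_tsum_of_nonneg (fun g => by positivity) s1).symm
    _ = ENNReal.ofReal ((1 - σ)⁻¹ * (1 - σ)⁻¹) := by rw [geom_real h0 h1]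
    _ = (1 - ENNReal.ofReal σ)⁻¹ * (1 - ENNReal.ofReal σ)⁻¹ := by
        have hpos : (0:ℝ) < 1 - σ := by linarith
        rw [ENNReal.ofReal_mul (by positivity), inv_ofReal h0 h1]

/-- generic convolution reindexing in `ℝ≥0∞` -/
lemma conv_gen (p' : ℕ → ℝ≥0∞) (σ c : ℝ≥0∞) (w : ℕ → ℝ≥0∞) :
    ∑' t : ℕ, w t * ∑ t' ∈ Finset.range t, p' t' * (σ ^ (t - 1 - t') * c)
      = ∑' t' : ℕ, p' t' * (c * ∑' g : ℕ, w (t' + 1 + g) * σ ^ g) := by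
  have h1 : ∀ t : ℕ, w t * ∑ t' ∈ Finset.range t, p' t' * (σ ^ (t - 1 - t') * c)
      = ∑' t' : ℕ, if t' < t then w t * (p' t' * (σ ^ (t - 1 - t') * c)) else 0 := by
    intro t
    rw [Finset.mul_sum]
    rw [tsum_eq_sum (s := Finset.range t)
      (fun b hb => if_neg (fun hc => hb (Finset.mem_range.2 hc)))]
    exact (Finset.sum_congr rfl fun b hb => if_pos (Finset.mem_range.1 hb)).symm
  calc ∑' t : ℕ, w t * ∑ t' ∈ Finset.range t, p' t' * (σ ^ (t - 1 - t') * c)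
      = ∑' (t : ℕ) (t' : ℕ), if t' < t then w t * (p' t' * (σ ^ (t - 1 - t') * c)) else 0 :=
        tsum_congr h1
    _ = ∑' (t' : ℕ) (t : ℕ), if t' < t then w t * (p' t' * (σ ^ (t - 1 - t') * c)) else 0 :=
        ENNReal.tsum_comm
    _ = ∑' t' : ℕ, p' t' * (c * ∑' g : ℕ, w (t' + 1 + g) * σ ^ g) := by
        apply tsum_congr
        intro t'
        have hinj : Function.Injective (fun g : ℕ => t' + 1 + g) :=
          fun a b h => Nat.add_left_cancel h
        rw [← hinj.tsum_eq (f := fun t =>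
            if t' < t then w t * (p' t' * (σ ^ (t - 1 - t') * c)) else 0) ?_]
        · rw [← ENNReal.tsum_mul_left, ← ENNReal.tsum_mul_left]
          apply tsum_congr
          intro g
          rw [if_pos (by omega)]
          have : t' + 1 + g - 1 - t' = g := by omega
          rw [this]; ring
        · intro t ht
          simp only [Function.mem_support, ne_eq] at ht
          by_contra hr
          apply ht
          rw [if_neg]
          intro hlt
          exact hr ⟨t - t' - 1, by show t' + 1 + (t - t' - 1) = t; omega⟩

end CCW3

namespace CCWP
open CCW CCW2 CCW3 MeasureTheory ProbabilityTheory
open scoped ENNReal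

variable {Ω : Type*} [MeasurableSpace Ω] {μ : Measure Ω}
variable {N : ℕ} {J : ℕ → Ω → Fin N}

lemma meas_tuple (hJ : ∀ t, Measurable (J t)) (S : Finset ℕ) :
    Measurable (fun x => fun s : {u // u ∈ S} => J s x) :=
  measurable_pi_lambda _ (fun s => hJ s)

lemma meas_preimage (hJ : ∀ t, Measurable (J t)) (S : Finset ℕ)
    (E : Set ({u // u ∈ S} → Fin N)) :
    MeasurableSet ((fun x => fun s : {u // u ∈ S} => J s x) ⁻¹' E) :=
  (meas_tuple hJ S) (E.to_countable.measurableSet)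

lemma nd_eq_card (f : ℕ → Fin N) (u : ℕ) :
    numDistinct N f u
      = (Finset.univ.image (fun s : {v // v ∈ Finset.range u} => f s)).card := by
  unfold numDistinct
  congr 1
  ext a
  simp only [Finset.mem_image, Finset.mem_range, Finset.mem_univ, true_and, Subtype.exists]
  constructor
  · rintro ⟨s, hs, rfl⟩; exact ⟨s, by simpa using hs, rfl⟩
  · rintro ⟨s, hs, rfl⟩; exact ⟨s, by simpa using hs, rfl⟩

lemma meas_nd (hJ : ∀ t, Measurable (J t)) (u m : ℕ) :
    MeasurableSet {x | numDistinct N (fun s => J s x) u = m} := by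
  have : {x | numDistinct N (fun s => J s x) u = m}
      = (fun x => fun s : {v // v ∈ Finset.range u} => J s x) ⁻¹'
        {w | (Finset.univ.image w).card = m} := by
    ext x
    simp only [Set.mem_setOf_eq, Set.mem_preimage]
    rw [nd_eq_card]
  rw [this]
  exact meas_preimage hJ _ _

lemma meas_hit (hJ : ∀ t, Measurable (J t)) (n : ℕ) :
    Measurable (fun x => hitTime N (fun s => J s x) n) := by
  apply measurable_to_countable'
  intro t
  have hset : (fun x => hitTime N (fun s => J s x) n) ⁻¹' {t}
      = (({x | numDistinct N (fun s => J s x) t = n}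
          ∩ ⋂ (s : ℕ) (_ : s < t), {x | numDistinct N (fun s' => J s' x) s = n}ᶜ)
        ∪ ⋃ (_ : t = 0), ⋂ (s : ℕ), {x | numDistinct N (fun s' => J s' x) s = n}ᶜ) := by
    ext x
    simp only [Set.mem_preimage, Set.mem_singleton_iff, Set.mem_union, Set.mem_inter_iff,
      Set.mem_setOf_eq, Set.mem_iInter, Set.mem_compl_iff, Set.mem_iUnion]
    constructor
    · intro h
      by_cases hne : ∃ s, numDistinct N (fun s' => J s' x) s = n
      · left
        constructor
        · rw [← h]; exact hitTime_nd _ hne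
        · intro s hs
          exact hitTime_min _ (h ▸ hs)
      · right
        push_neg at hne
        refine ⟨?_, hne⟩
        rw [← h, hitTime, Nat.sInf_eq_zero]
        right
        exact Set.eq_empty_iff_forall_notMem.2 hne
    · rintro (⟨h1, h2⟩ | ⟨rfl, h⟩)
      · refine le_antisymm (hitTime_le _ h1) ?_
        by_contra hlt
        push_neg at hlt
        exact h2 _ hlt (hitTime_nd _ ⟨t, h1⟩)
      · rw [hitTime, Nat.sInf_eq_zero]
        right
        exact Set.eq_empty_iff_forall_notMem.2 h
  rw [hset]
  apply MeasurableSet.union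
  · exact (meas_nd hJ t n).inter
      (MeasurableSet.iInter fun s => MeasurableSet.iInter fun _ => (meas_nd hJ s n).compl)
  · exact MeasurableSet.iUnion fun _ => MeasurableSet.iInter fun s => (meas_nd hJ s n).compl

/-- extension of a finite word to an infinite sequence -/
def ext (t : ℕ) (d : Fin N) (v : {u // u ∈ Finset.range t} → Fin N) : ℕ → Fin N :=
  fun s => if h : s ∈ Finset.range t then v ⟨s, h⟩ else d

/-- the event `Aev` -/
def Aev (J : ℕ → Ω → Fin N) (ii : ℕ → Fin N) (m t : ℕ) : Set Ω :=
  {x | (∀ k < m, sampleWOR N (fun s => J s x) k = ii k)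
    ∧ hitTime N (fun s => J s x) m = t}

lemma aev_eq_preimage (d : Fin N) (ii : ℕ → Fin N) {m : ℕ}
    (hinj : ∀ a < m, ∀ b < m, ii a = ii b → a = b) (t : ℕ) :
    Aev J ii m t
      = (fun x => fun s : {u // u ∈ Finset.range t} => J s x) ⁻¹'
        {v | (∀ k < m, sampleWOR N (ext t d v) k = ii k) ∧ hitTime N (ext t d v) m = t} := by
  rcases Nat.eq_zero_or_pos m with rfl | hm
  · ext x
    simp only [Aev, Set.mem_setOf_eq, Set.mem_preimage, Nat.not_lt_zero, false_implies,
      implies_true, true_and, hitTime_zero]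
  · ext x
    simp only [Aev, Set.mem_setOf_eq, Set.mem_preimage]
    constructor
    · rintro ⟨h1, h2⟩
      have hagree : ∀ s < t, (fun s' => J s' x) s
          = ext t d (fun s' : {u // u ∈ Finset.range t} => J s' x) s := by
        intro s hs
        simp only [ext, dif_pos (Finset.mem_range.2 hs)]
      exact cond_congr _ ii hm hagree h1 h2 (attain _ ii hinj hm h1)
    · rintro ⟨h1, h2⟩
      have hagree : ∀ s < t, ext t d (fun s' : {u // u ∈ Finset.range t} => J s' x) s
          = (fun s' => J s' x) s := by
        intro s hs
        simp only [ext, dif_pos (Finset.mem_range.2 hs)]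
      exact cond_congr _ ii hm hagree h1 h2 (attain _ ii hinj hm h1)

lemma meas_aev (hJ : ∀ t, Measurable (J t)) (d : Fin N) (ii : ℕ → Fin N) {m : ℕ}
    (hinj : ∀ a < m, ∀ b < m, ii a = ii b → a = b) (t : ℕ) :
    MeasurableSet (Aev J ii m t) := by
  rw [aev_eq_preimage d ii hinj t]
  exact meas_preimage hJ _ _

lemma disj_aev (ii : ℕ → Fin N) (m : ℕ) :
    Pairwise (Function.onFun Disjoint (fun t => Aev J ii m t)) := by
  intro t1 t2 hne
  simp only [Function.onFun]
  rw [Set.disjoint_left]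
  rintro x ⟨_, h1⟩ ⟨_, h2⟩
  exact hne (h1 ▸ h2 ▸ rfl)

end CCWP

namespace CCWP2
open CCW CCW2 CCW3 CCWP MeasureTheory ProbabilityTheory
open scoped ENNReal

variable {Ω : Type*} [MeasurableSpace Ω] {μ : Measure Ω}
variable {N : ℕ} {ω : Fin N → ℝ} {J : ℕ → Ω → Fin N}

/-- the "fresh run" event between two hit times -/
def Bset (J : ℕ → Ω → Fin N) (ii : ℕ → Fin N) (m t' t : ℕ) : Set Ω :=
  {x | (∀ s, t' ≤ s → s < t - 1 → J s x ∈ (Finset.range m).image ii)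
    ∧ J (t - 1) x = ii m}

lemma struct_set (ii : ℕ → Fin N) {n : ℕ}
    (hinj : ∀ a < n, ∀ b < n, ii a = ii b → a = b) (hn : 1 ≤ n) (t : ℕ) :
    Aev J ii n t
      = ⋃ t' ∈ Finset.range t, (Aev J ii (n - 1) t' ∩ Bset J ii (n - 1) t' t) := by
  ext x
  simp only [Aev, Bset, Set.mem_setOf_eq, Set.mem_iUnion, Finset.mem_range,
    Set.mem_inter_iff, exists_prop]
  rw [struct (fun s => J s x) ii hinj hn]

lemma bset_preimage (ii : ℕ → Fin N) (m : ℕ) {t' t : ℕ} (htt' : t' < t) :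
    Bset J ii m t' t
      = (fun x => fun s : {u // u ∈ Finset.Ico t' t} => J s x) ⁻¹'
        {v | (∀ s : {u // u ∈ Finset.Ico t' t}, (s : ℕ) < t - 1
                → v s ∈ (Finset.range m).image ii)
           ∧ ∀ s : {u // u ∈ Finset.Ico t' t}, (s : ℕ) = t - 1 → v s = ii m} := by
  ext x
  simp only [Bset, Set.mem_setOf_eq, Set.mem_preimage]
  constructor
  · rintro ⟨h1, h2⟩
    refine ⟨fun s hs => h1 s (Finset.mem_Ico.1 s.2).1 hs, fun s hs => ?_⟩
    rw [show ((s : ℕ)) = t - 1 from hs]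
    exact h2
  · rintro ⟨h1, h2⟩
    refine ⟨fun s hs1 hs2 => h1 ⟨s, Finset.mem_Ico.2 ⟨hs1, by omega⟩⟩ hs2, ?_⟩
    exact h2 ⟨t - 1, Finset.mem_Ico.2 ⟨by omega, by omega⟩⟩ rfl

lemma meas_J_in (hω : ∀ i, 0 < ω i) (hJ : ∀ t, Measurable (J t))
    (hlaw : ∀ t i, μ {x | J t x = i} = ENNReal.ofReal (ω i))
    (s : ℕ) (F : Finset (Fin N)) :
    μ {x | J s x ∈ F} = ENNReal.ofReal (∑ j ∈ F, ω j) := by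
  have h1 : {x | J s x ∈ F} = ⋃ j ∈ F, {x | J s x = j} := by
    ext x
    simp only [Set.mem_setOf_eq, Set.mem_iUnion, exists_prop]
    constructor
    · intro h; exact ⟨J s x, h, rfl⟩
    · rintro ⟨j, hj, h⟩; rw [h]; exact hj
  rw [h1, measure_biUnion_finset ?disj ?meas, ENNReal.ofReal_sum_of_nonneg
    (fun j _ => le_of_lt (hω j))]
  · exact Finset.sum_congr rfl fun j _ => hlaw s j
  case disj =>
    intro a _ b _ hab
    rw [Function.onFun, Set.disjoint_left]
    rintro x h1 h2
    exact hab ((h1 : J s x = a) ▸ (h2 : J s x = b) ▸ rfl)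
  case meas =>
    intro j _
    exact (hJ s) (measurableSet_singleton j)

lemma meas_bset (hω : ∀ i, 0 < ω i) (hJ : ∀ t, Measurable (J t))
    (hindep : iIndepFun J μ)
    (hlaw : ∀ t i, μ {x | J t x = i} = ENNReal.ofReal (ω i))
    (ii : ℕ → Fin N) {m : ℕ} (hinj : ∀ a < m, ∀ b < m, ii a = ii b → a = b)
    {t' t : ℕ} (htt' : t' < t) :
    μ (Bset J ii m t' t)
      = (ENNReal.ofReal (∑ u ∈ Finset.range m, ω (ii u))) ^ (t - 1 - t')
          * ENNReal.ofReal (ω (ii m)) := by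
  classical
  set F : Finset (Fin N) := (Finset.range m).image ii with hF
  have hE : Bset J ii m t' t
      = ⋂ s ∈ Finset.Ico t' t,
          (if s = t - 1 then {x | J s x = ii m} else {x | J s x ∈ F}) := by
    ext x
    simp only [Bset, Set.mem_setOf_eq, Set.mem_iInter]
    constructor
    · rintro ⟨h1, h2⟩ s hs
      rcases eq_or_ne s (t - 1) with rfl | hne
      · rw [if_pos rfl]; exact h2
      · rw [if_neg hne]
        have hs' := Finset.mem_Ico.1 hs
        exact h1 s hs'.1 (by omega)
    · intro h
      constructor
      · intro s hs1 hs2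
        have := h s (Finset.mem_Ico.2 ⟨hs1, by omega⟩)
        rwa [if_neg (by omega)] at this
      · have := h (t - 1) (Finset.mem_Ico.2 ⟨by omega, by omega⟩)
        rwa [if_pos rfl] at this
  rw [hE, hindep.meas_biInter ?hm]
  case hm =>
    intro s _
    rcases eq_or_ne s (t - 1) with rfl | hne
    · rw [if_pos rfl]
      exact ⟨{ii m}, trivial, rfl⟩
    · rw [if_neg hne]
      exact ⟨(↑F : Set (Fin N)), trivial, rfl⟩
  have ht : Finset.Ico t' t = Finset.Ico t' ((t - 1) + 1) := by
    rw [Nat.sub_add_cancel (by omega)]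
  rw [ht, Finset.prod_Ico_succ_top (by omega)]
  rw [if_pos rfl]
  have hrest : ∀ s ∈ Finset.Ico t' (t - 1),
      μ (if s = t - 1 then {x | J s x = ii m} else {x | J s x ∈ F})
        = ENNReal.ofReal (∑ u ∈ Finset.range m, ω (ii u)) := by
    intro s hs
    have hs' := Finset.mem_Ico.1 hs
    rw [if_neg (by omega), meas_J_in hω hJ hlaw s F]
    congr 1
    exact Finset.sum_image fun a ha b hb h =>
      hinj a (Finset.mem_range.1 ha) b (Finset.mem_range.1 hb) h
  rw [Finset.prod_congr rfl hrest, Finset.prod_const, Nat.card_Ico, hlaw]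

lemma indep_pair (hJ : ∀ t, Measurable (J t))
    (hindep : iIndepFun J μ)
    {t' t : ℕ}
    (S1 : Set ({u // u ∈ Finset.range t'} → Fin N))
    (S2 : Set ({u // u ∈ Finset.Ico t' t} → Fin N)) :
    μ ((fun x => fun s : {u // u ∈ Finset.range t'} => J s x) ⁻¹' S1
        ∩ (fun x => fun s : {u // u ∈ Finset.Ico t' t} => J s x) ⁻¹' S2)
      = μ ((fun x => fun s : {u // u ∈ Finset.range t'} => J s x) ⁻¹' S1)
          * μ ((fun x => fun s : {u // u ∈ Finset.Ico t' t} => J s x) ⁻¹' S2) := by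
  have hdisj : Disjoint (Finset.range t') (Finset.Ico t' t) := by
    rw [Finset.disjoint_left]
    intro a ha hb
    have := Finset.mem_range.1 ha
    have := (Finset.mem_Ico.1 hb).1
    omega
  have h := ProbabilityTheory.iIndepFun.indepFun_finset (Finset.range t')
    (Finset.Ico t' t) hdisj hindep hJ
  exact h.measure_inter_preimage_eq_mul S1 S2
    (S1.to_countable.measurableSet) (S2.to_countable.measurableSet)

/-- the measure recursion -/
lemma p_rec (hN : 0 < N) (hω : ∀ i, 0 < ω i) (hJ : ∀ t, Measurable (J t))
    (hindep : iIndepFun J μ)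
    (hlaw : ∀ t i, μ {x | J t x = i} = ENNReal.ofReal (ω i))
    (ii : ℕ → Fin N) {n : ℕ}
    (hinj : ∀ a < n, ∀ b < n, ii a = ii b → a = b) (hn : 1 ≤ n) (t : ℕ) :
    μ (Aev J ii n t)
      = ∑ t' ∈ Finset.range t, μ (Aev J ii (n - 1) t')
          * ((ENNReal.ofReal (∑ u ∈ Finset.range (n - 1), ω (ii u))) ^ (t - 1 - t')
              * ENNReal.ofReal (ω (ii (n - 1)))) := by
  have hinj' : ∀ a < n - 1, ∀ b < n - 1, ii a = ii b → a = b :=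
    fun a ha b hb h => hinj a (by omega) b (by omega) h
  have d : Fin N := ⟨0, hN⟩
  rw [struct_set ii hinj hn t]
  rw [measure_biUnion_finset ?disj ?meas]
  · apply Finset.sum_congr rfl
    intro t' ht'
    have htt' : t' < t := Finset.mem_range.1 ht'
    rw [aev_eq_preimage d ii hinj' t', bset_preimage ii (n - 1) htt',
      indep_pair hJ hindep, ← aev_eq_preimage d ii hinj' t',
      ← bset_preimage ii (n - 1) htt', meas_bset hω hJ hindep hlaw ii hinj' htt']
  case disj =>
    intro t1 h1 t2 h2 hne
    apply Set.disjoint_left.2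
    rintro x ⟨⟨_, ha⟩, _⟩ ⟨⟨_, hb⟩, _⟩
    exact hne (ha ▸ hb ▸ rfl)
  case meas =>
    intro t' _
    refine MeasurableSet.inter (meas_aev hJ d ii hinj' t') ?_
    rw [bset_preimage ii (n - 1) (Finset.mem_range.1 ‹_›)]
    exact meas_preimage hJ _ _

end CCWP2

namespace CCWP3
open CCW CCW2 CCW3 CCWP CCWP2 MeasureTheory ProbabilityTheory
open scoped ENNReal

variable {Ω : Type*} [MeasurableSpace Ω] {μ : Measure Ω}
variable {N : ℕ} {ω : Fin N → ℝ} {J : ℕ → Ω → Fin N}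

def Apat (J : ℕ → Ω → Fin N) (ii : ℕ → Fin N) (n : ℕ) : Set Ω :=
  {x | ∀ k < n, sampleWOR N (fun s => J s x) k = ii k}

lemma apat_union (ii : ℕ → Fin N) (n : ℕ) :
    Apat J ii n = ⋃ t, Aev J ii n t := by
  ext x
  simp only [Apat, Aev, Set.mem_iUnion, Set.mem_setOf_eq]
  constructor
  · intro h; exact ⟨hitTime N (fun s => J s x) n, h, rfl⟩
  · rintro ⟨t, h, _⟩; exact h

lemma apat_measure (hJ : ∀ t, Measurable (J t)) (d : Fin N) (ii : ℕ → Fin N) {n : ℕ}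
    (hinj : ∀ a < n, ∀ b < n, ii a = ii b → a = b) :
    μ (Apat J ii n) = ∑' t : ℕ, μ (Aev J ii n t) := by
  rw [apat_union, measure_iUnion (disj_aev ii n) (fun t => meas_aev hJ d ii hinj t)]

lemma apat_lintegral (hJ : ∀ t, Measurable (J t)) (d : Fin N) (ii : ℕ → Fin N) {n : ℕ}
    (hinj : ∀ a < n, ∀ b < n, ii a = ii b → a = b) :
    ∫⁻ x in Apat J ii n, ((hitTime N (fun s => J s x) n : ℕ) : ℝ≥0∞) ∂μ
      = ∑' t : ℕ, (t : ℝ≥0∞) * μ (Aev J ii n t) := by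
  rw [apat_union, lintegral_iUnion (fun t => meas_aev hJ d ii hinj t) (disj_aev ii n)]
  apply tsum_congr
  intro t
  rw [setLIntegral_congr_fun (f := fun x => ((hitTime N (fun s => J s x) n : ℕ) : ℝ≥0∞))
    (g := fun _ => (t : ℝ≥0∞)) (meas_aev hJ d ii hinj t)
    (fun x hx => by show ((hitTime N (fun s => J s x) n : ℕ) : ℝ≥0∞) = (t : ℝ≥0∞); rw [hx.2]), setLIntegral_const]

lemma sigma_lt_one (hω : ∀ i, 0 < ω i) (hsum : ∑ i, ω i = 1) (ii : ℕ → Fin N) {k : ℕ}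
    (hinj : ∀ a < k, ∀ b < k, ii a = ii b → a = b) (hk : k < N) :
    ∑ u ∈ Finset.range k, ω (ii u) < 1 := by
  have h1 : ∑ j ∈ (Finset.range k).image ii, ω j = ∑ u ∈ Finset.range k, ω (ii u) :=
    Finset.sum_image fun a ha b hb h =>
      hinj a (Finset.mem_range.1 ha) b (Finset.mem_range.1 hb) h
  have hcard : ((Finset.range k).image ii).card < (Finset.univ : Finset (Fin N)).card := by
    calc ((Finset.range k).image ii).card ≤ (Finset.range k).card := Finset.card_image_le
      _ = k := Finset.card_range k
      _ < N := hk
      _ = (Finset.univ : Finset (Fin N)).card := by rw [Finset.card_univ, Fintype.card_fin]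
  obtain ⟨j, _, hjn⟩ := Finset.not_subset.1
    (fun hsub => absurd (Finset.card_le_card hsub) (not_le.2 hcard))
  rw [← h1, ← hsum]
  exact Finset.sum_lt_sum_of_subset (Finset.subset_univ _) (Finset.mem_univ j) hjn
    (hω j) (fun j' _ _ => le_of_lt (hω j'))

lemma main_aux [IsProbabilityMeasure μ] (hN : 0 < N) (hω : ∀ i, 0 < ω i)
    (hsum : ∑ i, ω i = 1) (hJ : ∀ t, Measurable (J t))
    (hindep : iIndepFun J μ)
    (hlaw : ∀ t i, μ {x | J t x = i} = ENNReal.ofReal (ω i)) :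
    ∀ n, n ≤ N → ∀ ii : ℕ → Fin N, (∀ a < n, ∀ b < n, ii a = ii b → a = b) →
    ∫⁻ x in Apat J ii n, ((hitTime N (fun s => J s x) n : ℕ) : ℝ≥0∞) ∂μ
      = (∑ k ∈ Finset.range n,
          (1 - ENNReal.ofReal (∑ u ∈ Finset.range k, ω (ii u)))⁻¹) * μ (Apat J ii n) := by
  intro n
  induction n with
  | zero =>
    intro _ ii _
    have : ∀ x : Ω, ((hitTime N (fun s => J s x) 0 : ℕ) : ℝ≥0∞) = 0 := by
      intro x; rw [hitTime_zero]; simp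
    rw [lintegral_congr this]
    simp
  | succ m ih =>
    intro hmN ii hinj
    have d : Fin N := ⟨0, hN⟩
    have hinj' : ∀ a < m, ∀ b < m, ii a = ii b → a = b :=
      fun a ha b hb h => hinj a (by omega) b (by omega) h
    set σR : ℝ := ∑ u ∈ Finset.range m, ω (ii u) with hσR
    have hσ0 : 0 ≤ σR := Finset.sum_nonneg fun u _ => le_of_lt (hω _)
    have hσ1 : σR < 1 := sigma_lt_one hω hsum ii hinj' (by omega)
    set σ : ℝ≥0∞ := ENNReal.ofReal σR with hσ
    set c : ℝ≥0∞ := ENNReal.ofReal (ω (ii m)) with hc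
    set K : ℝ≥0∞ := (1 - σ)⁻¹ with hK
    -- the basic recursion, with (m+1) - 1 rewritten to m
    have hrec : ∀ t, μ (Aev J ii (m + 1) t)
        = ∑ t' ∈ Finset.range t, μ (Aev J ii m t') * (σ ^ (t - 1 - t') * c) := by
      intro t
      have := p_rec hN hω hJ hindep hlaw ii hinj (by omega) t
      simpa using this
    have hgeom : ∑' g : ℕ, σ ^ g = K := ENNReal.tsum_geometric σ
    -- P recursion
    have hP : μ (Apat J ii (m + 1)) = (c * K) * μ (Apat J ii m) := by
      rw [apat_measure hJ d ii hinj, apat_measure hJ d ii hinj']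
      calc ∑' t : ℕ, μ (Aev J ii (m + 1) t)
          = ∑' t : ℕ, (fun _ : ℕ => (1 : ℝ≥0∞)) t
              * ∑ t' ∈ Finset.range t, μ (Aev J ii m t') * (σ ^ (t - 1 - t') * c) := by
            apply tsum_congr; intro t; rw [one_mul, hrec t]
        _ = ∑' t' : ℕ, μ (Aev J ii m t') * (c * ∑' g : ℕ, (1 : ℝ≥0∞) * σ ^ g) :=
            conv_gen _ σ c _
        _ = ∑' t' : ℕ, μ (Aev J ii m t') * (c * K) := by
            apply tsum_congr; intro t'
            simp only [one_mul]
            rw [hgeom]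
        _ = (c * K) * ∑' t' : ℕ, μ (Aev J ii m t') := by
            rw [ENNReal.tsum_mul_right]; ring
    -- L recursion
    have hL : ∫⁻ x in Apat J ii (m + 1), ((hitTime N (fun s => J s x) (m + 1) : ℕ) : ℝ≥0∞) ∂μ
        = (c * K) * (∫⁻ x in Apat J ii m, ((hitTime N (fun s => J s x) m : ℕ) : ℝ≥0∞) ∂μ)
          + (c * K * K) * μ (Apat J ii m) := by
      rw [apat_lintegral hJ d ii hinj, apat_lintegral hJ d ii hinj',
        apat_measure hJ d ii hinj']
      calc ∑' t : ℕ, (t : ℝ≥0∞) * μ (Aev J ii (m + 1) t)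
          = ∑' t : ℕ, (t : ℝ≥0∞)
              * ∑ t' ∈ Finset.range t, μ (Aev J ii m t') * (σ ^ (t - 1 - t') * c) := by
            apply tsum_congr; intro t; rw [hrec t]
        _ = ∑' t' : ℕ, μ (Aev J ii m t')
              * (c * ∑' g : ℕ, ((t' + 1 + g : ℕ) : ℝ≥0∞) * σ ^ g) :=
            conv_gen _ σ c _
        _ = ∑' t' : ℕ, ((c * K) * ((t' : ℝ≥0∞) * μ (Aev J ii m t'))
              + (c * K * K) * μ (Aev J ii m t')) := by
            apply tsum_congr; intro t'
            have hinner : ∑' g : ℕ, ((t' + 1 + g : ℕ) : ℝ≥0∞) * σ ^ g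
                = (t' : ℝ≥0∞) * K + K * K := by
              have hsplit : ∀ g : ℕ, ((t' + 1 + g : ℕ) : ℝ≥0∞) * σ ^ g
                  = (t' : ℝ≥0∞) * σ ^ g + ((g : ℝ≥0∞) + 1) * σ ^ g := by
                intro g; push_cast; ring
              rw [tsum_congr hsplit, ENNReal.tsum_add, ENNReal.tsum_mul_left, hgeom,
                geom_sq hσ0 hσ1]
            rw [hinner]; ring
        _ = (c * K) * (∑' t' : ℕ, (t' : ℝ≥0∞) * μ (Aev J ii m t'))
              + (c * K * K) * ∑' t' : ℕ, μ (Aev J ii m t') := by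
            rw [ENNReal.tsum_add, ENNReal.tsum_mul_left, ENNReal.tsum_mul_left]
    rw [hL, ih (by omega) ii hinj', hP, Finset.sum_range_succ]
    ring

end CCWP3


open CCW CCW2 CCW3 CCWP CCWP2 CCWP3

/-- `E[T_n | I₁,…,Iₙ] = ∑_{k=1}^n 1/(1-σ_{k-1})`, stated as an identity of integrals
over each atom `{(I₁,…,Iₙ) = (i₁,…,iₙ)}` of the conditioning σ-algebra. -/
theorem condExp_hitTime
    {Ω : Type*} [MeasurableSpace Ω] (μ : Measure Ω) [IsProbabilityMeasure μ]
    (N n : ℕ) (hn : n ≤ N) (ω : Fin N → ℝ)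
    (hω : ∀ i, 0 < ω i) (hsum : ∑ i, ω i = 1)
    (J : ℕ → Ω → Fin N) (hJmeas : ∀ t, Measurable (J t))
    (hindep : iIndepFun J μ)
    (hlaw : ∀ t i, μ {x | J t x = i} = ENNReal.ofReal (ω i))
    (i : Fin n → Fin N) (hi : Function.Injective i) :
    ∫ x in {x | ∀ k : Fin n, sampleWOR N (fun s => J s x) (k : ℕ) = i k},
        (hitTime N (fun s => J s x) n : ℝ) ∂μ
      = (∑ k : Fin n, 1 / (1 - ∑ m ∈ Finset.Iio k, ω (i m))) *
          (μ {x | ∀ k : Fin n, sampleWOR N (fun s => J s x) (k : ℕ) = i k}).toReal := by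

  rcases Nat.eq_zero_or_pos n with rfl | hn1
  · simp [CCW.hitTime_zero]
  · have hN : 0 < N := lt_of_lt_of_le hn1 hn
    set ii : ℕ → Fin N := fun k => if h : k < n then i ⟨k, h⟩ else i ⟨0, hn1⟩ with hii
    have hiik : ∀ (k : ℕ) (h : k < n), ii k = i ⟨k, h⟩ := by
      intro k h; rw [hii]; simp only [dif_pos h]
    have hinj : ∀ a < n, ∀ b < n, ii a = ii b → a = b := by
      intro a ha b hb h
      rw [hiik a ha, hiik b hb] at h
      have := hi h
      exact Fin.mk.inj_iff.1 this
    have hset : {x : Ω | ∀ k : Fin n, sampleWOR N (fun s => J s x) (k : ℕ) = i k}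
        = Apat J ii n := by
      ext x
      simp only [Set.mem_setOf_eq, Apat]
      constructor
      · intro h k hk
        rw [hiik k hk]
        exact h ⟨k, hk⟩
      · intro h k
        have := h k.val k.isLt
        rwa [hiik k.val k.isLt, Fin.eta] at this
    have hm := main_aux hN hω hsum hJmeas hindep hlaw n hn ii hinj
    have hmeas : Measurable (fun x => ((hitTime N (fun s => J s x) n : ℕ) : ℝ)) :=
      (measurable_of_countable (fun k : ℕ => (k : ℝ))).comp (meas_hit hJmeas n)
    rw [hset, MeasureTheory.integral_eq_lintegral_of_nonneg_ae
      (ae_of_all _ fun x => Nat.cast_nonneg _) hmeas.aestronglyMeasurable]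
    have hconv : ∫⁻ x in Apat J ii n, ENNReal.ofReal ((hitTime N (fun s => J s x) n : ℕ) : ℝ) ∂μ
        = ∫⁻ x in Apat J ii n, ((hitTime N (fun s => J s x) n : ℕ) : ℝ≥0∞) ∂μ :=
      lintegral_congr fun x => ENNReal.ofReal_natCast _
    rw [hconv, hm, ENNReal.toReal_mul]
    congr 1
    have hsig : ∀ k, k < n → 0 ≤ (∑ u ∈ Finset.range k, ω (ii u))
        ∧ (∑ u ∈ Finset.range k, ω (ii u)) < 1 := by
      intro k hk
      refine ⟨Finset.sum_nonneg fun u _ => le_of_lt (hω _), ?_⟩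
      exact sigma_lt_one hω hsum ii
        (fun a ha b hb h => hinj a (by omega) b (by omega) h) (by omega)
    rw [ENNReal.toReal_sum (fun k hk => ?fin)]
    case fin =>
      have h := hsig k (Finset.mem_range.1 hk)
      rw [inv_ofReal h.1 h.2]
      exact ENNReal.ofReal_ne_top
    have hterm : ∀ k ∈ Finset.range n,
        ((1 - ENNReal.ofReal (∑ u ∈ Finset.range k, ω (ii u)))⁻¹).toReal
          = 1 / (1 - ∑ u ∈ Finset.range k, ω (ii u)) := by
      intro k hk
      have h := hsig k (Finset.mem_range.1 hk)
      rw [inv_ofReal h.1 h.2, ENNReal.toReal_ofReal (by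
        have : (0:ℝ) < 1 - ∑ u ∈ Finset.range k, ω (ii u) := by linarith [h.2]
        positivity), one_div]
    rw [Finset.sum_congr rfl hterm]
    rw [← Fin.sum_univ_eq_sum_range (fun k => 1 / (1 - ∑ u ∈ Finset.range k, ω (ii u))) n]
    apply Finset.sum_congr rfl
    intro k _
    congr 2
    symm
    refine Finset.sum_bij' (fun (m : Fin n) (_ : m ∈ Finset.Iio k) => (m : ℕ))
      (fun (u : ℕ) (hu : u ∈ Finset.range (k : ℕ)) =>
        (⟨u, lt_trans (Finset.mem_range.1 hu) k.isLt⟩ : Fin n)) ?_ ?_ ?_ ?_ ?_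
    · intro a ha
      have h1 : a < k := Finset.mem_Iio.1 ha
      exact Finset.mem_range.2 (Fin.lt_def.1 h1)
    · intro a ha
      have h1 : a < (k : ℕ) := Finset.mem_range.1 ha
      exact Finset.mem_Iio.2 (Fin.lt_def.2 h1)
    · intro a ha
      simp
    · intro a ha
      rfl
    · intro a ha
      rw [hiik a.val a.isLt, Fin.eta]
end

section
/- Let (i₁,...,iₙ) be distinct indices with weights ω(i) > 0, and for a permutation π of {1,...,n} define p(π) = ∏_{m=1}^{n} ω(i_{π(m)}) / (1 - ω(i_{π(1)}) - ... - ω(i_{π(m-1)})). Fix k ≠ ℓ with ω(i_k) ≥ ω(i_ℓ). For each permutation π with π(1) = k, let π* be the permutation obtained from π by swapping the positions of k and ℓ (so π*(1) = ℓ, π*(π^{-1}(ℓ)) = k, and π*(j)=π(j) elsewhere). Then p(π) ≥ p(π*). -/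
open scoped BigOperators

/-- The swap comparison for successive-sampling probabilities of orderings:
if `ω(i k) ≥ ω(i ℓ)` and `π(1) = k`, then `p(π) ≥ p(π*)`, where `π*` swaps the
positions of `k` and `ℓ` in `π`. -/
theorem successive_sampling_swap_ineq
    (N n : ℕ) (ω : Fin N → ℝ) (hω : ∀ i, 0 < ω i)
    (i : Fin n → Fin N) (hi : Function.Injective i)
    (hpartial : ∑ m, ω (i m) < 1)
    (k ℓ : Fin n) (hkl : k ≠ ℓ) (hωkl : ω (i k) ≥ ω (i ℓ))
    (π : Equiv.Perm (Fin n)) (hn : 0 < n) (hπ : π ⟨0, hn⟩ = k) :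
    (∏ m, ω (i (π m)) / (1 - ∑ m' ∈ Finset.Iio m, ω (i (π m'))))
      ≥ ∏ m, ω (i ((Equiv.swap k ℓ * π) m)) /
          (1 - ∑ m' ∈ Finset.Iio m, ω (i ((Equiv.swap k ℓ * π) m'))) := by
  set z : Fin n := ⟨0, hn⟩ with hz
  set σ : Equiv.Perm (Fin n) := Equiv.swap k ℓ * π with hσ
  set f : Fin n → ℝ := fun m => ω (i (π m)) with hf
  set g : Fin n → ℝ := fun m => ω (i (σ m)) with hg
  set t : Fin n := π.symm ℓ with ht
  have hπt : π t = ℓ := π.apply_symm_apply ℓ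
  have htz : t ≠ z := by
    intro h; apply hkl; rw [← hπ, ← hπt, h]
  have hfz : f z = ω (i k) := by simp [hf, hπ]
  have hgz : g z = ω (i ℓ) := by simp [hg, hσ, hπ]
  have hft : f t = ω (i ℓ) := by simp [hf, hπt]
  have hgt : g t = ω (i k) := by simp [hg, hσ, hπt, Equiv.swap_apply_right]
  have hfg : ∀ m, m ≠ z → m ≠ t → g m = f m := by
    intro m hmz hmt
    have h1 : π m ≠ k := by rw [← hπ]; exact fun h => hmz (π.injective h)
    have h2 : π m ≠ ℓ := by rw [← hπt]; exact fun h => hmt (π.injective h)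
    simp [hg, hf, hσ, Equiv.swap_apply_of_ne_of_ne h1 h2]
  -- key: partial sums of g are at most partial sums of f
  have key : ∀ m : Fin n, ∑ m' ∈ Finset.Iio m, g m' ≤ ∑ m' ∈ Finset.Iio m, f m' := by
    intro m
    rw [← sub_nonneg, ← Finset.sum_sub_distrib]
    by_cases htm : t ∈ Finset.Iio m
    · have hzt : z < t := lt_of_le_of_ne (show z ≤ t by simp [hz, Fin.le_def]) (Ne.symm htz)
      have hzm : z ∈ Finset.Iio m := Finset.mem_Iio.mpr (lt_trans hzt (Finset.mem_Iio.mp htm))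
      have hsub : ({z, t} : Finset (Fin n)) ⊆ Finset.Iio m := by
        intro x hx
        rcases Finset.mem_insert.mp hx with h | h
        · rwa [h]
        · rw [Finset.mem_singleton.mp h]; exact htm
      rw [← Finset.sum_subset hsub]
      · rw [Finset.sum_pair (Ne.symm htz)]
        simp [hfz, hgz, hft, hgt]
      · intro x _ hx
        have hx1 : x ≠ z := fun h => hx (by rw [h]; simp)
        have hx2 : x ≠ t := fun h => hx (by rw [h]; simp)
        rw [hfg x hx1 hx2, sub_self]
    · apply Finset.sum_nonneg
      intro x hx
      have hx2 : x ≠ t := fun h => htm (h ▸ hx)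
      by_cases hx1 : x = z
      · rw [hx1, hfz, hgz, sub_nonneg]; exact hωkl
      · rw [hfg x hx1 hx2, sub_self]
  have hsumf : ∀ m : Fin n, ∑ m' ∈ Finset.Iio m, f m' < 1 := by
    intro m
    calc ∑ m' ∈ Finset.Iio m, f m' ≤ ∑ m', f m' :=
          Finset.sum_le_sum_of_subset_of_nonneg (Finset.subset_univ _)
            (fun x _ _ => le_of_lt (hω _))
      _ = ∑ m', ω (i m') := Equiv.sum_comp π (fun m' => ω (i m'))
      _ < 1 := hpartial
  have hdF : ∀ m : Fin n, 0 < 1 - ∑ m' ∈ Finset.Iio m, f m' := by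
    intro m; linarith [hsumf m]
  have hdG : ∀ m : Fin n, 0 < 1 - ∑ m' ∈ Finset.Iio m, g m' := by
    intro m; linarith [hsumf m, key m]
  have hprodfg : ∏ m, g m = ∏ m, f m := by
    rw [hf, hg]
    rw [Equiv.prod_comp σ (fun m' => ω (i m')), Equiv.prod_comp π (fun m' => ω (i m'))]
  rw [ge_iff_le, Finset.prod_div_distrib, Finset.prod_div_distrib]
  show (∏ m, g m) / _ ≤ (∏ m, f m) / _
  rw [hprodfg]
  have hfpos : 0 < ∏ m, f m := Finset.prod_pos (fun m _ => hω _)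
  have hDF : 0 < ∏ m, (1 - ∑ m' ∈ Finset.Iio m, f m') :=
    Finset.prod_pos (fun m _ => hdF m)
  have hDle : ∏ m, (1 - ∑ m' ∈ Finset.Iio m, f m') ≤
      ∏ m, (1 - ∑ m' ∈ Finset.Iio m, g m') := by
    apply Finset.prod_le_prod (fun m _ => le_of_lt (hdF m))
    intro m _
    linarith [key m]
  exact div_le_div_of_nonneg_left hfpos.le hDF hDle
end

section
/- Let X be a random variable such that for all λ > 0, λE[X e^{λX}] - E[e^{λX}] log E[e^{λX}] ≤ (λ²v/2) E[e^{λX}] for some constant v > 0. Then for all λ > 0, log E[e^{λ(X - E[X])}] ≤ λ²v/2, and consequently for all t > 0, P(X - E[X] > t) ≤ exp(-t²/(2v)). -/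
open MeasureTheory

/-- Herbst's argument: an entropy inequality for the moment generating function implies
a sub-Gaussian bound on the log-Laplace transform and a Gaussian upper-tail bound. -/
theorem herbst_argument
    {Ω : Type*} [MeasurableSpace Ω] (μ : Measure Ω) [IsProbabilityMeasure μ]
    (X : Ω → ℝ) (hX : Measurable X) (C : ℝ) (hC : ∀ x, |X x| ≤ C)
    (v : ℝ) (hv : 0 < v)
    (hent : ∀ l : ℝ, 0 < l →
      l * ∫ x, X x * Real.exp (l * X x) ∂μ
        - (∫ x, Real.exp (l * X x) ∂μ) * Real.log (∫ x, Real.exp (l * X x) ∂μ)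
      ≤ l ^ 2 * v / 2 * ∫ x, Real.exp (l * X x) ∂μ) :
    (∀ l : ℝ, 0 < l →
        Real.log (∫ x, Real.exp (l * (X x - ∫ y, X y ∂μ)) ∂μ) ≤ l ^ 2 * v / 2) ∧
    (∀ t : ℝ, 0 < t →
        (μ {x | X x - ∫ y, X y ∂μ > t}).toReal ≤ Real.exp (-t ^ 2 / (2 * v))) := by
  have hne : Nonempty Ω := MeasureTheory.Measure.nonempty_of_neZero μ
  have hC0 : 0 ≤ C := le_trans (abs_nonneg _) (hC (Classical.arbitrary Ω))
  -- bounded measurable functions are integrable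
  have hbdd : ∀ (f : Ω → ℝ) (B : ℝ), Measurable f → (∀ x, ‖f x‖ ≤ B) → Integrable f μ :=
    fun f B hf hB => ⟨hf.aestronglyMeasurable, HasFiniteIntegral.of_bounded (ae_of_all μ hB)⟩
  set m : ℝ := ∫ y, X y ∂μ with hm
  set F : ℝ → ℝ := fun l => ∫ x, Real.exp (l * X x) ∂μ with hF
  set F' : ℝ → ℝ := fun l => ∫ x, X x * Real.exp (l * X x) ∂μ with hF'
  -- integrability
  have hexp_le : ∀ (l : ℝ) (x : Ω), Real.exp (l * X x) ≤ Real.exp (|l| * C) := by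
    intro l x
    apply Real.exp_le_exp.2
    calc l * X x ≤ |l * X x| := le_abs_self _
      _ = |l| * |X x| := abs_mul _ _
      _ ≤ |l| * C := mul_le_mul_of_nonneg_left (hC x) (abs_nonneg l)
  have hFint : ∀ l : ℝ, Integrable (fun x => Real.exp (l * X x)) μ := by
    intro l
    refine hbdd _ (Real.exp (|l| * C)) ((hX.const_mul l).exp) fun x => ?_
    rw [Real.norm_eq_abs, abs_of_pos (Real.exp_pos _)]
    exact hexp_le l x
  have hF'int : ∀ l : ℝ, Integrable (fun x => X x * Real.exp (l * X x)) μ := by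
    intro l
    refine hbdd _ (C * Real.exp (|l| * C)) (hX.mul ((hX.const_mul l).exp)) fun x => ?_
    rw [Real.norm_eq_abs, abs_mul, abs_of_pos (Real.exp_pos _)]
    exact mul_le_mul (hC x) (hexp_le l x) (Real.exp_pos _).le hC0
  have hXint : Integrable X μ := hbdd X C hX fun x => hC x
  -- positivity of F
  have hFpos : ∀ l : ℝ, 0 < F l := by
    intro l
    have : Real.exp (-(|l| * C)) = ∫ _ : Ω, Real.exp (-(|l| * C)) ∂μ := by simp
    calc (0 : ℝ) < Real.exp (-(|l| * C)) := Real.exp_pos _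
      _ = ∫ _ : Ω, Real.exp (-(|l| * C)) ∂μ := this
      _ ≤ F l := by
          refine integral_mono (integrable_const _) (hFint l) fun x => ?_
          apply Real.exp_le_exp.2
          calc -(|l| * C) = -(|l| * C) := rfl
            _ ≤ -|l * X x| := by
                rw [neg_le_neg_iff, abs_mul]
                exact mul_le_mul_of_nonneg_left (hC x) (abs_nonneg l)
            _ ≤ l * X x := neg_abs_le _
  -- derivative of F
  have hFderiv : ∀ l : ℝ, HasDerivAt F (F' l) l := by
    intro l₀
    have := hasDerivAt_integral_of_dominated_loc_of_deriv_le (μ := μ)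
      (F := fun l x => Real.exp (l * X x)) (F' := fun l x => X x * Real.exp (l * X x))
      (x₀ := l₀) (s := Metric.ball l₀ 1) (bound := fun _ => C * Real.exp ((|l₀| + 1) * C))
      (Metric.ball_mem_nhds l₀ one_pos)
      (Filter.Eventually.of_forall fun l => ((hX.const_mul l).exp).aestronglyMeasurable)
      (hFint l₀) ((hF'int l₀).aestronglyMeasurable)
      (ae_of_all μ fun a => fun x hx => ?_)
      (integrable_const _)
      (ae_of_all μ fun a => fun x _ => ?_)
    · exact this.2
    · -- bound
      rw [Real.norm_eq_abs, abs_mul, abs_of_pos (Real.exp_pos _)]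
      have hxb : |x| ≤ |l₀| + 1 := by
        have := Metric.mem_ball.1 hx
        rw [Real.dist_eq] at this
        calc |x| = |l₀ + (x - l₀)| := by ring_nf
          _ ≤ |l₀| + |x - l₀| := abs_add_le _ _
          _ ≤ |l₀| + 1 := by linarith
      refine mul_le_mul (hC a) (Real.exp_le_exp.2 ?_) (Real.exp_pos _).le hC0
      calc x * X a ≤ |x * X a| := le_abs_self _
        _ = |x| * |X a| := abs_mul _ _
        _ ≤ (|l₀| + 1) * C := by
            exact mul_le_mul hxb (hC a) (abs_nonneg _) (by positivity)
    · -- pointwise derivative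
      simpa [mul_comm] using (hasDerivAt_mul_const (X a)).exp
  -- F 0 = 1, F' 0 = m
  have hF0 : F 0 = 1 := by simp [hF]
  have hF'0 : F' 0 = m := by simp [hF', hm]
  -- g = log F
  set g : ℝ → ℝ := fun l => Real.log (F l) with hg
  have hgderiv : ∀ l : ℝ, HasDerivAt g (F' l / F l) l :=
    fun l => (hFderiv l).log (hFpos l).ne'
  have hg0 : g 0 = 0 := by simp [hg, hF0]
  -- key derivative inequality from the entropy hypothesis
  have hkey : ∀ l : ℝ, 0 < l → l * (F' l / F l) - g l ≤ l ^ 2 * v / 2 := by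
    intro l hl
    have h : l * F' l - F l * Real.log (F l) ≤ l ^ 2 * v / 2 * F l := hent l hl
    have heq : l * (F' l / F l) - g l = (l * F' l - F l * Real.log (F l)) / F l := by
      have h0 : F l ≠ 0 := (hFpos l).ne'
      rw [hg]
      field_simp
      try ring
    rw [heq, div_le_iff₀ (hFpos l)]
    exact h
  -- ψ = v/2 * l - g l / l is monotone on (0, ∞)
  set ψ : ℝ → ℝ := fun l => v / 2 * l - g l / l with hψ
  have hψderiv : ∀ l : ℝ, 0 < l →
      HasDerivAt ψ (v / 2 - ((F' l / F l) * l - g l * 1) / l ^ 2) l := by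
    intro l hl
    exact (hasDerivAt_const l (v / 2)).mul (hasDerivAt_id l) |>.sub
      (((hgderiv l).div (hasDerivAt_id l) hl.ne')) |>.congr_deriv (by simp only [id_eq]; ring)
  have hψmono : MonotoneOn ψ (Set.Ioi 0) := by
    apply monotoneOn_of_deriv_nonneg (convex_Ioi 0)
    · intro x hx
      exact ((hψderiv x hx).differentiableAt).continuousAt.continuousWithinAt
    · rw [interior_Ioi]
      intro x hx
      exact ((hψderiv x hx).differentiableAt).differentiableWithinAt
    · rw [interior_Ioi]
      intro x hx
      rw [(hψderiv x hx).deriv]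
      have hx' : (0 : ℝ) < x := hx
      have := hkey x hx'
      rw [sub_nonneg, div_le_iff₀ (by positivity : (0:ℝ) < x ^ 2)]
      nlinarith [sq_nonneg x]
  -- limit of g l / l as l → 0⁺ is m
  have hlim : Filter.Tendsto (fun a => g a / a) (nhdsWithin 0 (Set.Ioi 0)) (nhds m) := by
    have h0 : HasDerivAt g m 0 := by
      have := hgderiv 0
      rwa [hF0, hF'0, div_one] at this
    have := hasDerivAt_iff_tendsto_slope.1 h0
    have h2 : Filter.Tendsto (slope g 0) (nhdsWithin 0 (Set.Ioi 0)) (nhds m) :=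
      this.mono_left (nhdsWithin_mono 0 fun x hx => ne_of_gt hx)
    refine h2.congr' ?_
    filter_upwards [self_mem_nhdsWithin] with a ha
    simp [slope, hg0, div_eq_inv_mul]
  -- main log-Laplace bound
  have hmain : ∀ l : ℝ, 0 < l → g l ≤ l * m + l ^ 2 * v / 2 := by
    intro l hl
    have hle : g l / l - v / 2 * l ≤ m := by
      refine ge_of_tendsto hlim ?_
      filter_upwards [self_mem_nhdsWithin, Ioo_mem_nhdsGT_of_mem (by simp [hl] : (0:ℝ) ∈ Set.Ico 0 l)] with a ha ha'
      have hmono := hψmono ha (Set.mem_Ioi.2 hl) (le_of_lt ha'.2)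
      have ha0 : (0 : ℝ) < a := ha
      simp only [hψ] at hmono
      nlinarith
    have hl2 : g l / l ≤ m + v / 2 * l := by linarith
    calc g l = (g l / l) * l := by field_simp
      _ ≤ (m + v / 2 * l) * l := by
          apply mul_le_mul_of_nonneg_right hl2 hl.le
      _ = l * m + l ^ 2 * v / 2 := by ring
  -- rewrite the centered integral
  have hcent : ∀ l : ℝ, (∫ x, Real.exp (l * (X x - m)) ∂μ) = F l / Real.exp (l * m) := by
    intro l
    simp_rw [mul_sub, Real.exp_sub]
    rw [integral_div]
  have part1 : ∀ l : ℝ, 0 < l →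
      Real.log (∫ x, Real.exp (l * (X x - m)) ∂μ) ≤ l ^ 2 * v / 2 := by
    intro l hl
    rw [hcent l, Real.log_div (hFpos l).ne' (Real.exp_pos _).ne', Real.log_exp]
    have := hmain l hl
    linarith
  refine ⟨part1, ?_⟩
  intro t ht
  set l : ℝ := t / v with hldef
  have hl : 0 < l := div_pos ht hv
  have hmgf_le : (∫ x, Real.exp (l * (X x - m)) ∂μ) ≤ Real.exp (l ^ 2 * v / 2) := by
    have hp : 0 < ∫ x, Real.exp (l * (X x - m)) ∂μ := by
      rw [hcent l]; exact div_pos (hFpos l) (Real.exp_pos _)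
    exact (Real.log_le_iff_le_exp hp).1 (part1 l hl)
  have hint : Integrable (fun x => Real.exp (l * (X x - m))) μ := by
    simp_rw [mul_sub, Real.exp_sub]
    exact (hFint l).div_const _
  have hchern := ProbabilityTheory.measure_ge_le_exp_mul_mgf (μ := μ)
    (X := fun x => X x - m) (t := l) t hl.le hint
  have hsub : μ {x | X x - m > t} ≤ μ {ω | t ≤ X ω - m} :=
    measure_mono (Set.setOf_subset_setOf.2 fun x hx => le_of_lt hx)
  calc (μ {x | X x - m > t}).toReal ≤ (μ {ω | t ≤ X ω - m}).toReal := by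
        apply ENNReal.toReal_mono (measure_ne_top _ _) hsub
    _ ≤ Real.exp (-l * t) * ProbabilityTheory.mgf (fun x => X x - m) μ l := hchern
    _ ≤ Real.exp (-l * t) * Real.exp (l ^ 2 * v / 2) := by
        apply mul_le_mul_of_nonneg_left _ (Real.exp_pos _).le
        exact hmgf_le
    _ = Real.exp (-t ^ 2 / (2 * v)) := by
        rw [← Real.exp_add]
        congr 1
        field_simp [hldef]
        have hlv : l * v = t := by rw [hldef]; exact div_mul_cancel₀ t hv.ne'
        clear_value l
        linear_combination (l * v - t) * hlv
end

section
/- Under the coupling where (I₁,...,Iₙ) are the first n distinct values of i.i.d. draws (J_k) with weights ω, let α = min ω / max ω < 1 and σₙ = ω(I₁)+...+ω(Iₙ). Then A := (1-σₙ) E[Tₙ | I₁,...,Iₙ] satisfies A ≤ (1/α)(N-n) log(N/(N-n)) almost surely, and also A ≤ n. -/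
open scoped BigOperators

lemma harmonic_le_log (N : ℕ) : ∀ n : ℕ, n < N →
    ∑ k ∈ Finset.range n, (1:ℝ)/((N:ℝ) - k) ≤ Real.log N - Real.log ((N:ℝ) - n) := by
  intro n
  induction n with
  | zero => intro _; simp
  | succ m ih =>
    intro h
    have hm : m < N := Nat.lt_of_succ_lt h
    have h1 := ih hm
    rw [Finset.sum_range_succ]
    set x : ℝ := (N:ℝ) - m with hx
    have hx2 : (2:ℝ) ≤ x := by
      have : (m:ℝ) + 2 ≤ (N:ℝ) := by exact_mod_cast h
      simp only [hx]; linarith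
    have hxpos : (0:ℝ) < x := by linarith
    have hfrac : (0:ℝ) < 1 - 1/x := by
      have h12 : 1/x ≤ 1/2 := by
        apply div_le_div_of_nonneg_left (by norm_num) (by norm_num) hx2
      linarith
    have hlog : Real.log (1 - 1/x) ≤ -(1/x) := by
      have := Real.log_le_sub_one_of_pos hfrac
      linarith
    have hsplit : Real.log (x - 1) = Real.log x + Real.log (1 - 1/x) := by
      have hxe : x * (1 - 1/x) = x - 1 := by field_simp
      rw [← hxe, Real.log_mul (ne_of_gt hxpos) (ne_of_gt hfrac)]
    have hkey : 1/x ≤ Real.log x - Real.log (x - 1) := by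
      rw [hsplit]; linarith
    have hcast : (N:ℝ) - ((m:ℝ) + 1) = x - 1 := by simp only [hx]; ring
    push_cast
    rw [hcast]
    linarith

/-- Bound on `A = (1-σₙ)·E[Tₙ | I₁,…,Iₙ]`: using the geometric inter-arrival formula
`E[Tₙ | I₁,…,Iₙ] = ∑_{k=1}^n 1/(1-σ_{k-1})`, for every realization `(i₁,…,iₙ)` of the
sample one has `A ≤ (1/α)(N-n)log(N/(N-n))` and `A ≤ n`. -/
theorem bound_A
    (N n : ℕ) (hn : n ≤ N)
    (ω : Fin N → ℝ) (hω : ∀ i, 0 < ω i) (hsum : ∑ i, ω i = 1)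
    (α : ℝ) (hα : α = (⨅ i, ω i) / (⨆ i, ω i)) (hα1 : α < 1)
    (i : Fin n → Fin N) (hi : Function.Injective i) :
    (1 - ∑ m, ω (i m)) * (∑ k : Fin n, 1 / (1 - ∑ m ∈ Finset.Iio k, ω (i m)))
        ≤ (1 / α) * ((N : ℝ) - n) * Real.log ((N : ℝ) / ((N : ℝ) - n)) ∧
    (1 - ∑ m, ω (i m)) * (∑ k : Fin n, 1 / (1 - ∑ m ∈ Finset.Iio k, ω (i m)))
        ≤ n := by
  classical
  have hN : 0 < N := by
    rcases Nat.eq_zero_or_pos N with h | h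
    · exfalso; subst h; simp at hsum
    · exact h
  haveI : Nonempty (Fin N) := ⟨⟨0, hN⟩⟩
  set wmin := ⨅ j, ω j with hwmin
  set wmax := ⨆ j, ω j with hwmax
  have hbdd : BddAbove (Set.range ω) := Finite.bddAbove_range ω
  have hbddb : BddBelow (Set.range ω) := Finite.bddBelow_range ω
  have hle : ∀ j, ω j ≤ wmax := fun j => le_ciSup hbdd j
  have hge : ∀ j, wmin ≤ ω j := fun j => ciInf_le hbddb j
  have hminpos : 0 < wmin := by
    obtain ⟨j0, hj0⟩ := Finite.exists_min ω
    exact lt_of_lt_of_le (hω j0) (le_ciInf hj0)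
  have hmaxpos : 0 < wmax := lt_of_lt_of_le hminpos (le_trans (hge ⟨0, hN⟩) (hle ⟨0, hN⟩))
  have hαpos : 0 < α := by rw [hα]; exact div_pos hminpos hmaxpos
  set σ : ℝ := ∑ m, ω (i m) with hσdef
  set s : Fin n → ℝ := fun k => ∑ m ∈ Finset.Iio k, ω (i m) with hsdef
  -- σ expressed as sum over image
  have himg : ∑ j ∈ Finset.image i Finset.univ, ω j = σ :=
    Finset.sum_image (fun a _ b _ h => hi h)
  have hcompl : ∀ S : Finset (Fin N), ∑ j ∈ S, ω j + ∑ j ∈ Sᶜ, ω j = 1 := by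
    intro S; rw [Finset.sum_add_sum_compl, hsum]
  -- 1 - σ = sum over complement of image
  have hσc : 1 - σ = ∑ j ∈ (Finset.image i Finset.univ)ᶜ, ω j := by
    have := hcompl (Finset.image i Finset.univ)
    rw [himg] at this; linarith
  have hσle1 : σ ≤ 1 := by
    have hnn : 0 ≤ ∑ j ∈ (Finset.image i Finset.univ)ᶜ, ω j :=
      Finset.sum_nonneg fun j _ => (hω j).le
    linarith [hσc]
  -- key per-k facts
  have hsk : ∀ k : Fin n, 1 - σ + ω (i k) ≤ 1 - s k := by
    intro k
    have hsplit : s k + ∑ m ∈ (Finset.Iio k)ᶜ, ω (i m) = σ := by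
      rw [hsdef, hσdef]
      exact Finset.sum_add_sum_compl (Finset.Iio k) (fun m => ω (i m))
    have hk : ω (i k) ≤ ∑ m ∈ (Finset.Iio k)ᶜ, ω (i m) := by
      apply Finset.single_le_sum (fun m _ => (hω (i m)).le)
      simp
    linarith
  have hskpos : ∀ k : Fin n, 0 < 1 - s k := fun k =>
    lt_of_lt_of_le (by linarith [hω (i k), hsk k, hσle1] ) (le_refl _) |>.trans_le (le_refl _)
  -- part 2
  have hpart2 : (1 - σ) * (∑ k : Fin n, 1 / (1 - s k)) ≤ n := by
    rw [Finset.mul_sum]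
    have : ∀ k : Fin n, (1 - σ) * (1 / (1 - s k)) ≤ 1 := by
      intro k
      rw [mul_one_div, div_le_one (hskpos k)]
      linarith [hsk k, hω (i k)]
    calc ∑ k : Fin n, (1 - σ) * (1 / (1 - s k)) ≤ ∑ _k : Fin n, (1:ℝ) :=
          Finset.sum_le_sum (fun k _ => this k)
      _ = n := by simp
  refine ⟨?_, hpart2⟩
  -- part 1
  rcases eq_or_lt_of_le hn with heq | hlt
  · -- n = N : LHS = 0
    subst heq
    have hbij : Function.Bijective i := (Finite.injective_iff_bijective).mp hi
    have hσ1 : σ = 1 := by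
      rw [hσdef, ← hsum]
      exact Fintype.sum_bijective i hbij _ _ (fun m => rfl)
    rw [hσ1]
    simp
  · -- n < N
    have hNn : (0:ℝ) < (N:ℝ) - n := by
      have : (n:ℝ) < (N:ℝ) := by exact_mod_cast hlt
      linarith
    -- bound 1-σ ≤ (N-n) * wmax
    have hσub : 1 - σ ≤ ((N:ℝ) - n) * wmax := by
      rw [hσc]
      have hcard : ((Finset.image i Finset.univ)ᶜ : Finset (Fin N)).card = N - n := by
        rw [Finset.card_compl, Finset.card_image_of_injective _ hi]
        simp
      calc ∑ j ∈ (Finset.image i Finset.univ)ᶜ, ω j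
          ≤ ((Finset.image i Finset.univ)ᶜ).card • wmax :=
            Finset.sum_le_card_nsmul _ _ _ (fun j _ => hle j)
        _ = ((N:ℝ) - n) * wmax := by
            rw [hcard, nsmul_eq_mul, Nat.cast_sub hn]
    -- bound 1 - s k ≥ (N-k) * wmin
    have hslb : ∀ k : Fin n, ((N:ℝ) - (k:ℕ)) * wmin ≤ 1 - s k := by
      intro k
      have hkN : (k : ℕ) ≤ N := le_of_lt (lt_of_lt_of_le k.isLt hn)
      have him : ∑ j ∈ Finset.image i (Finset.Iio k), ω j = s k :=
        Finset.sum_image (fun a _ b _ h => hi h)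
      have hsc : 1 - s k = ∑ j ∈ (Finset.image i (Finset.Iio k))ᶜ, ω j := by
        have := hcompl (Finset.image i (Finset.Iio k))
        rw [him] at this; linarith
      have hcard : ((Finset.image i (Finset.Iio k))ᶜ : Finset (Fin N)).card = N - (k:ℕ) := by
        rw [Finset.card_compl, Finset.card_image_of_injective _ hi, Fin.card_Iio]
        simp
      rw [hsc]
      calc ((N:ℝ) - (k:ℕ)) * wmin
          = ((Finset.image i (Finset.Iio k))ᶜ).card • wmin := by
            rw [hcard, nsmul_eq_mul, Nat.cast_sub hkN]
        _ ≤ ∑ j ∈ (Finset.image i (Finset.Iio k))ᶜ, ω j :=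
            Finset.card_nsmul_le_sum _ _ _ (fun j _ => hge j)
    -- per-term bound
    have hterm : ∀ k : Fin n,
        (1 - σ) * (1 / (1 - s k)) ≤ (1/α) * ((N:ℝ) - n) * (1 / ((N:ℝ) - (k:ℕ))) := by
      intro k
      have hkN : ((k:ℕ):ℝ) < (N:ℝ) := by
        exact_mod_cast lt_of_lt_of_le k.isLt hn
      have hNk : (0:ℝ) < (N:ℝ) - (k:ℕ) := by linarith
      have hdpos : (0:ℝ) < ((N:ℝ) - (k:ℕ)) * wmin := mul_pos hNk hminpos
      have hdiv : (1 - σ) / (1 - s k) ≤ (((N:ℝ) - n) * wmax) / (((N:ℝ) - (k:ℕ)) * wmin) :=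
        div_le_div₀ (by positivity) hσub hdpos (hslb k)
      have heq2 : (((N:ℝ) - n) * wmax) / (((N:ℝ) - (k:ℕ)) * wmin)
          = (1/α) * ((N:ℝ) - n) * (1 / ((N:ℝ) - (k:ℕ))) := by
        rw [hα]
        field_simp
      rw [mul_one_div, ← heq2]
      exact hdiv
    have hsum1 : ∑ k : Fin n, (1 - σ) * (1 / (1 - s k))
        ≤ (1/α) * ((N:ℝ) - n) * ∑ k : Fin n, (1 / ((N:ℝ) - (k:ℕ))) := by
      rw [Finset.mul_sum]
      exact Finset.sum_le_sum (fun k _ => hterm k)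
    have hharm : ∑ k : Fin n, (1:ℝ) / ((N:ℝ) - (k:ℕ))
        ≤ Real.log N - Real.log ((N:ℝ) - n) := by
      rw [Fin.sum_univ_eq_sum_range (fun k => (1:ℝ) / ((N:ℝ) - k)) n]
      exact harmonic_le_log N n hlt
    have hlogdiv : Real.log ((N:ℝ) / ((N:ℝ) - n)) = Real.log N - Real.log ((N:ℝ) - n) :=
      Real.log_div (by positivity) (ne_of_gt hNn)
    have hcoef : (0:ℝ) ≤ (1/α) * ((N:ℝ) - n) := by positivity
    calc (1 - σ) * (∑ k : Fin n, 1 / (1 - s k))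
        = ∑ k : Fin n, (1 - σ) * (1 / (1 - s k)) := Finset.mul_sum _ _ _
      _ ≤ (1/α) * ((N:ℝ) - n) * ∑ k : Fin n, (1 / ((N:ℝ) - (k:ℕ))) := hsum1
      _ ≤ (1/α) * ((N:ℝ) - n) * (Real.log N - Real.log ((N:ℝ) - n)) :=
          mul_le_mul_of_nonneg_left hharm hcoef
      _ = (1/α) * ((N:ℝ) - n) * Real.log ((N:ℝ) / ((N:ℝ) - n)) := by rw [hlogdiv]
end

section
/- Let 1 ≤ d < D be integers and let (K₁,...,Kₙ) and (L₁,...,Lₙ) be samples from Polya urns with the same initial composition of N distinct labelled items and replacement numbers d and D respectively (each drawn item is returned together with d-1, resp. D-1, additional copies of itself). For values ν: {1,...,N} → ℝ, set W = ν(K₁)+...+ν(Kₙ) and Z = ν(L₁)+...+ν(Lₙ). Then W is less than Z in the convex order: E[f(W)] ≤ E[f(Z)] for every convex function f: ℝ → ℝ. -/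
open scoped BigOperators
open Finset

namespace PolyaAux

/-- Step structure at time `m`: `none` = fresh draw, `some (inl j)` = copy previous index `j`
(both fine and coarse), `some (inr j)` = split: fresh at fine level, copy `j` at coarse level. -/
abbrev St (n : ℕ) (m : Fin n) : Type := Option (Fin m.1 ⊕ Fin m.1)

def lift {n : ℕ} {m : Fin n} (j : Fin m.1) : Fin n := ⟨j.1, j.2.trans m.2⟩

/-- fine-level root: follow `copy` pointers only. -/
def droot {n : ℕ} (s : ∀ m : Fin n, St n m) (m : Fin n) : Fin n :=
  match s m with
  | some (Sum.inl j) => droot s (lift j)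
  | _ => m
termination_by m.1
decreasing_by exact j.2

/-- coarse-level root: follow `copy` and `split` pointers. -/
def Droot {n : ℕ} (s : ∀ m : Fin n, St n m) (m : Fin n) : Fin n :=
  match s m with
  | some (Sum.inl j) => Droot s (lift j)
  | some (Sum.inr j) => Droot s (lift j)
  | none => m
termination_by m.1
decreasing_by exacts [j.2, j.2]

theorem finStrongInd {n : ℕ} {C : Fin n → Prop}
    (h : ∀ m : Fin n, (∀ j : Fin n, j < m → C j) → C m) : ∀ m, C m :=
  fun m => h m (fun j hj => finStrongInd h j)
termination_by m => m.1
decreasing_by exact Fin.lt_def.mp hj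

variable {n : ℕ} {s : ∀ m : Fin n, St n m}

lemma droot_copy {m : Fin n} {j : Fin m.1} (h : s m = some (Sum.inl j)) :
    droot s m = droot s (lift j) := by rw [droot, h]

lemma droot_split {m : Fin n} {j : Fin m.1} (h : s m = some (Sum.inr j)) :
    droot s m = m := by rw [droot, h]

lemma droot_none {m : Fin n} (h : s m = none) : droot s m = m := by rw [droot, h]

lemma Droot_copy {m : Fin n} {j : Fin m.1} (h : s m = some (Sum.inl j)) :
    Droot s m = Droot s (lift j) := by rw [Droot, h]

lemma Droot_split {m : Fin n} {j : Fin m.1} (h : s m = some (Sum.inr j)) :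
    Droot s m = Droot s (lift j) := by rw [Droot, h]

lemma Droot_none {m : Fin n} (h : s m = none) : Droot s m = m := by rw [Droot, h]

lemma droot_not_copy (m : Fin n) : ∀ j : Fin (droot s m).1, s (droot s m) ≠ some (Sum.inl j) := by
  induction m using finStrongInd with
  | _ m ih =>
    cases h : s m with
    | some v =>
      cases v with
      | inl j => rw [droot_copy h]; exact ih _ j.2
      | inr j => rw [droot_split h]; intro j' hj'; rw [h] at hj'; simp at hj'
    | none => rw [droot_none h]; intro j' hj'; rw [h] at hj'; simp at hj'

lemma droot_idem (m : Fin n) : droot s (droot s m) = droot s m := by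
  cases h : s (droot s m) with
  | some v =>
    cases v with
    | inl j => exact absurd h (droot_not_copy m j)
    | inr j => exact droot_split h
  | none => exact droot_none h

lemma Droot_app_none (m : Fin n) : s (Droot s m) = none := by
  induction m using finStrongInd with
  | _ m ih =>
    cases h : s m with
    | some v =>
      cases v with
      | inl j => rw [Droot_copy h]; exact ih _ j.2
      | inr j => rw [Droot_split h]; exact ih _ j.2
    | none => rwa [Droot_none h]

lemma Droot_idem (m : Fin n) : Droot s (Droot s m) = Droot s m :=
  Droot_none (Droot_app_none m)

lemma Droot_droot (m : Fin n) : Droot s (droot s m) = Droot s m := by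
  induction m using finStrongInd with
  | _ m ih =>
    cases h : s m with
    | some v =>
      cases v with
      | inl j => rw [droot_copy h, Droot_copy h]; exact ih _ j.2
      | inr j => rw [droot_split h]
    | none => rw [droot_none h]

section Weights
variable (Nl : ℕ) (e E : ℕ) {n : ℕ}

/-- `den Nl e m = Nl + m*e` as a real number. -/
noncomputable def den (m : ℕ) : ℝ := ((Nl + m * e : ℕ) : ℝ)

lemma den_pos (hN : 0 < Nl) (m : ℕ) : 0 < den Nl e m := by
  unfold den
  exact_mod_cast Nat.lt_of_lt_of_le hN (Nat.le_add_right _ _)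

/-- coupled per-step structure weight. -/
noncomputable def wS (m : Fin n) : St n m → ℝ
  | none => Nl / den Nl E m.1
  | some (Sum.inl _) => e / den Nl e m.1
  | some (Sum.inr _) => E / den Nl E m.1 - e / den Nl e m.1

lemma den_cast (m : ℕ) : den Nl e m = (Nl : ℝ) + m * e := by unfold den; push_cast; ring

lemma wS_nonneg (hN : 0 < Nl) (heE : e ≤ E) (m : Fin n) (t : St n m) :
    0 ≤ wS Nl e E m t := by
  have hα := den_pos Nl e hN m.1
  have hβ := den_pos Nl E hN m.1
  rcases t with _ | (j | j)
  · show (0:ℝ) ≤ Nl / den Nl E m.1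
    positivity
  · show (0:ℝ) ≤ e / den Nl e m.1
    positivity
  · show (0:ℝ) ≤ E / den Nl E m.1 - e / den Nl e m.1
    rw [sub_nonneg, div_le_div_iff₀ hα hβ]
    rw [den_cast, den_cast]
    have he : (e:ℝ) ≤ E := by exact_mod_cast heE
    have h0 : (0:ℝ) ≤ Nl := Nat.cast_nonneg _
    have h1 : (0:ℝ) ≤ (m.1:ℝ) := Nat.cast_nonneg _
    nlinarith
end Weights

section Law
variable {N n : ℕ} (e E : ℕ)

/-- number of previous draws matching draw `m`. -/
def cnt (m : Fin n) (k : Fin n → Fin N) : ℕ :=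
  (Finset.univ.filter (fun j : Fin n => j < m ∧ k j = k m)).card

/-- the `c`-Polya probability of the sample `k`, with `e = c - 1`. -/
noncomputable def pP (k : Fin n → Fin N) : ℝ :=
  ∏ m, ((1 + e * cnt m k : ℕ) : ℝ) / den N e m.1

/-- fine-level value of step `m` given the decisions, as a function of target sample `k`. -/
def dval (k : Fin n → Fin N) (m : Fin n) (t : St n m × Fin N) : Fin N :=
  match t.1 with
  | some (Sum.inl j) => k (lift j)
  | _ => t.2

/-- coarse-level value analog. -/
def Dval (k : Fin n → Fin N) (m : Fin n) (t : St n m × Fin N) : Fin N :=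
  match t.1 with
  | none => t.2
  | some (Sum.inl j) => k (lift j)
  | some (Sum.inr j) => k (lift j)

variable {e E}
variable {k : Fin n → Fin N} {m : Fin n}

@[simp] lemma dval_none (ℓ : Fin N) : dval k m (none, ℓ) = ℓ := rfl
@[simp] lemma dval_copy (j : Fin m.1) (ℓ : Fin N) :
    dval k m (some (Sum.inl j), ℓ) = k (lift j) := rfl
@[simp] lemma dval_split (j : Fin m.1) (ℓ : Fin N) : dval k m (some (Sum.inr j), ℓ) = ℓ := rfl
@[simp] lemma Dval_none (ℓ : Fin N) : Dval k m (none, ℓ) = ℓ := rfl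
@[simp] lemma Dval_copy (j : Fin m.1) (ℓ : Fin N) :
    Dval k m (some (Sum.inl j), ℓ) = k (lift j) := rfl
@[simp] lemma Dval_split (j : Fin m.1) (ℓ : Fin N) :
    Dval k m (some (Sum.inr j), ℓ) = k (lift j) := rfl

lemma pushd_iff (p : ∀ m : Fin n, St n m × Fin N) (k : Fin n → Fin N) :
    (fun m => (p (droot (fun i => (p i).1) m)).2) = k ↔
      ∀ m, dval k m (p m) = k m := by
  constructor
  · intro h m
    have hm := congrFun h m
    rcases hc : p m with ⟨_ | (j | j), ℓ⟩
    · have hc1 : (fun i => (p i).1) m = none := by simp [hc]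
      rw [droot_none hc1, hc] at hm
      simpa [hc] using hm
    · have hc1 : (fun i => (p i).1) m = some (Sum.inl j) := by simp [hc]
      have hj := congrFun h (lift j)
      rw [← droot_copy hc1] at hj
      rw [hj] at hm
      simpa [hc] using hm
    · have hc1 : (fun i => (p i).1) m = some (Sum.inr j) := by simp [hc]
      rw [droot_split hc1, hc] at hm
      simpa [hc] using hm
  · intro h
    funext m
    induction m using finStrongInd with
    | _ m ih =>
      rcases hc : p m with ⟨_ | (j | j), ℓ⟩
      · have hc1 : (fun i => (p i).1) m = none := by simp [hc]
        have := h m; rw [hc] at this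
        rw [droot_none hc1, hc]
        simpa using this
      · have hc1 : (fun i => (p i).1) m = some (Sum.inl j) := by simp [hc]
        have hj := ih (lift j) j.2
        have := h m; rw [hc] at this; simp only [dval_copy] at this
        rw [droot_copy hc1, hj, this]
      · have hc1 : (fun i => (p i).1) m = some (Sum.inr j) := by simp [hc]
        have := h m; rw [hc] at this
        rw [droot_split hc1, hc]
        simpa using this

lemma pushD_iff (p : ∀ m : Fin n, St n m × Fin N) (k : Fin n → Fin N) :
    (fun m => (p (Droot (fun i => (p i).1) m)).2) = k ↔
      ∀ m, Dval k m (p m) = k m := by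
  constructor
  · intro h m
    have hm := congrFun h m
    rcases hc : p m with ⟨_ | (j | j), ℓ⟩
    · have hc1 : (fun i => (p i).1) m = none := by simp [hc]
      rw [Droot_none hc1, hc] at hm
      simpa [hc] using hm
    · have hc1 : (fun i => (p i).1) m = some (Sum.inl j) := by simp [hc]
      have hj := congrFun h (lift j)
      rw [← Droot_copy hc1] at hj
      rw [hj] at hm
      simpa [hc] using hm
    · have hc1 : (fun i => (p i).1) m = some (Sum.inr j) := by simp [hc]
      have hj := congrFun h (lift j)
      rw [← Droot_split hc1] at hj
      rw [hj] at hm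
      simpa [hc] using hm
  · intro h
    funext m
    induction m using finStrongInd with
    | _ m ih =>
      rcases hc : p m with ⟨_ | (j | j), ℓ⟩
      · have hc1 : (fun i => (p i).1) m = none := by simp [hc]
        have := h m; rw [hc] at this
        rw [Droot_none hc1, hc]
        simpa using this
      · have hc1 : (fun i => (p i).1) m = some (Sum.inl j) := by simp [hc]
        have hj := ih (lift j) j.2
        have := h m; rw [hc] at this; simp only [Dval_copy] at this
        rw [Droot_copy hc1, hj, this]
      · have hc1 : (fun i => (p i).1) m = some (Sum.inr j) := by simp [hc]
        have hj := ih (lift j) j.2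
        have := h m; rw [hc] at this; simp only [Dval_split] at this
        rw [Droot_split hc1, hj, this]

end Law
section Steps
variable {N n : ℕ} {e E : ℕ}

lemma card_fin_filter (m : Fin n) (k : Fin n → Fin N) :
    (Finset.univ.filter (fun j : Fin m.1 => k (lift j) = k m)).card = cnt m k := by
  unfold cnt
  apply Finset.card_bij (fun (j : Fin m.1) _ => lift j)
  · intro j hj
    simp only [mem_filter, mem_univ, true_and] at hj ⊢
    exact ⟨j.2, hj⟩
  · intro a _ b _ hab
    simpa [lift, Fin.ext_iff] using hab
  · intro b hb
    simp only [mem_filter, mem_univ, true_and] at hb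
    exact ⟨⟨b.1, hb.1⟩, by simp only [mem_filter, mem_univ, true_and]; exact hb.2, rfl⟩

noncomputable def wT (e E : ℕ) (m : Fin n) (t : St n m × Fin N) : ℝ :=
  wS N e E m t.1 * (1 / N)

lemma sum_step_d (hN : 0 < N) (m : Fin n) (k : Fin n → Fin N) :
    ∑ t : St n m × Fin N, (if dval k m t = k m then wT e E m t else 0)
      = ((1 + e * cnt m k : ℕ) : ℝ) / den N e m.1 := by
  have hα := (den_pos N e hN m.1).ne'
  have hβ := (den_pos N E hN m.1).ne'
  have hNr : (N : ℝ) ≠ 0 := Nat.cast_pos.mpr hN |>.ne'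
  rw [Fintype.sum_prod_type, Fintype.sum_option]
  simp only [Fintype.sum_sum_type]
  have h0 : ∑ ℓ : Fin N, (if dval k m (none, ℓ) = k m then wT e E m (none, ℓ) else 0)
      = (N / den N E m.1) * (1 / N) := by
    simp only [dval_none]
    show (∑ ℓ : Fin N, if ℓ = k m then wT e E m (none, ℓ) else 0) = _
    rw [Finset.sum_ite_eq' Finset.univ (k m) (fun ℓ => wT e E m (none, ℓ))]
    simp [wT, wS]
  have h1 : ∀ j : Fin m.1,
      ∑ ℓ : Fin N, (if dval k m (some (Sum.inl j), ℓ) = k m then wT e E m (some (Sum.inl j), ℓ) else 0)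
      = (if k (lift j) = k m then ((e : ℝ) / den N e m.1) else 0) := by
    intro j
    by_cases h : k (lift j) = k m
    · simp only [dval_copy, h, if_true, wT, wS]
      rw [Finset.sum_const]
      simp only [Finset.card_univ, Fintype.card_fin, nsmul_eq_mul]
      field_simp
    · simp [dval_copy, h]
  have h2 : ∀ j : Fin m.1,
      ∑ ℓ : Fin N, (if dval k m (some (Sum.inr j), ℓ) = k m then wT e E m (some (Sum.inr j), ℓ) else 0)
      = ((E : ℝ) / den N E m.1 - (e : ℝ) / den N e m.1) * (1 / N) := by
    intro j
    simp only [dval_split]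
    show (∑ ℓ : Fin N, if ℓ = k m then wT e E m (some (Sum.inr j), ℓ) else 0) = _
    rw [Finset.sum_ite_eq' Finset.univ (k m) (fun ℓ => wT e E m (some (Sum.inr j), ℓ))]
    simp [wT, wS]
  rw [h0]
  rw [Finset.sum_congr rfl (fun j _ => h1 j), Finset.sum_congr rfl (fun j _ => h2 j)]
  rw [← Finset.sum_filter, Finset.sum_const, card_fin_filter, Finset.sum_const]
  simp only [Finset.card_univ, Fintype.card_fin, nsmul_eq_mul]
  rw [den_cast, den_cast]
  push_cast
  field_simp
  ring
end Steps
section StepsD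
variable {N n : ℕ} {e E : ℕ}

lemma sum_step_D (hN : 0 < N) (m : Fin n) (k : Fin n → Fin N) :
    ∑ t : St n m × Fin N, (if Dval k m t = k m then wT e E m t else 0)
      = ((1 + E * cnt m k : ℕ) : ℝ) / den N E m.1 := by
  have hα := (den_pos N e hN m.1).ne'
  have hβ := (den_pos N E hN m.1).ne'
  have hNr : (N : ℝ) ≠ 0 := Nat.cast_pos.mpr hN |>.ne'
  rw [Fintype.sum_prod_type, Fintype.sum_option]
  simp only [Fintype.sum_sum_type]
  have h0 : ∑ ℓ : Fin N, (if Dval k m (none, ℓ) = k m then wT e E m (none, ℓ) else 0)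
      = (N / den N E m.1) * (1 / N) := by
    simp only [Dval_none]
    show (∑ ℓ : Fin N, if ℓ = k m then wT e E m (none, ℓ) else 0) = _
    rw [Finset.sum_ite_eq' Finset.univ (k m) (fun ℓ => wT e E m (none, ℓ))]
    simp [wT, wS]
  have h1 : ∀ j : Fin m.1,
      ∑ ℓ : Fin N, (if Dval k m (some (Sum.inl j), ℓ) = k m then wT e E m (some (Sum.inl j), ℓ) else 0)
      = (if k (lift j) = k m then ((e : ℝ) / den N e m.1) else 0) := by
    intro j
    by_cases h : k (lift j) = k m
    · simp only [Dval_copy, h, if_true, wT, wS]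
      rw [Finset.sum_const]
      simp only [Finset.card_univ, Fintype.card_fin, nsmul_eq_mul]
      field_simp
    · simp [Dval_copy, h]
  have h2 : ∀ j : Fin m.1,
      ∑ ℓ : Fin N, (if Dval k m (some (Sum.inr j), ℓ) = k m then wT e E m (some (Sum.inr j), ℓ) else 0)
      = (if k (lift j) = k m
          then ((E : ℝ) / den N E m.1 - (e : ℝ) / den N e m.1) else 0) := by
    intro j
    by_cases h : k (lift j) = k m
    · simp only [Dval_split, h, if_true, wT, wS]
      rw [Finset.sum_const]
      simp only [Finset.card_univ, Fintype.card_fin, nsmul_eq_mul]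
      field_simp
    · simp [Dval_split, h]
  rw [h0]
  rw [Finset.sum_congr rfl (fun j _ => h1 j), Finset.sum_congr rfl (fun j _ => h2 j)]
  rw [← Finset.sum_filter, ← Finset.sum_filter, Finset.sum_const, Finset.sum_const,
    card_fin_filter]
  simp only [nsmul_eq_mul]
  rw [den_cast, den_cast]
  push_cast
  field_simp
  ring
end StepsD

section LawLemmas
variable {N n : ℕ} {e E : ℕ}

lemma law_d (hN : 0 < N) (h : (Fin n → Fin N) → ℝ) :
    ∑ p : ∀ m : Fin n, St n m × Fin N,
        (∏ m, wT e E m (p m)) * h (fun m => (p (droot (fun i => (p i).1) m)).2)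
      = ∑ k : Fin n → Fin N, pP (N := N) e k * h k := by
  classical
  rw [← Finset.sum_fiberwise Finset.univ
    (fun p : ∀ m : Fin n, St n m × Fin N => fun m => (p (droot (fun i => (p i).1) m)).2)
    (fun p => (∏ m, wT e E m (p m)) *
      h (fun m => (p (droot (fun i => (p i).1) m)).2))]
  refine Finset.sum_congr rfl (fun k _ => ?_)
  have : ∀ p ∈ Finset.univ.filter
      (fun p : ∀ m : Fin n, St n m × Fin N =>
        (fun m => (p (droot (fun i => (p i).1) m)).2) = k),
      (∏ m, wT e E m (p m)) * h (fun m => (p (droot (fun i => (p i).1) m)).2)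
        = (∏ m, wT e E m (p m)) * h k := by
    intro p hp
    rw [Finset.mem_filter] at hp
    rw [hp.2]
  rw [Finset.sum_congr rfl this, ← Finset.sum_mul]
  congr 1
  have hfil : Finset.univ.filter
      (fun p : ∀ m : Fin n, St n m × Fin N =>
        (fun m => (p (droot (fun i => (p i).1) m)).2) = k)
      = Fintype.piFinset (fun m => Finset.univ.filter (fun t => dval k m t = k m)) := by
    ext p
    simp only [Finset.mem_filter, Finset.mem_univ, true_and, Fintype.mem_piFinset]
    exact pushd_iff p k
  rw [hfil, ← Finset.prod_univ_sum]
  unfold pP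
  refine Finset.prod_congr rfl (fun m _ => ?_)
  rw [Finset.sum_filter]
  exact sum_step_d hN m k

lemma law_D (hN : 0 < N) (h : (Fin n → Fin N) → ℝ) :
    ∑ p : ∀ m : Fin n, St n m × Fin N,
        (∏ m, wT e E m (p m)) * h (fun m => (p (Droot (fun i => (p i).1) m)).2)
      = ∑ k : Fin n → Fin N, pP (N := N) E k * h k := by
  classical
  rw [← Finset.sum_fiberwise Finset.univ
    (fun p : ∀ m : Fin n, St n m × Fin N => fun m => (p (Droot (fun i => (p i).1) m)).2)
    (fun p => (∏ m, wT e E m (p m)) *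
      h (fun m => (p (Droot (fun i => (p i).1) m)).2))]
  refine Finset.sum_congr rfl (fun k _ => ?_)
  have : ∀ p ∈ Finset.univ.filter
      (fun p : ∀ m : Fin n, St n m × Fin N =>
        (fun m => (p (Droot (fun i => (p i).1) m)).2) = k),
      (∏ m, wT e E m (p m)) * h (fun m => (p (Droot (fun i => (p i).1) m)).2)
        = (∏ m, wT e E m (p m)) * h k := by
    intro p hp
    rw [Finset.mem_filter] at hp
    rw [hp.2]
  rw [Finset.sum_congr rfl this, ← Finset.sum_mul]
  congr 1
  have hfil : Finset.univ.filter
      (fun p : ∀ m : Fin n, St n m × Fin N =>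
        (fun m => (p (Droot (fun i => (p i).1) m)).2) = k)
      = Fintype.piFinset (fun m => Finset.univ.filter (fun t => Dval k m t = k m)) := by
    ext p
    simp only [Finset.mem_filter, Finset.mem_univ, true_and, Fintype.mem_piFinset]
    exact pushD_iff p k
  rw [hfil, ← Finset.prod_univ_sum]
  unfold pP
  refine Finset.prod_congr rfl (fun m _ => ?_)
  rw [Finset.sum_filter]
  exact sum_step_D hN m k

end LawLemmas
section Pick
variable {n : ℕ} {C : Finset (Fin n)}

/-- the element of `C` on which `σ` is minimal. -/
def pick (σ : Equiv.Perm (Fin n)) (C : Finset (Fin n)) (hC : C.Nonempty) : Fin n :=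
  σ.symm ((C.image σ).min' (hC.image σ))

lemma pick_mem (σ : Equiv.Perm (Fin n)) (hC : C.Nonempty) : pick σ C hC ∈ C := by
  have h := Finset.min'_mem (C.image σ) (hC.image σ)
  rw [Finset.mem_image] at h
  obtain ⟨a, ha, hae⟩ := h
  unfold pick
  rw [← hae, Equiv.symm_apply_apply]
  exact ha

lemma swap_mem {a b : Fin n} (ha : a ∈ C) (hb : b ∈ C) {c : Fin n} (hc : c ∈ C) :
    Equiv.swap a b c ∈ C := by
  rcases eq_or_ne c a with rfl | h1
  · rwa [Equiv.swap_apply_left]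
  rcases eq_or_ne c b with rfl | h2
  · rwa [Equiv.swap_apply_right]
  rwa [Equiv.swap_apply_of_ne_of_ne h1 h2]

lemma image_swap {a b : Fin n} (ha : a ∈ C) (hb : b ∈ C) :
    C.image (Equiv.swap a b) = C := by
  ext c
  rw [Finset.mem_image]
  constructor
  · rintro ⟨y, hy, rfl⟩; exact swap_mem ha hb hy
  · intro hc
    exact ⟨Equiv.swap a b c, swap_mem ha hb hc, Equiv.swap_apply_self _ _ _⟩

lemma pick_mul_swap {a b : Fin n} (σ : Equiv.Perm (Fin n)) (hC : C.Nonempty)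
    (ha : a ∈ C) (hb : b ∈ C) :
    pick (σ * Equiv.swap a b) C hC = Equiv.swap a b (pick σ C hC) := by
  have himg : C.image ⇑(σ * Equiv.swap a b) = C.image σ := by
    rw [Equiv.Perm.coe_mul, ← Finset.image_image, image_swap ha hb]
  unfold pick
  have hmin : (C.image ⇑(σ * Equiv.swap a b)).min' ((hC.image _))
      = (C.image σ).min' (hC.image σ) := by congr 1
  rw [hmin]
  rw [← Equiv.Perm.inv_def, mul_inv_rev, Equiv.Perm.mul_apply, Equiv.swap_inv,
    Equiv.Perm.inv_def]

lemma pick_fiber_card_eq (hC : C.Nonempty) {a b : Fin n} (ha : a ∈ C) (hb : b ∈ C) :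
    (Finset.univ.filter fun σ : Equiv.Perm (Fin n) => pick σ C hC = a).card
      = (Finset.univ.filter fun σ : Equiv.Perm (Fin n) => pick σ C hC = b).card := by
  apply Finset.card_bij' (fun σ _ => σ * Equiv.swap a b) (fun σ _ => σ * Equiv.swap a b)
  · intro σ hσ
    rw [Finset.mem_filter] at hσ ⊢
    refine ⟨Finset.mem_univ _, ?_⟩
    rw [pick_mul_swap σ hC ha hb, hσ.2, Equiv.swap_apply_left]
  · intro σ hσ
    rw [Finset.mem_filter] at hσ ⊢
    refine ⟨Finset.mem_univ _, ?_⟩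
    rw [pick_mul_swap σ hC ha hb, hσ.2, Equiv.swap_apply_right]
  · intro σ _
    rw [mul_assoc, Equiv.swap_mul_self, mul_one]
  · intro σ _
    rw [mul_assoc, Equiv.swap_mul_self, mul_one]

lemma pick_card_mul (hC : C.Nonempty) {a : Fin n} (ha : a ∈ C) :
    (Finset.univ.filter fun σ : Equiv.Perm (Fin n) => pick σ C hC = a).card * C.card
      = Fintype.card (Equiv.Perm (Fin n)) := by
  have h := Finset.card_eq_sum_card_fiberwise
    (s := (Finset.univ : Finset (Equiv.Perm (Fin n)))) (t := C)
    (f := fun σ => pick σ C hC) (fun σ _ => pick_mem σ hC)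
  rw [Finset.card_univ] at h
  rw [h, Finset.sum_congr rfl (fun b hb => pick_fiber_card_eq hC hb ha)]
  rw [Finset.sum_const, smul_eq_mul, mul_comm]

lemma pick_avg (hC : C.Nonempty) (g : Fin n → ℝ) :
    ∑ σ : Equiv.Perm (Fin n), g (pick σ C hC)
      = ∑ a ∈ C, ((Fintype.card (Equiv.Perm (Fin n)) : ℝ) / C.card) * g a := by
  rw [← Finset.sum_fiberwise_of_maps_to (g := fun σ : Equiv.Perm (Fin n) => pick σ C hC)
    (fun σ _ => pick_mem σ hC) (fun σ => g (pick σ C hC))]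
  refine Finset.sum_congr rfl (fun a ha => ?_)
  have : ∀ σ ∈ Finset.univ.filter (fun σ : Equiv.Perm (Fin n) => pick σ C hC = a),
      g (pick σ C hC) = g a := by
    intro σ hσ
    rw [Finset.mem_filter] at hσ
    rw [hσ.2]
  rw [Finset.sum_congr rfl this, Finset.sum_const, nsmul_eq_mul]
  congr 1
  have hcard := pick_card_mul hC ha
  have hCne : (C.card : ℝ) ≠ 0 := by
    have := Finset.card_pos.mpr hC
    exact_mod_cast this.ne'
  rw [eq_div_iff hCne]
  exact_mod_cast hcard
end Pick
section Reindex

lemma exists_perm_comp {α : Type*} [Fintype α] [DecidableEq α] (r₁ r₂ : α → α)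
    (h : ∀ a b, r₁ a = r₁ b ↔ r₂ a = r₂ b) :
    ∃ π : Equiv.Perm α, ∀ a, π (r₁ a) = r₂ a := by
  classical
  set S₁ : Set α := Set.range r₁ with hS₁
  set S₂ : Set α := Set.range r₂ with hS₂
  let e₁ : ↥S₁ ≃ ↥S₂ :=
    { toFun := fun b => ⟨r₂ (Classical.choose b.2), Set.mem_range_self _⟩
      invFun := fun b => ⟨r₁ (Classical.choose b.2), Set.mem_range_self _⟩
      left_inv := by
        rintro ⟨b, hb⟩
        apply Subtype.ext
        have h1 : r₁ (Classical.choose hb) = b := Classical.choose_spec hb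
        have h2 : r₂ (Classical.choose (Set.mem_range_self (f := r₂) (Classical.choose hb)))
            = r₂ (Classical.choose hb) :=
          Classical.choose_spec (Set.mem_range_self _)
        exact ((h _ _).mpr h2).trans h1
      right_inv := by
        rintro ⟨b, hb⟩
        apply Subtype.ext
        have h1 : r₂ (Classical.choose hb) = b := Classical.choose_spec hb
        have h2 : r₁ (Classical.choose (Set.mem_range_self (f := r₁) (Classical.choose hb)))
            = r₁ (Classical.choose hb) :=
          Classical.choose_spec (Set.mem_range_self _)
        exact ((h _ _).mp h2).trans h1 }
  have hcard : Fintype.card ↥(S₁ᶜ) = Fintype.card ↥(S₂ᶜ) := by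
    rw [Fintype.card_compl_set, Fintype.card_compl_set, Fintype.card_congr e₁]
  have e₂ : ↥(S₁ᶜ) ≃ ↥(S₂ᶜ) := Fintype.equivOfCardEq hcard
  refine ⟨(Equiv.Set.sumCompl S₁).symm.trans ((e₁.sumCongr e₂).trans (Equiv.Set.sumCompl S₂)), ?_⟩
  intro a
  have hmem : r₁ a ∈ S₁ := Set.mem_range_self a
  simp only [Equiv.trans_apply]
  rw [Equiv.Set.sumCompl_symm_apply_of_mem hmem]
  simp only [Equiv.sumCongr_apply, Sum.map_inl, Equiv.Set.sumCompl_apply_inl]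
  show r₂ (Classical.choose hmem) = r₂ a
  exact (h _ _).mp (Classical.choose_spec hmem)

lemma sum_precomp {n N : ℕ} (r₁ r₂ : Fin n → Fin n)
    (h : ∀ a b, r₁ a = r₁ b ↔ r₂ a = r₂ b) (Φ : (Fin n → Fin N) → ℝ) :
    ∑ x : Fin n → Fin N, Φ (fun m => x (r₁ m))
      = ∑ x : Fin n → Fin N, Φ (fun m => x (r₂ m)) := by
  obtain ⟨π, hπ⟩ := exists_perm_comp r₁ r₂ h
  set T : (Fin n → Fin N) ≃ (Fin n → Fin N) := Equiv.arrowCongr π.symm (Equiv.refl (Fin N)) with hT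
  have key := Equiv.sum_comp T (fun y : Fin n → Fin N => Φ (fun m => y (r₁ m)))
  rw [← key]
  refine Finset.sum_congr rfl (fun x _ => ?_)
  congr 1
  funext m
  have : T x (r₁ m) = x (π (r₁ m)) := rfl
  rw [this, hπ]

lemma sum_avg_block {n : ℕ} (r : Fin n → Fin n) (g : Fin n → ℝ) :
    ∑ m : Fin n, (1 / ((Finset.univ.filter (fun j => r j = r m)).card : ℝ)) *
        (∑ a ∈ Finset.univ.filter (fun j => r j = r m), g a)
      = ∑ m, g m := by
  classical
  have step1 : ∀ m : Fin n,
      (1 / ((Finset.univ.filter (fun j => r j = r m)).card : ℝ)) *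
        (∑ a ∈ Finset.univ.filter (fun j => r j = r m), g a)
      = ∑ a ∈ Finset.univ.filter (fun j => r j = r m),
          (1 / ((Finset.univ.filter (fun j => r j = r a)).card : ℝ)) * g a := by
    intro m
    rw [Finset.mul_sum]
    refine Finset.sum_congr rfl (fun a ha => ?_)
    rw [Finset.mem_filter] at ha
    have : Finset.univ.filter (fun j => r j = r a)
        = Finset.univ.filter (fun j => r j = r m) := by
      refine Finset.filter_congr (fun j _ => ?_)
      rw [ha.2]
    rw [this]
  rw [Finset.sum_congr rfl (fun m _ => step1 m)]
  set h : Fin n → ℝ := fun a => (1 / ((Finset.univ.filter (fun j => r j = r a)).card : ℝ)) * g a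
    with hh
  have step2 : ∀ m : Fin n, ∑ a ∈ Finset.univ.filter (fun j => r j = r m), h a
      = ∑ a : Fin n, if r a = r m then h a else 0 := by
    intro m
    rw [Finset.sum_filter]
  rw [Finset.sum_congr rfl (fun m _ => step2 m), Finset.sum_comm]
  refine Finset.sum_congr rfl (fun a _ => ?_)
  have : ∀ m : Fin n, (if r a = r m then h a else 0) = (if r m = r a then h a else 0) := by
    intro m
    congr 1
    simp [eq_comm]
  rw [Finset.sum_congr rfl (fun m _ => this m), ← Finset.sum_filter, Finset.sum_const,
    nsmul_eq_mul, hh]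
  have hca : a ∈ Finset.univ.filter (fun j => r j = r a) := by simp
  have hpos : (0:ℕ) < (Finset.univ.filter (fun j => r j = r a)).card :=
    Finset.card_pos.mpr ⟨a, hca⟩
  have hne : ((Finset.univ.filter (fun j => r j = r a)).card : ℝ) ≠ 0 := by
    exact_mod_cast hpos.ne'
  field_simp

end Reindex
section Main
variable {N n : ℕ}

lemma blk_nonempty (s : ∀ m : Fin n, St n m) (m : Fin n) :
    (Finset.univ.filter (fun j => Droot s j = Droot s m)).Nonempty :=
  ⟨m, by simp⟩

/-- representative fine root of the coarse block of `m`, chosen σ-uniformly. -/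
def rho (s : ∀ m : Fin n, St n m) (σ : Equiv.Perm (Fin n)) (m : Fin n) : Fin n :=
  droot s (pick σ (Finset.univ.filter (fun j => Droot s j = Droot s m)) (blk_nonempty s m))

lemma Droot_rho (s : ∀ m : Fin n, St n m) (σ : Equiv.Perm (Fin n)) (m : Fin n) :
    Droot s (rho s σ m) = Droot s m := by
  unfold rho
  rw [Droot_droot]
  have := pick_mem σ (blk_nonempty s m)
  rw [Finset.mem_filter] at this
  exact this.2

lemma rho_fibers (s : ∀ m : Fin n, St n m) (σ : Equiv.Perm (Fin n)) (a b : Fin n) :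
    rho s σ a = rho s σ b ↔ Droot s a = Droot s b := by
  constructor
  · intro h
    rw [← Droot_rho s σ a, ← Droot_rho s σ b, h]
  · intro h
    have hB : (Finset.univ.filter (fun j => Droot s j = Droot s a))
        = (Finset.univ.filter (fun j => Droot s j = Droot s b)) := by
      refine Finset.filter_congr (fun j _ => ?_)
      rw [h]
    simp only [rho, hB]

lemma martingale (s : ∀ m : Fin n, St n m) (g : Fin n → ℝ) :
    ∑ σ : Equiv.Perm (Fin n),
        (1 / (Fintype.card (Equiv.Perm (Fin n)) : ℝ)) * (∑ m, g (rho s σ m))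
      = ∑ m, g (droot s m) := by
  classical
  have hNp : (0:ℝ) < (Fintype.card (Equiv.Perm (Fin n)) : ℝ) := by
    exact_mod_cast Fintype.card_pos
  simp only [Finset.mul_sum]
  rw [Finset.sum_comm]
  have per_m : ∀ m : Fin n,
      ∑ σ : Equiv.Perm (Fin n),
        (1 / (Fintype.card (Equiv.Perm (Fin n)) : ℝ)) * g (rho s σ m)
      = (1 / (((Finset.univ.filter (fun j => Droot s j = Droot s m)).card : ℝ))) *
          (∑ a ∈ Finset.univ.filter (fun j => Droot s j = Droot s m), g (droot s a)) := by
    intro m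
    rw [← Finset.mul_sum]
    unfold rho
    rw [pick_avg (blk_nonempty s m) (fun a => g (droot s a))]
    rw [Finset.mul_sum, Finset.mul_sum]
    refine Finset.sum_congr rfl (fun a _ => ?_)
    have hBne : (((Finset.univ.filter (fun j => Droot s j = Droot s m)).card : ℝ)) ≠ 0 := by
      have := Finset.card_pos.mpr (blk_nonempty s m)
      exact_mod_cast this.ne'
    field_simp
  rw [Finset.sum_congr rfl (fun m _ => per_m m)]
  exact sum_avg_block (Droot s) (fun a => g (droot s a))

/-- the split/pair equivalence. -/
def eSX (N n : ℕ) : ((∀ m : Fin n, St n m) × (Fin n → Fin N)) ≃ (∀ m : Fin n, St n m × Fin N) where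
  toFun q := fun m => (q.1 m, q.2 m)
  invFun p := (fun m => (p m).1, fun m => (p m).2)
  left_inv q := rfl
  right_inv p := by funext m; rfl

lemma key_ineq (e E : ℕ) (hN : 0 < N) (heE : e ≤ E)
    (ν : Fin N → ℝ) (f : ℝ → ℝ) (hconv : ConvexOn ℝ Set.univ f) :
    ∑ k : Fin n → Fin N, pP (N := N) e k * f (∑ m, ν (k m))
      ≤ ∑ k : Fin n → Fin N, pP (N := N) E k * f (∑ m, ν (k m)) := by
  classical
  set Np : ℝ := (Fintype.card (Equiv.Perm (Fin n)) : ℝ) with hNpdef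
  have hNp : (0:ℝ) < Np := by
    rw [hNpdef]; exact_mod_cast Fintype.card_pos
  set Sf : (Fin n → Fin N) → ℝ := fun k => f (∑ m, ν (k m)) with hSf
  have hWt : ∀ p : ∀ m : Fin n, St n m × Fin N, 0 ≤ ∏ m, wT e E m (p m) := by
    intro p
    refine Finset.prod_nonneg (fun m _ => ?_)
    unfold wT
    have h1 : (0:ℝ) ≤ 1 / N := by positivity
    exact mul_nonneg (wS_nonneg N e E hN heE m (p m).1) h1
  -- Jensen + martingale, per configuration p
  have hJ : ∀ p : ∀ m : Fin n, St n m × Fin N,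
      Sf (fun m => (p (droot (fun i => (p i).1) m)).2)
        ≤ ∑ σ : Equiv.Perm (Fin n),
            (1 / Np) * f (∑ m, ν ((p (rho (fun i => (p i).1) σ m)).2)) := by
    intro p
    set s : ∀ m : Fin n, St n m := fun i => (p i).1 with hs
    set g : Fin n → ℝ := fun a => ν ((p a).2) with hg
    have hm : ∑ σ : Equiv.Perm (Fin n), (1 / Np) * (∑ m, g (rho s σ m))
        = ∑ m, g (droot s m) := martingale s g
    have h1 : Sf (fun m => (p (droot s m)).2) = f (∑ m, g (droot s m)) := rfl
    rw [h1, ← hm]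
    have hjen := hconv.map_sum_le (t := (Finset.univ : Finset (Equiv.Perm (Fin n))))
      (w := fun _ => 1 / Np) (p := fun σ => ∑ m, g (rho s σ m))
      (fun _ _ => by positivity)
      (by rw [Finset.sum_const, Finset.card_univ, nsmul_eq_mul, ← hNpdef]
          field_simp)
      (fun _ _ => Set.mem_univ _)
    simpa only [smul_eq_mul] using hjen
  -- main chain
  have law1 := law_d (e := e) (E := E) hN Sf
  have law2 := law_D (e := e) (E := E) hN Sf
  rw [← law1, ← law2]
  calc
    ∑ p : ∀ m : Fin n, St n m × Fin N,
        (∏ m, wT e E m (p m)) * Sf (fun m => (p (droot (fun i => (p i).1) m)).2)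
      ≤ ∑ p : ∀ m : Fin n, St n m × Fin N,
        (∏ m, wT e E m (p m)) *
          (∑ σ : Equiv.Perm (Fin n),
            (1 / Np) * f (∑ m, ν ((p (rho (fun i => (p i).1) σ m)).2))) := by
        refine Finset.sum_le_sum (fun p _ => ?_)
        exact mul_le_mul_of_nonneg_left (hJ p) (hWt p)
    _ = ∑ σ : Equiv.Perm (Fin n), (1 / Np) *
          (∑ p : ∀ m : Fin n, St n m × Fin N,
            (∏ m, wT e E m (p m)) * f (∑ m, ν ((p (rho (fun i => (p i).1) σ m)).2))) := by
        simp only [Finset.mul_sum]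
        rw [Finset.sum_comm]
        refine Finset.sum_congr rfl (fun σ _ => Finset.sum_congr rfl (fun p _ => by ring))
    _ = ∑ σ : Equiv.Perm (Fin n), (1 / Np) *
          (∑ p : ∀ m : Fin n, St n m × Fin N,
            (∏ m, wT e E m (p m)) * Sf (fun m => (p (Droot (fun i => (p i).1) m)).2)) := by
        refine Finset.sum_congr rfl (fun σ _ => ?_)
        congr 1
        -- reindex the labelling part
        rw [← Equiv.sum_comp (eSX N n)
          (fun p => (∏ m, wT e E m (p m)) * f (∑ m, ν ((p (rho (fun i => (p i).1) σ m)).2)))]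
        rw [← Equiv.sum_comp (eSX N n)
          (fun p => (∏ m, wT e E m (p m)) * Sf (fun m => (p (Droot (fun i => (p i).1) m)).2))]
        rw [Fintype.sum_prod_type, Fintype.sum_prod_type]
        refine Finset.sum_congr rfl (fun s _ => ?_)
        have hL : ∀ x : Fin n → Fin N,
            (∏ m, wT e E m ((eSX N n (s, x)) m)) *
              f (∑ m, ν (((eSX N n (s, x)) (rho (fun i => ((eSX N n (s, x)) i).1) σ m)).2))
            = (∏ m, wS N e E m (s m) * (1 / N)) * f (∑ m, ν (x (rho s σ m))) := by
          intro x; rfl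
        have hR : ∀ x : Fin n → Fin N,
            (∏ m, wT e E m ((eSX N n (s, x)) m)) *
              Sf (fun m => ((eSX N n (s, x)) (Droot (fun i => ((eSX N n (s, x)) i).1) m)).2)
            = (∏ m, wS N e E m (s m) * (1 / N)) * f (∑ m, ν (x (Droot s m))) := by
          intro x; rfl
        rw [Finset.sum_congr rfl (fun x _ => hL x), Finset.sum_congr rfl (fun x _ => hR x)]
        rw [← Finset.mul_sum, ← Finset.mul_sum]
        congr 1
        exact sum_precomp (rho s σ) (Droot s) (rho_fibers s σ) (fun y => f (∑ m, ν (y m)))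
    _ = ∑ p : ∀ m : Fin n, St n m × Fin N,
          (∏ m, wT e E m (p m)) * Sf (fun m => (p (Droot (fun i => (p i).1) m)).2) := by
        rw [Finset.sum_const, Finset.card_univ, nsmul_eq_mul, ← hNpdef, ← mul_assoc]
        rw [mul_one_div, div_self hNp.ne', one_mul]

end Main
end PolyaAux

/-- Polya urn comparison: linear statistics of a `d`-Polya sample are dominated by those
of a `D`-Polya sample in the convex order, for `d < D`. The law of a `c`-Polya sample of
size `n` from `N` distinct items is given explicitly: the `m`-th draw (0-indexed) equals
label `ℓ` with probability `(1 + (c-1)·#{j < m : k_j = ℓ})/(N + m(c-1))`. -/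
theorem polya_convex_order
    (N n d D : ℕ) (hN : 0 < N) (hd : 1 ≤ d) (hdD : d < D)
    (ν : Fin N → ℝ) (f : ℝ → ℝ) (hconv : ConvexOn ℝ Set.univ f) :
    ∑ k : Fin n → Fin N,
        (∏ m, ((1 + (d - 1) * (Finset.univ.filter
            (fun j : Fin n => j < m ∧ k j = k m)).card : ℕ) : ℝ)
          / ((N + (m : ℕ) * (d - 1) : ℕ) : ℝ)) * f (∑ m, ν (k m))
      ≤ ∑ k : Fin n → Fin N,
        (∏ m, ((1 + (D - 1) * (Finset.univ.filter
            (fun j : Fin n => j < m ∧ k j = k m)).card : ℕ) : ℝ)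
          / ((N + (m : ℕ) * (D - 1) : ℕ) : ℝ)) * f (∑ m, ν (k m)) := by
  have heE : d - 1 ≤ D - 1 := Nat.sub_le_sub_right hdD.le 1
  have key := PolyaAux.key_ineq (N := N) (n := n) (d - 1) (D - 1) hN heE ν f hconv
  simpa only [PolyaAux.pP, PolyaAux.den, PolyaAux.cnt] using key
end
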